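/- arXiv:1703.09870 — 11 statements merged into one kernel-verified Lean document; each statement's English description precedes it below -/
import Mathlib

section
/- Let 2 ≤ k ≤ m and let A_1, ..., A_n be closed bounded intervals in ℝ such that among any m of them, some k have a common point. Then there exists a point contained in at least ⌈(k-1)·n/(m-1)⌉ of the intervals. -/
open Classical

section
variable {n : ℕ} (a b : Fin n → ℝ)

def prec (i j : Fin n) : Prop := a i < a j ∨ (a i = a j ∧ i < j)

def edge (i j : Fin n) : Prop := a i ≤ b i ∧ a j ≤ b j ∧ a i ≤ b j ∧ a j ≤ b i

noncomputable def rnk (i : Fin n) : ℕ := (Finset.univ.filter fun j => prec a j i).card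

lemma prec_trans {i j t : Fin n} (h1 : prec a t j) (h2 : prec a j i) : prec a t i := by
  rcases h1 with h1 | ⟨e1, l1⟩ <;> rcases h2 with h2 | ⟨e2, l2⟩
  · exact Or.inl (h1.trans h2)
  · exact Or.inl (e2 ▸ h1)
  · exact Or.inl (e1 ▸ h2)
  · exact Or.inr ⟨e1.trans e2, l1.trans l2⟩

lemma prec_irrefl {i : Fin n} : ¬ prec a i i := by
  rintro (h | ⟨_, h⟩) <;> exact lt_irrefl _ h

lemma prec_total {i j : Fin n} (hij : i ≠ j) : prec a i j ∨ prec a j i := by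
  rcases lt_trichotomy (a i) (a j) with h | h | h
  · exact Or.inl (Or.inl h)
  · rcases lt_or_gt_of_ne (fun e => hij (by exact e)) with hl | hl
    · exact Or.inl (Or.inr ⟨h, hl⟩)
    · exact Or.inr (Or.inr ⟨h.symm, hl⟩)
  · exact Or.inr (Or.inl h)

lemma prec_le {i j : Fin n} (h : prec a j i) : a j ≤ a i := by
  rcases h with h | ⟨h, _⟩
  · exact h.le
  · exact h.le

lemma rnk_lt {i j : Fin n} (h : prec a j i) : rnk a j < rnk a i := by
  apply Finset.card_lt_card
  constructor
  · intro t ht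
    simp only [Finset.mem_filter, Finset.mem_univ, true_and] at ht ⊢
    exact prec_trans a ht h
  · intro hsub
    have := hsub (by simp [h] : j ∈ Finset.univ.filter fun t => prec a t i)
    simp only [Finset.mem_filter] at this
    exact prec_irrefl a this.2

noncomputable def col (i : Fin n) : ℕ :=
  sInf {c : ℕ | ∀ j : Fin n, prec a j i → edge a b j i → col j ≠ c}
termination_by rnk a i
decreasing_by exact rnk_lt a (by assumption)

lemma colS_nonempty (i : Fin n) :
    {c : ℕ | ∀ j : Fin n, prec a j i → edge a b j i → col a b j ≠ c}.Nonempty := by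
  refine ⟨(Finset.univ.filter fun j => prec a j i).sup (col a b) + 1, fun j hj _ hc => ?_⟩
  have : col a b j ≤ (Finset.univ.filter fun j => prec a j i).sup (col a b) :=
    Finset.le_sup (by simp [hj])
  omega

lemma col_mem (i : Fin n) :
    ∀ j : Fin n, prec a j i → edge a b j i → col a b j ≠ col a b i := by
  have : col a b i ∈ {c : ℕ | ∀ j : Fin n, prec a j i → edge a b j i → col a b j ≠ c} := by
    rw [col]
    exact Nat.sInf_mem (colS_nonempty a b i)
  exact this

lemma col_zero_of_empty (i : Fin n) (hi : ¬ a i ≤ b i) : col a b i = 0 := by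
  have : col a b i ≤ 0 := by
    rw [col]
    exact Nat.sInf_le (fun j _ he => absurd he.2.1 hi)
  omega

/-- number of intervals containing `x` -/
noncomputable def cnt (x : ℝ) : ℕ := (Finset.univ.filter fun i : Fin n => x ∈ Set.Icc (a i) (b i)).card

lemma col_lt (i : Fin n) (hi : a i ≤ b i) : col a b i < cnt a b (a i) := by
  by_contra hcon
  push_neg at hcon
  -- every c < cnt (a i) is not in the set, since sInf = col i ≥ cnt (a i)
  have key : ∀ c, c < cnt a b (a i) → ∃ j : Fin n, prec a j i ∧ edge a b j i ∧ col a b j = c := by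
    intro c hc
    have hne : c ∉ {c : ℕ | ∀ j : Fin n, prec a j i → edge a b j i → col a b j ≠ c} := by
      intro hmem
      have : col a b i ≤ c := by rw [col]; exact Nat.sInf_le hmem
      omega
    simp only [Set.mem_setOf_eq, not_forall] at hne
    obtain ⟨j, hj1, hj2, hj3⟩ := hne
    exact ⟨j, hj1, hj2, by simpa using hj3⟩
  -- build an injection from range (cnt (a i)) into the intervals containing a i, other than i
  set T : Finset (Fin n) := (Finset.univ.filter fun j : Fin n => a i ∈ Set.Icc (a j) (b j)).erase i
    with hT
  have hmaps : ∀ c ∈ Finset.range (cnt a b (a i)),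
      (fun c => if hc : c < cnt a b (a i) then (key c hc).choose else i) c ∈ T := by
    intro c hc
    simp only [Finset.mem_range] at hc
    simp only [dif_pos hc]
    obtain ⟨hp, he, _⟩ := (key c hc).choose_spec
    refine Finset.mem_erase.2 ⟨fun e => prec_irrefl a (e ▸ hp), ?_⟩
    simp only [Finset.mem_filter, Finset.mem_univ, true_and, Set.mem_Icc]
    exact ⟨prec_le a hp, he.2.2.2⟩
  have hinj : Set.InjOn (fun c => if hc : c < cnt a b (a i) then (key c hc).choose else i)
      (Finset.range (cnt a b (a i))) := by
    intro c hc c' hc' hcc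
    simp only [Finset.coe_range, Set.mem_Iio] at hc hc'
    simp only [dif_pos hc, dif_pos hc'] at hcc
    have e1 := (key c hc).choose_spec.2.2
    have e2 := (key c' hc').choose_spec.2.2
    rw [← e1, ← e2, hcc]
  have hcard := Finset.card_le_card_of_injOn _ hmaps hinj
  rw [Finset.card_range] at hcard
  have hTlt : T.card < cnt a b (a i) := by
    have hiT : i ∈ Finset.univ.filter fun j : Fin n => a i ∈ Set.Icc (a j) (b j) := by
      simp [Set.mem_Icc, hi]
    have he : cnt a b (a i) = T.card + 1 := by
      rw [hT, Finset.card_erase_add_one hiT]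
      rfl
    omega
  exact lt_irrefl _ (lt_of_le_of_lt hcard hTlt)

end

lemma exists_top_subset {α : Type*} [DecidableEq α] (f : α → ℕ) :
    ∀ (r : ℕ) (s : Finset α), r ≤ s.card →
      ∃ t ⊆ s, t.card = r ∧ ∀ x ∈ s, x ∉ t → ∀ y ∈ t, f x ≤ f y := by
  intro r
  induction r with
  | zero => intro s _; exact ⟨∅, Finset.empty_subset s, rfl, by simp⟩
  | succ r ih =>
    intro s hr
    have hsne : s.Nonempty := Finset.card_pos.1 (by omega)
    obtain ⟨y0, hy0, hmax⟩ := Finset.exists_max_image s f hsne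
    have hcard : r ≤ (s.erase y0).card := by
      rw [Finset.card_erase_of_mem hy0]; omega
    obtain ⟨t', ht's, ht'c, ht'p⟩ := ih (s.erase y0) hcard
    have hy0t' : y0 ∉ t' := fun hm => (Finset.mem_erase.1 (ht's hm)).1 rfl
    refine ⟨insert y0 t', ?_, ?_, ?_⟩
    · intro x hx
      rcases Finset.mem_insert.1 hx with rfl | hx
      · exact hy0
      · exact Finset.mem_of_mem_erase (ht's hx)
    · rw [Finset.card_insert_of_notMem hy0t', ht'c]
    · intro x hx hxt y hy
      rcases Finset.mem_insert.1 hy with rfl | hy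
      · exact hmax x hx
      · exact ht'p x (Finset.mem_erase.2 ⟨fun e => hxt (e ▸ Finset.mem_insert_self y0 t'), hx⟩)
          (fun hm => hxt (Finset.mem_insert_of_mem hm)) y hy

lemma exists_top_sum {α : Type*} [DecidableEq α] (f : α → ℕ) (r : ℕ) (s : Finset α)
    (hr : r ≤ s.card) :
    ∃ t ⊆ s, t.card = r ∧ r * ∑ x ∈ s, f x ≤ s.card * ∑ x ∈ t, f x := by
  obtain ⟨t, hts, htc, htp⟩ := exists_top_subset f r s hr
  refine ⟨t, hts, htc, ?_⟩
  have hsplit : ∑ x ∈ s \ t, f x + ∑ x ∈ t, f x = ∑ x ∈ s, f x := Finset.sum_sdiff hts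
  have hbound : ∀ x ∈ s \ t, r * f x ≤ ∑ y ∈ t, f y := by
    intro x hx
    obtain ⟨hxs, hxt⟩ := Finset.mem_sdiff.1 hx
    calc r * f x = ∑ _y ∈ t, f x := by rw [Finset.sum_const, htc, smul_eq_mul]
    _ ≤ ∑ y ∈ t, f y := Finset.sum_le_sum (fun y hy => htp x hxs hxt y hy)
  have h2 : r * ∑ x ∈ s \ t, f x ≤ (s.card - r) * ∑ y ∈ t, f y := by
    rw [Finset.mul_sum]
    calc ∑ x ∈ s \ t, r * f x ≤ ∑ _x ∈ s \ t, ∑ y ∈ t, f y := Finset.sum_le_sum hbound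
    _ = (s \ t).card * ∑ y ∈ t, f y := by rw [Finset.sum_const, smul_eq_mul]
    _ = (s.card - r) * ∑ y ∈ t, f y := by rw [Finset.card_sdiff_of_subset hts, htc]
  have h3 : r * ∑ x ∈ s, f x = r * ∑ x ∈ s \ t, f x + r * ∑ x ∈ t, f x := by
    rw [← Nat.mul_add, hsplit]
  have h4 : s.card - r + r = s.card := Nat.sub_add_cancel hr
  nlinarith [h2, h3, h4, Nat.zero_le (∑ x ∈ t, f x)]

/-- Agreeable Linear Society Theorem (Berg et al.): in a (k,m)-agreeable linear society of
`n` voters, some platform is approved by at least `⌈(k-1)·n/(m-1)⌉` voters. -/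
theorem agreeable_linear_society (k m n : ℕ) (hk : 2 ≤ k) (hkm : k ≤ m) (hmn : m ≤ n)
    (a b : Fin n → ℝ)
    (h : ∀ T : Finset (Fin n), T.card = m → ∃ T' ⊆ T, T'.card = k ∧
      (⋂ i ∈ T', Set.Icc (a i) (b i)).Nonempty) :
    ∃ x : ℝ, ⌈(((k : ℚ) - 1) * n) / ((m : ℚ) - 1)⌉ ≤
      ((Finset.univ.filter fun i : Fin n => x ∈ Set.Icc (a i) (b i)).card : ℤ) := by
  have hn : 0 < n := by omega
  have huniv : (Finset.univ : Finset (Fin n)).Nonempty := ⟨⟨0, hn⟩, Finset.mem_univ _⟩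
  obtain ⟨i0, _, hi0max⟩ := Finset.exists_max_image Finset.univ (fun i => cnt a b (a i)) huniv
  set A := cnt a b (a i0) with hA
  -- Step 1: k ≤ A
  have hAk : k ≤ A := by
    obtain ⟨T0, _, hT0c⟩ := Finset.exists_subset_card_eq (s := (Finset.univ : Finset (Fin n))) (n := m)
      (by simpa using hmn)
    obtain ⟨T', hT'sub, hT'c, x, hx⟩ := h T0 hT0c
    have hT'ne : T'.Nonempty := Finset.card_pos.1 (by omega)
    obtain ⟨istar, histar, hstarmax⟩ := Finset.exists_max_image T' a hT'ne
    have hxmem : ∀ j ∈ T', x ∈ Set.Icc (a j) (b j) := by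
      intro j hj
      exact Set.mem_iInter₂.1 hx j hj
    have hsub2 : T' ⊆ Finset.univ.filter fun j : Fin n => a istar ∈ Set.Icc (a j) (b j) := by
      intro j hj
      simp only [Finset.mem_filter, Finset.mem_univ, true_and, Set.mem_Icc]
      obtain ⟨h1, h2⟩ := Set.mem_Icc.1 (hxmem j hj)
      obtain ⟨h3, _⟩ := Set.mem_Icc.1 (hxmem istar histar)
      exact ⟨hstarmax j hj, le_trans h3 h2⟩
    calc k = T'.card := hT'c.symm
    _ ≤ cnt a b (a istar) := Finset.card_le_card hsub2
    _ ≤ A := hi0max istar (Finset.mem_univ _)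
  have hApos : 0 < A := by omega
  -- Step 2: every color is < A
  have hcolA : ∀ i : Fin n, col a b i < A := by
    intro i
    by_cases hi : a i ≤ b i
    · exact lt_of_lt_of_le (col_lt a b i hi) (hi0max i (Finset.mem_univ _))
    · rw [col_zero_of_empty a b i hi]; exact hApos
  -- class sizes
  set g : ℕ → ℕ := fun c => (Finset.univ.filter fun i : Fin n => col a b i = c).card with hg
  have hsum : ∑ c ∈ Finset.range A, g c = n := by
    have := Finset.card_eq_sum_card_fiberwise
      (f := fun i : Fin n => col a b i) (s := Finset.univ) (t := Finset.range A)
      (fun i _ => Finset.mem_range.2 (hcolA i))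
    rw [Finset.card_univ, Fintype.card_fin] at this
    exact this.symm
  -- Step 3: top k-1 classes
  obtain ⟨K, hKsub, hKcard, hKsum⟩ := exists_top_sum g (k - 1) (Finset.range A)
    (by rw [Finset.card_range]; omega)
  rw [hsum, Finset.card_range] at hKsum
  -- Step 4: union of the k-1 classes
  set U : Finset (Fin n) := Finset.univ.filter fun i : Fin n => col a b i ∈ K with hU
  have hUsum : ∑ c ∈ K, g c = U.card := by
    have heq : ∀ c ∈ K, g c = (U.filter fun i => col a b i = c).card := by
      intro c hc
      have hfe : (Finset.univ.filter fun i : Fin n => col a b i ∈ K ∧ col a b i = c)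
          = Finset.univ.filter fun i : Fin n => col a b i = c := by
        ext i
        simp only [Finset.mem_filter, Finset.mem_univ, true_and]
        constructor
        · intro hcol; exact hcol.2
        · intro hcol; exact ⟨hcol ▸ hc, hcol⟩
      rw [hU, Finset.filter_filter, hfe, hg]
    rw [Finset.sum_congr rfl heq]
    exact (Finset.card_eq_sum_card_fiberwise
      (f := fun i : Fin n => col a b i) (s := U) (t := K)
      (fun i hi => (Finset.mem_filter.1 hi).2)).symm
  -- Step 5: U has at most m-1 elements
  have hUm : U.card ≤ m - 1 := by
    by_contra hcon
    push_neg at hcon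
    obtain ⟨T, hTU, hTc⟩ := Finset.exists_subset_card_eq (s := U) (n := m) (by omega)
    obtain ⟨T', hT'sub, hT'c, x, hx⟩ := h T hTc
    have hxmem : ∀ j ∈ T', x ∈ Set.Icc (a j) (b j) := fun j hj => Set.mem_iInter₂.1 hx j hj
    have hmaps : ∀ i ∈ T', col a b i ∈ K := by
      intro i hi
      have := hTU (hT'sub hi)
      rw [hU, Finset.mem_filter] at this
      exact this.2
    have hinj : Set.InjOn (col a b) T' := by
      intro i hi j hj hcc
      by_contra hne
      obtain ⟨hi1, hi2⟩ := Set.mem_Icc.1 (hxmem i hi)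
      obtain ⟨hj1, hj2⟩ := Set.mem_Icc.1 (hxmem j hj)
      have hedge_ij : edge a b i j := ⟨hi1.trans hi2, hj1.trans hj2, hi1.trans hj2, hj1.trans hi2⟩
      have hedge_ji : edge a b j i := ⟨hj1.trans hj2, hi1.trans hi2, hj1.trans hi2, hi1.trans hj2⟩
      rcases prec_total a hne with hp | hp
      · exact col_mem a b j i hp hedge_ij hcc
      · exact col_mem a b i j hp hedge_ji hcc.symm
    have := Finset.card_le_card_of_injOn (col a b) hmaps hinj
    rw [hT'c, hKcard] at this
    omega
  -- Step 6: combine into (k-1)*n ≤ A*(m-1)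
  have hmain : (k - 1) * n ≤ A * (m - 1) := by
    calc (k - 1) * n ≤ A * ∑ c ∈ K, g c := hKsum
    _ = A * U.card := by rw [hUsum]
    _ ≤ A * (m - 1) := Nat.mul_le_mul_left A hUm
  -- Step 7: conclude
  refine ⟨a i0, ?_⟩
  have hcnt : (Finset.univ.filter fun i : Fin n => a i0 ∈ Set.Icc (a i) (b i)).card = A := rfl
  rw [hcnt]
  rw [Int.ceil_le]
  have hm1 : (0:ℚ) < (m:ℚ) - 1 := by
    have : (2:ℚ) ≤ (m:ℚ) := by exact_mod_cast le_trans hk hkm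
    linarith
  rw [div_le_iff₀ hm1]
  push_cast
  have hq : (((k - 1) * n : ℕ) : ℚ) ≤ ((A * (m - 1) : ℕ) : ℚ) := by exact_mod_cast hmain
  push_cast [Nat.cast_sub (by omega : 1 ≤ k), Nat.cast_sub (by omega : 1 ≤ m)] at hq
  linarith
end

section
/- Let S be a product society with voter approval sets C_i = A_i × B_i ⊆ X × Y for i = 1,...,n. Suppose α, β ∈ (0,1] are such that: every subfamily of the A_i of size at least m has a point common to at least an α-fraction of its members, and similarly every subfamily of the B_i of size at least m has a point common to at least a β-fraction of its members. If n ≥ m/min(α,β), then some point of X × Y lies in at least αβ·n of the sets C_i. -/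
open Classical

/-- General product society agreement bound: if every subfamily of the `A i` of size at
least `m` has a point common to an `α`-fraction of its members, likewise for the `B i`
with `β`, and `n ≥ m / min α β`, then some point of `X × Y` lies in at least `α·β·n`
of the products `A i ×ˢ B i`. -/
theorem product_society_bound {X Y : Type*} (n m : ℕ) (A : Fin n → Set X) (B : Fin n → Set Y)
    (α β : ℝ) (hα : α ∈ Set.Ioc (0 : ℝ) 1) (hβ : β ∈ Set.Ioc (0 : ℝ) 1)
    (hA : ∀ T : Finset (Fin n), m ≤ T.card →
      ∃ x : X, α * T.card ≤ (T.filter fun i => x ∈ A i).card)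
    (hB : ∀ T : Finset (Fin n), m ≤ T.card →
      ∃ y : Y, β * T.card ≤ (T.filter fun i => y ∈ B i).card)
    (hn : (m : ℝ) / min α β ≤ n) :
    ∃ z : X × Y, α * β * n ≤ (Finset.univ.filter fun i : Fin n => z ∈ A i ×ˢ B i).card := by
  obtain ⟨hα0, hα1⟩ := hα
  obtain ⟨hβ0, hβ1⟩ := hβ
  have hmin : (0 : ℝ) < min α β := lt_min hα0 hβ0
  have hmn : (m : ℝ) ≤ n := le_trans (by
    rw [le_div_iff₀ hmin]
    nlinarith [min_le_left α β, min_le_right α β]) hn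
  have hmn' : m ≤ n := by exact_mod_cast hmn
  obtain ⟨x, hx⟩ := hA Finset.univ (by simpa using hmn')
  set T := Finset.univ.filter (fun i => x ∈ A i) with hT
  have hαn : (m : ℝ) ≤ α * n := by
    rw [div_le_iff₀ hmin] at hn
    nlinarith [min_le_left α β]
  have hTcard : (m : ℝ) ≤ T.card := le_trans hαn (by simpa using hx)
  have hTcard' : m ≤ T.card := by exact_mod_cast hTcard
  obtain ⟨y, hy⟩ := hB T hTcard'
  refine ⟨(x, y), ?_⟩
  have hsub : T.filter (fun i => y ∈ B i) ⊆
      Finset.univ.filter (fun i : Fin n => (x, y) ∈ A i ×ˢ B i) := by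
    intro i hi
    simp only [hT, Finset.mem_filter, Finset.mem_univ, true_and, Set.mem_prod] at hi ⊢
    exact ⟨hi.1, hi.2⟩
  have := Finset.card_le_card hsub
  calc α * β * n = β * (α * n) := by ring
    _ ≤ β * T.card := by
        apply mul_le_mul_of_nonneg_left _ hβ0.le
        simpa using hx
    _ ≤ ((T.filter fun i => y ∈ B i).card : ℝ) := hy
    _ ≤ _ := by exact_mod_cast this
end

section
/- Let 2 ≤ k ≤ m and let C_1, ..., C_n be axis-parallel closed rectangles in ℝ² (products of closed bounded intervals) such that among any m of them, some k share a common point. If n ≥ m(m-1)/(k-1), then there is a point of ℝ² contained in at least (k-1)²/(m-1)² · n of the rectangles. -/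
open Classical

/-- Among any `A` with `r ≤ |A|` there is an `r`-subset on which `f` is at least as
large as on the complement. -/
lemma exists_top_subset_s6 {α : Type*} [DecidableEq α] (f : α → ℕ) :
    ∀ (r : ℕ) (A : Finset α), r ≤ A.card →
      ∃ B, B ⊆ A ∧ B.card = r ∧ ∀ a ∈ A \ B, ∀ b ∈ B, f a ≤ f b := by
  intro r
  induction r with
  | zero =>
    intro A _
    exact ⟨∅, Finset.empty_subset _, rfl, by simp⟩
  | succ r ih =>
    intro A hr
    have hA : A.Nonempty := Finset.card_pos.mp (by omega)
    obtain ⟨b0, hb0A, hb0max⟩ := Finset.exists_max_image A f hA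
    have hcard : r ≤ (A.erase b0).card := by
      rw [Finset.card_erase_of_mem hb0A]; omega
    obtain ⟨B', hB'sub, hB'card, hB'top⟩ := ih (A.erase b0) hcard
    have hb0B' : b0 ∉ B' := fun h => (Finset.mem_erase.mp (hB'sub h)).1 rfl
    refine ⟨insert b0 B', ?_, ?_, ?_⟩
    · intro x hx
      rcases Finset.mem_insert.mp hx with h | h
      · exact h ▸ hb0A
      · exact (Finset.erase_subset _ _) (hB'sub h)
    · rw [Finset.card_insert_of_notMem hb0B', hB'card]
    · intro x hx b hb
      have hxA : x ∈ A := (Finset.mem_sdiff.mp hx).1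
      have hxB : x ∉ insert b0 B' := (Finset.mem_sdiff.mp hx).2
      rcases Finset.mem_insert.mp hb with rfl | hbB'
      · exact hb0max x hxA
      · have hx' : x ∈ (A.erase b0) \ B' := by
          rw [Finset.mem_sdiff, Finset.mem_erase]
          exact ⟨⟨fun h => hxB (h ▸ Finset.mem_insert_self _ _), hxA⟩,
            fun h => hxB (Finset.mem_insert_of_mem h)⟩
        exact hB'top x hx' b hbB'

/-- Averaging: there is an `r`-subset capturing at least an `r/|A|` fraction of the sum. -/
lemma top_sum {α : Type*} [DecidableEq α] (f : α → ℕ) (r : ℕ) (A : Finset α)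
    (hr : r ≤ A.card) :
    ∃ B, B ⊆ A ∧ B.card = r ∧ r * ∑ x ∈ A, f x ≤ A.card * ∑ x ∈ B, f x := by
  obtain ⟨B, hBA, hBcard, htop⟩ := exists_top_subset_s6 f r A hr
  refine ⟨B, hBA, hBcard, ?_⟩
  rcases Nat.eq_zero_or_pos r with rfl | hrpos
  · simp
  · have hBne : B.Nonempty := Finset.card_pos.mp (by omega)
    obtain ⟨b0, hb0B, hb0min⟩ := Finset.exists_min_image B f hBne
    have h1 : ∑ x ∈ A \ B, f x ≤ (A \ B).card * f b0 := by
      have := Finset.sum_le_card_nsmul (A \ B) f (f b0) (fun x hx => htop x hx b0 hb0B)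
      simpa [smul_eq_mul] using this
    have h2 : r * f b0 ≤ ∑ x ∈ B, f x := by
      have := Finset.card_nsmul_le_sum B f (f b0) (fun x hx => hb0min x hx)
      simpa [smul_eq_mul, hBcard] using this
    have hsplit : ∑ x ∈ A \ B, f x + ∑ x ∈ B, f x = ∑ x ∈ A, f x :=
      Finset.sum_sdiff hBA
    have hcards : (A \ B).card = A.card - r := by
      rw [Finset.card_sdiff_of_subset hBA, hBcard]
    obtain ⟨d, hd⟩ := Nat.exists_eq_add_of_le hr
    have hcd : (A \ B).card = d := by omega
    rw [← hsplit, hd]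
    calc r * (∑ x ∈ A \ B, f x + ∑ x ∈ B, f x)
        = r * ∑ x ∈ A \ B, f x + r * ∑ x ∈ B, f x := by ring
      _ ≤ r * (d * f b0) + r * ∑ x ∈ B, f x := by
          have : ∑ x ∈ A \ B, f x ≤ d * f b0 := by rw [← hcd]; exact h1
          exact Nat.add_le_add_right (Nat.mul_le_mul_left r this) _
      _ = d * (r * f b0) + r * ∑ x ∈ B, f x := by ring
      _ ≤ d * ∑ x ∈ B, f x + r * ∑ x ∈ B, f x := by
          exact Nat.add_le_add_right (Nat.mul_le_mul_left d h2) _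
      _ = (r + d) * ∑ x ∈ B, f x := by ring

/-- First-fit coloring of an interval family: a proper coloring where each interval's
color is bounded by the coverage at its own left endpoint. -/
lemma exists_coloring {ι : Type*} [DecidableEq ι] (l u : ι → ℝ) (S : Finset ι) :
    ∃ f : ι → ℕ,
      (∀ i ∈ S, 1 ≤ f i ∧ f i ≤ max 1 ((S.filter fun j => l i ∈ Set.Icc (l j) (u j)).card)) ∧
      (∀ i ∈ S, ∀ j ∈ S, i ≠ j → f i = f j →
        Set.Icc (l i) (u i) ∩ Set.Icc (l j) (u j) = ∅) := by
  induction S using Finset.strongInduction with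
  | _ S ih =>
    rcases S.eq_empty_or_nonempty with rfl | hS
    · exact ⟨fun _ => 1, by simp, by simp⟩
    · obtain ⟨i0, hi0S, hmax⟩ := Finset.exists_max_image S l hS
      obtain ⟨f', hbound', hproper'⟩ := ih (S.erase i0) (Finset.erase_ssubset hi0S)
      set S' := S.erase i0 with hS'def
      set N := S'.filter (fun j => (Set.Icc (l j) (u j) ∩ Set.Icc (l i0) (u i0)).Nonempty)
        with hNdef
      set P := S.filter (fun j => l i0 ∈ Set.Icc (l j) (u j)) with hPdef
      set c0 := max 1 P.card with hc0def
      have hNsub : N ⊆ P.erase i0 := by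
        intro j hj
        obtain ⟨hjS', ⟨y, hy1, hy2⟩⟩ := Finset.mem_filter.mp hj
        have hjS : j ∈ S := Finset.mem_of_mem_erase hjS'
        refine Finset.mem_erase.mpr ⟨(Finset.mem_erase.mp hjS').1,
          Finset.mem_filter.mpr ⟨hjS, ?_⟩⟩
        exact Set.mem_Icc.mpr ⟨hmax j hjS, le_trans (Set.mem_Icc.mp hy2).1
          (Set.mem_Icc.mp hy1).2⟩
      have hNcard : N.card < c0 := by
        rcases N.eq_empty_or_nonempty with he | ⟨j, hj⟩
        · rw [he]
          simp only [Finset.card_empty]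
          omega
        · obtain ⟨hjS', ⟨y, hy1, hy2⟩⟩ := Finset.mem_filter.mp hj
          have hi0P : i0 ∈ P := by
            refine Finset.mem_filter.mpr ⟨hi0S, ?_⟩
            have := Set.mem_Icc.mp hy2
            exact Set.mem_Icc.mpr ⟨le_refl _ |>.trans (le_refl _), this.1.trans this.2⟩
          have h1 : N.card ≤ (P.erase i0).card := Finset.card_le_card hNsub
          have h2 : (P.erase i0).card < P.card := Finset.card_erase_lt_of_mem hi0P
          have h3 : P.card ≤ c0 := le_max_right _ _
          omega
      have himg : (N.image f').card < (Finset.Icc 1 c0).card := by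
        have := Finset.card_image_le (s := N) (f := f')
        rw [Nat.card_Icc]
        omega
      have hns : ¬ (Finset.Icc 1 c0 ⊆ N.image f') := by
        intro hsub
        exact absurd (Finset.card_le_card hsub) (by omega)
      obtain ⟨v, hvIcc, hvim⟩ := Finset.not_subset.mp hns
      obtain ⟨hv1, hvc0⟩ := Finset.mem_Icc.mp hvIcc
      refine ⟨fun j => if j = i0 then v else f' j, ?_, ?_⟩
      · intro i hiS
        by_cases hi : i = i0
        · subst hi
          simp only [if_pos rfl]
          exact ⟨hv1, hvc0⟩
        · simp only [if_neg hi]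
          have hiS' : i ∈ S' := Finset.mem_erase.mpr ⟨hi, hiS⟩
          obtain ⟨h1, h2⟩ := hbound' i hiS'
          refine ⟨h1, le_trans h2 (max_le_max le_rfl (Finset.card_le_card ?_))⟩
          exact Finset.filter_subset_filter _ (Finset.erase_subset _ _)
      · intro i hiS j hjS hij hfij
        by_cases hi : i = i0 <;> by_cases hj : j = i0
        · exact absurd (hi.trans hj.symm) hij
        · simp only [if_pos hi, if_neg hj] at hfij
          have hjS' : j ∈ S' := Finset.mem_erase.mpr ⟨hj, hjS⟩
          have hjN : j ∉ N := by
            intro hjN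
            exact hvim (Finset.mem_image.mpr ⟨j, hjN, hfij.symm⟩)
          have : ¬ (Set.Icc (l j) (u j) ∩ Set.Icc (l i0) (u i0)).Nonempty := by
            intro hne
            exact hjN (Finset.mem_filter.mpr ⟨hjS', hne⟩)
          rw [hi, Set.inter_comm]
          exact Set.not_nonempty_iff_eq_empty.mp this
        · simp only [if_pos hj, if_neg hi] at hfij
          have hiS' : i ∈ S' := Finset.mem_erase.mpr ⟨hi, hiS⟩
          have hiN : i ∉ N := by
            intro hiN
            exact hvim (Finset.mem_image.mpr ⟨i, hiN, hfij⟩)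
          have : ¬ (Set.Icc (l i) (u i) ∩ Set.Icc (l i0) (u i0)).Nonempty := by
            intro hne
            exact hiN (Finset.mem_filter.mpr ⟨hiS', hne⟩)
          rw [hj]
          exact Set.not_nonempty_iff_eq_empty.mp this
        · simp only [if_neg hi, if_neg hj] at hfij
          exact hproper' i (Finset.mem_erase.mpr ⟨hi, hiS⟩) j
            (Finset.mem_erase.mpr ⟨hj, hjS⟩) hij hfij

/-- The linear (1-D) agreeable society bound. -/
lemma oneD {ι : Type*} [DecidableEq ι] (k m : ℕ) (hk : 2 ≤ k) (hkm : k ≤ m)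
    (l u : ι → ℝ) (S : Finset ι) (hSm : m ≤ S.card)
    (hag : ∀ T ⊆ S, T.card = m → ∃ T' ⊆ T, T'.card = k ∧
      (⋂ i ∈ T', Set.Icc (l i) (u i)).Nonempty) :
    ∃ x : ℝ, (k - 1) * S.card ≤ (m - 1) *
      ((S.filter fun i => x ∈ Set.Icc (l i) (u i)).card) := by
  by_contra hcon
  push_neg at hcon
  have hm : 2 ≤ m := hk.trans hkm
  have hS : S.Nonempty := Finset.card_pos.mp (by omega)
  set cov : ℝ → ℕ := fun x => (S.filter fun i => x ∈ Set.Icc (l i) (u i)).card with hcovdef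
  set ω := S.sup (fun i => cov (l i)) with hωdef
  have covle : ∀ x, cov x ≤ ω := by
    intro x
    rcases (S.filter fun i => x ∈ Set.Icc (l i) (u i)).eq_empty_or_nonempty with he | hne
    · show (S.filter fun i => x ∈ Set.Icc (l i) (u i)).card ≤ ω
      rw [he]; simp
    · obtain ⟨j, hjA, hjmax⟩ := Finset.exists_max_image _ l hne
      have hjS : j ∈ S := (Finset.mem_filter.mp hjA).1
      have hjx := Set.mem_Icc.mp (Finset.mem_filter.mp hjA).2
      have hsub : (S.filter fun i => x ∈ Set.Icc (l i) (u i)) ⊆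
          (S.filter fun i => l j ∈ Set.Icc (l i) (u i)) := by
        intro i hi
        obtain ⟨hiS, hix⟩ := Finset.mem_filter.mp hi
        obtain ⟨h1, h2⟩ := Set.mem_Icc.mp hix
        exact Finset.mem_filter.mpr ⟨hiS, Set.mem_Icc.mpr ⟨hjmax i hi, le_trans hjx.1 h2⟩⟩
      calc cov x ≤ (S.filter fun i => l j ∈ Set.Icc (l i) (u i)).card :=
            Finset.card_le_card hsub
        _ ≤ ω := Finset.le_sup (f := fun i => cov (l i)) hjS
  have hω1 : 1 ≤ ω := by
    obtain ⟨T, hTS, hTcard⟩ := Finset.exists_subset_card_eq hSm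
    obtain ⟨T', hT'T, hT'card, ⟨x1, hx1⟩⟩ := hag T hTS hTcard
    have hT'ne : T'.Nonempty := Finset.card_pos.mp (by omega)
    obtain ⟨i1, hi1⟩ := hT'ne
    have hi1S : i1 ∈ S := hTS (hT'T hi1)
    have hmem : i1 ∈ S.filter fun i => x1 ∈ Set.Icc (l i) (u i) :=
      Finset.mem_filter.mpr ⟨hi1S, Set.mem_iInter₂.mp hx1 i1 hi1⟩
    have h1 : 1 ≤ cov x1 := Finset.card_pos.mpr ⟨i1, hmem⟩
    exact h1.trans (covle x1)
  have hωm : (m - 1) * ω < (k - 1) * S.card := by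
    obtain ⟨iw, hiwS, hiweq⟩ := Finset.exists_mem_eq_sup S hS (fun i => cov (l i))
    calc (m - 1) * ω = (m - 1) * cov (l iw) := by rw [← hiweq]
      _ < (k - 1) * S.card := hcon (l iw)
  obtain ⟨f, hfb, hfp⟩ := exists_coloring l u S
  have hfW : ∀ i ∈ S, f i ∈ Finset.Icc 1 ω := by
    intro i hi
    obtain ⟨h1, h2⟩ := hfb i hi
    refine Finset.mem_Icc.mpr ⟨h1, le_trans h2 (max_le hω1 ?_)⟩
    exact Finset.le_sup (f := fun i => cov (l i)) hi
  set V := Finset.Icc 1 ω with hVdef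
  have hVcard : V.card = ω := by rw [hVdef, Nat.card_Icc]; omega
  have hpart : S.card = ∑ v ∈ V, (S.filter fun i => f i = v).card :=
    Finset.card_eq_sum_card_fiberwise hfW
  set r := min (k - 1) ω with hrdef
  have hrV : r ≤ V.card := by rw [hVcard]; exact min_le_right _ _
  obtain ⟨B, hBV, hBcard, hBsum⟩ := top_sum (fun v => (S.filter fun i => f i = v).card) r V hrV
  set U := S.filter (fun i => f i ∈ B) with hUdef
  have hUcard : U.card = ∑ v ∈ B, (S.filter fun i => f i = v).card := by
    rw [Finset.card_eq_sum_card_fiberwise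
      (f := f) (s := U) (t := B) (fun i hi => (Finset.mem_filter.mp hi).2)]
    refine Finset.sum_congr rfl fun v hv => ?_
    congr 1
    ext i
    simp only [hUdef, Finset.mem_filter]
    constructor
    · rintro ⟨⟨hiS, _⟩, he⟩; exact ⟨hiS, he⟩
    · rintro ⟨hiS, he⟩; exact ⟨⟨hiS, he ▸ hv⟩, he⟩
  have hUS : r * S.card ≤ ω * U.card := by
    rw [hUcard, hpart, ← hVcard]
    exact hBsum
  have hmU : m ≤ U.card := by
    rcases le_or_gt (k - 1) ω with hcase | hcase
    · have hre : r = k - 1 := min_eq_left hcase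
      have hlt : (m - 1) * ω < ω * U.card := by
        calc (m - 1) * ω < (k - 1) * S.card := hωm
          _ = r * S.card := by rw [hre]
          _ ≤ ω * U.card := hUS
      rw [Nat.mul_comm (m - 1) ω] at hlt
      have := Nat.lt_of_mul_lt_mul_left hlt
      omega
    · have hre : r = ω := min_eq_right hcase.le
      have hBV' : B = V := Finset.eq_of_subset_of_card_le hBV (by rw [hBcard, hVcard, hre])
      have hUeq : U = S := Finset.filter_true_of_mem (fun i hi => hBV' ▸ hfW i hi)
      rw [hUeq]; exact hSm
  have covU : ∀ x, (U.filter fun i => x ∈ Set.Icc (l i) (u i)).card ≤ k - 1 := by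
    intro x
    have hmap : ∀ i ∈ U.filter fun i => x ∈ Set.Icc (l i) (u i), f i ∈ B :=
      fun i hi => (Finset.mem_filter.mp (Finset.mem_filter.mp hi).1).2
    have hinj : Set.InjOn f (U.filter fun i => x ∈ Set.Icc (l i) (u i)) := by
      intro i hi j hj hfij
      by_contra hne
      obtain ⟨hiU, hix⟩ := Finset.mem_filter.mp hi
      obtain ⟨hjU, hjx⟩ := Finset.mem_filter.mp hj
      have hiS : i ∈ S := (Finset.mem_filter.mp hiU).1
      have hjS : j ∈ S := (Finset.mem_filter.mp hjU).1
      have hempty := hfp i hiS j hjS hne hfij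
      have : x ∈ Set.Icc (l i) (u i) ∩ Set.Icc (l j) (u j) := ⟨hix, hjx⟩
      rw [hempty] at this
      exact this
    calc (U.filter fun i => x ∈ Set.Icc (l i) (u i)).card ≤ B.card :=
          Finset.card_le_card_of_injOn f hmap hinj
      _ = r := hBcard
      _ ≤ k - 1 := min_le_left _ _
  obtain ⟨T, hTU, hTcard⟩ := Finset.exists_subset_card_eq hmU
  obtain ⟨T', hT'T, hT'card, ⟨x0, hx0⟩⟩ :=
    hag T (hTU.trans (Finset.filter_subset _ _)) hTcard
  have hsub : T' ⊆ U.filter fun i => x0 ∈ Set.Icc (l i) (u i) := by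
    intro i hi
    exact Finset.mem_filter.mpr ⟨hTU (hT'T hi), Set.mem_iInter₂.mp hx0 i hi⟩
  have h1 := Finset.card_le_card hsub
  have h2 := covU x0
  omega

/-- The 2-box case of the product society bound: in a (k,m)-agreeable 2-box society with
`n ≥ m(m-1)/(k-1)` voters, some point of ℝ² lies in at least `((k-1)/(m-1))²·n` rectangles. -/
theorem two_box_product_bound (k m n : ℕ) (hk : 2 ≤ k) (hkm : k ≤ m)
    (a b c d : Fin n → ℝ)
    (h : ∀ T : Finset (Fin n), T.card = m → ∃ T' ⊆ T, T'.card = k ∧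
      (⋂ i ∈ T', Set.Icc (a i) (b i) ×ˢ Set.Icc (c i) (d i)).Nonempty)
    (hn : ((m : ℚ) * (m - 1)) / ((k : ℚ) - 1) ≤ n) :
    ∃ z : ℝ × ℝ, (((k : ℚ) - 1) ^ 2 / ((m : ℚ) - 1) ^ 2) * n ≤
      ((Finset.univ.filter fun i : Fin n =>
        z ∈ Set.Icc (a i) (b i) ×ˢ Set.Icc (c i) (d i)).card : ℚ) := by
  have hm2 : 2 ≤ m := hk.trans hkm
  have hkq : (2:ℚ) ≤ (k:ℚ) := by exact_mod_cast hk
  have hkmq : (k:ℚ) ≤ (m:ℚ) := by exact_mod_cast hkm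
  have hk1 : (0:ℚ) < (k:ℚ) - 1 := by linarith
  have hm1 : (0:ℚ) < (m:ℚ) - 1 := by linarith
  have hmn' : (m:ℚ) * ((m:ℚ) - 1) ≤ (n:ℚ) * ((k:ℚ) - 1) := by
    rw [div_le_iff₀ hk1] at hn
    linarith
  have hnq0 : (0:ℚ) ≤ (n:ℚ) := by positivity
  have hmn : m ≤ n := by
    have hq : (m:ℚ) ≤ (n:ℚ) := by
      nlinarith [mul_nonneg hnq0 (by linarith : (0:ℚ) ≤ (m:ℚ) - (k:ℚ))]
    exact_mod_cast hq
  -- Step 1: x-direction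
  have hag1 : ∀ T ⊆ (Finset.univ : Finset (Fin n)), T.card = m → ∃ T' ⊆ T, T'.card = k ∧
      (⋂ i ∈ T', Set.Icc (a i) (b i)).Nonempty := by
    intro T _ hTcard
    obtain ⟨T', h1, h2, ⟨z, hz⟩⟩ := h T hTcard
    refine ⟨T', h1, h2, ⟨z.1, Set.mem_iInter₂.mpr fun i hi => ?_⟩⟩
    exact (Set.mem_prod.mp (Set.mem_iInter₂.mp hz i hi)).1
  obtain ⟨x0, hx0⟩ := oneD k m hk hkm a b Finset.univ
    (by rw [Finset.card_fin]; exact hmn) hag1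
  set A := Finset.univ.filter (fun i : Fin n => x0 ∈ Set.Icc (a i) (b i)) with hAdef
  have h1n : (k - 1) * n ≤ (m - 1) * A.card := by
    have := hx0
    rwa [Finset.card_fin] at this
  have hk1n : 1 ≤ k := by omega
  have hm1n : 1 ≤ m := by omega
  have hq1 : ((k:ℚ) - 1) * n ≤ ((m:ℚ) - 1) * A.card := by
    have hc := (Nat.cast_le (α := ℚ)).mpr h1n
    push_cast [Nat.cast_sub hk1n, Nat.cast_sub hm1n] at hc
    linarith [hc]
  -- Step 2: |A| ≥ m
  have hAq : (m:ℚ) ≤ (A.card : ℚ) := by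
    nlinarith [hmn', hq1]
  have hAm : m ≤ A.card := by exact_mod_cast hAq
  -- Step 3: y-direction
  have hag2 : ∀ T ⊆ A, T.card = m → ∃ T' ⊆ T, T'.card = k ∧
      (⋂ i ∈ T', Set.Icc (c i) (d i)).Nonempty := by
    intro T _ hTcard
    obtain ⟨T', h1, h2, ⟨z, hz⟩⟩ := h T hTcard
    refine ⟨T', h1, h2, ⟨z.2, Set.mem_iInter₂.mpr fun i hi => ?_⟩⟩
    exact (Set.mem_prod.mp (Set.mem_iInter₂.mp hz i hi)).2
  obtain ⟨y0, hy0⟩ := oneD k m hk hkm c d A hAm hag2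
  set B := A.filter (fun i => y0 ∈ Set.Icc (c i) (d i)) with hBdef
  have hq2 : ((k:ℚ) - 1) * A.card ≤ ((m:ℚ) - 1) * B.card := by
    have hc := (Nat.cast_le (α := ℚ)).mpr hy0
    push_cast [Nat.cast_sub hk1n, Nat.cast_sub hm1n] at hc
    linarith [hc]
  -- Step 4: identify B with the filter at z = (x0, y0)
  have hBeq : B = Finset.univ.filter (fun i : Fin n =>
      (x0, y0) ∈ Set.Icc (a i) (b i) ×ˢ Set.Icc (c i) (d i)) := by
    ext i
    simp only [hBdef, hAdef, Finset.mem_filter, Finset.mem_univ, true_and, Set.mem_prod]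
  refine ⟨(x0, y0), ?_⟩
  rw [← hBeq]
  rw [div_mul_eq_mul_div, div_le_iff₀ (by positivity : (0:ℚ) < ((m:ℚ) - 1) ^ 2)]
  nlinarith [hq1, hq2, mul_le_mul_of_nonneg_left hq1 hk1.le,
    mul_le_mul_of_nonneg_left hq2 hm1.le]
end

section
/- Let A_1, ..., A_n be closed arcs on the circle ℝ/ℤ that pairwise intersect. Then there exists a point of the circle contained in at least ⌈(n+1)/2⌉ of the arcs. -/
open Classical

/-- A closed arc on the circle ℝ/ℤ: the image of a closed interval. -/
def Arc (a b : ℝ) : Set (AddCircle (1 : ℝ)) :=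
  (fun t : ℝ => (t : AddCircle (1 : ℝ))) '' Set.Icc a b

lemma coe_add_int' (x : ℝ) (k : ℤ) : ((x + k : ℝ) : AddCircle (1 : ℝ)) = (x : ℝ) := by
  have h0 : ((k : ℝ) : AddCircle (1 : ℝ)) = 0 := by
    rw [AddCircle.coe_eq_zero_iff]
    exact ⟨k, by simp⟩
  have h1 : ((x + k : ℝ) : AddCircle (1 : ℝ)) = (x : AddCircle (1:ℝ)) + ((k:ℝ) : AddCircle (1:ℝ)) := rfl
  rw [h1, h0, add_zero]

lemma arc_endpoint (ai bi aj bj : ℝ)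
    (hij : (Arc ai bi ∩ Arc aj bj).Nonempty) :
    (ai : AddCircle (1:ℝ)) ∈ Arc aj bj ∨ ((aj : ℝ) : AddCircle (1:ℝ)) ∈ Arc ai bi := by
  obtain ⟨x, ⟨t, ht, rfl⟩, ⟨s, hs, hts⟩⟩ := hij
  obtain ⟨k, hk⟩ : ∃ k : ℤ, t = s + k := by
    have h2 : -s + t ∈ AddSubgroup.zmultiples (1:ℝ) := QuotientAddGroup.eq.mp hts
    obtain ⟨k, hk⟩ := h2
    refine ⟨k, ?_⟩
    simp only [zsmul_eq_mul, mul_one] at hk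
    linarith
  rcases le_total ai (aj + k) with hle | hle
  · right
    refine ⟨aj + k, ⟨hle, ?_⟩, coe_add_int' aj k⟩
    have := hs.1; have := ht.2; linarith
  · left
    refine ⟨ai - k, ⟨?_, ?_⟩, ?_⟩
    · linarith
    · have := ht.1; have := hs.2; linarith
    · have := coe_add_int' (ai - k) k
      rw [sub_add_cancel] at this
      exact this.symm

/-- Pairwise-intersecting closed arcs on the circle: some point lies in at least
`⌈(n+1)/2⌉` of the `n` arcs, i.e. `n + 1 ≤ 2a`. -/
theorem pairwise_arcs_agreement (n : ℕ) (hn : 1 ≤ n) (a b : Fin n → ℝ)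
    (h : ∀ i j : Fin n, (Arc (a i) (b i) ∩ Arc (a j) (b j)).Nonempty) :
    ∃ x : AddCircle (1 : ℝ),
      n + 1 ≤ 2 * (Finset.univ.filter fun i : Fin n => x ∈ Arc (a i) (b i)).card := by
  classical
  set c : Fin n → Fin n → ℕ :=
    fun i j => if ((a i : ℝ) : AddCircle (1:ℝ)) ∈ Arc (a j) (b j) then 1 else 0 with hc
  have hself : ∀ i, c i i = 1 := by
    intro i
    obtain ⟨x, hx, -⟩ := h i i
    obtain ⟨t, ht, -⟩ := hx
    have hab : a i ≤ b i := le_trans ht.1 ht.2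
    have hmem : ((a i : ℝ) : AddCircle (1:ℝ)) ∈ Arc (a i) (b i) :=
      ⟨a i, ⟨le_refl _, hab⟩, rfl⟩
    simp [hc, hmem]
  have hpair : ∀ i j, 1 ≤ c i j + c j i := by
    intro i j
    rcases arc_endpoint (a i) (b i) (a j) (b j) (h i j) with hm | hm
    · have : c i j = 1 := by simp [hc, hm]
      omega
    · have : c j i = 1 := by simp [hc, hm]
      omega
  have hcard : ∀ i, (Finset.univ.filter fun j : Fin n =>
      ((a i : ℝ) : AddCircle (1:ℝ)) ∈ Arc (a j) (b j)).card = ∑ j, c i j := by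
    intro i
    rw [Finset.card_filter]
  -- total sum bound
  have hsum : n * (n + 1) ≤ ∑ i, ∑ j, (c i j + c j i) := by
    have : ∀ i : Fin n, n + 1 ≤ ∑ j, (c i j + c j i) := by
      intro i
      have h1 : ∑ j, (c i j + c j i) =
          (c i i + c i i) + ∑ j ∈ Finset.univ.erase i, (c i j + c j i) := by
        rw [← Finset.add_sum_erase _ _ (Finset.mem_univ i)]
      have h2 : (n - 1 : ℕ) ≤ ∑ j ∈ Finset.univ.erase i, (c i j + c j i) := by
        calc (n - 1 : ℕ) = (Finset.univ.erase i).card := by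
              simp [Finset.card_erase_of_mem]
          _ = ∑ j ∈ Finset.univ.erase i, 1 := by simp
          _ ≤ _ := Finset.sum_le_sum fun j _ => hpair i j
      have h3 := hself i
      omega
    calc n * (n+1) = ∑ _i : Fin n, (n+1) := by simp [mul_comm]
      _ ≤ _ := Finset.sum_le_sum fun i _ => this i
  have hsplit : ∑ i, ∑ j, (c i j + c j i) = 2 * ∑ i, ∑ j, c i j := by
    rw [two_mul]
    simp_rw [Finset.sum_add_distrib]
    congr 1
    exact Finset.sum_comm
  -- find good i
  have hex : ∃ i : Fin n, n + 1 ≤ 2 * ∑ j, c i j := by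
    by_contra hcon
    push_neg at hcon
    have hle : ∑ i, ∑ j, (c i j + c j i) ≤ n * n := by
      rw [hsplit, Finset.mul_sum]
      calc ∑ i : Fin n, 2 * ∑ j, c i j ≤ ∑ _i : Fin n, n :=
            Finset.sum_le_sum fun i _ => Nat.le_of_lt_succ (hcon i)
        _ = n * n := by simp [mul_comm]
    have hexp : n * (n + 1) = n * n + n := by ring
    omega
  obtain ⟨i, hi⟩ := hex
  exact ⟨((a i : ℝ) : AddCircle (1:ℝ)), by rw [hcard i] at *; exact hi⟩
end

section
/- Let m, k ≥ 2 be integers with k ≤ m ≤ 2k-2, and let G be a graph on n ≥ m vertices such that every subset of m vertices contains a clique of size k. Then G has a clique of size at least n - m + k. -/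
open Classical

section Aux

variable {V : Type*} [DecidableEq V]

/-- Exchange lemma for matchings: if `Astar, fstar` is a maximum "matching"
(injective choice of an element of `nb a` for each `a`), then any other
matchable set `A` has at least `A.card` neighbours inside the image of the
maximum matching. -/
private lemma lemA (C : Finset V) (nb : V → Finset V)
    (Astar : Finset V) (fstar : V → V)
    (hAstarC : Astar ⊆ C) (hfinj : Set.InjOn fstar Astar)
    (hfmem : ∀ a ∈ Astar, fstar a ∈ nb a)
    (hmax : ∀ (B : Finset V) (g : V → V), B ⊆ C → Set.InjOn g B →
      (∀ a ∈ B, g a ∈ nb a) → B.card ≤ Astar.card)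
    (A : Finset V) (g : V → V) (hAC : A ⊆ C) (hg : Set.InjOn g A)
    (hgm : ∀ a ∈ A, g a ∈ nb a) :
    A.card ≤ ((Astar.image fstar) ∩ A.biUnion nb).card := by
  by_contra hlt
  push_neg at hlt
  classical
  set Nbs := A.biUnion nb with hNbs
  set A2 := Astar.filter (fun x => fstar x ∉ Nbs) with hA2
  have hA2Astar : A2 ⊆ Astar := Finset.filter_subset _ _
  have hA2A : ∀ x ∈ A2, x ∉ A := by
    intro x hx hxA
    have hmem : fstar x ∈ Nbs :=
      Finset.mem_biUnion.mpr ⟨x, hxA, hfmem x (Finset.mem_filter.mp hx).1⟩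
    exact (Finset.mem_filter.mp hx).2 hmem
  have hsplit : (Astar.filter (fun x => fstar x ∈ Nbs)).card ≤
      ((Astar.image fstar) ∩ Nbs).card := by
    apply Finset.card_le_card_of_injOn (fun x => fstar x)
    · intro x hx
      rw [Finset.mem_coe, Finset.mem_filter] at hx
      exact Finset.mem_inter.mpr ⟨Finset.mem_image_of_mem _ hx.1, hx.2⟩
    · intro x hx y hy hxy
      exact hfinj (Finset.filter_subset _ _ (Finset.mem_coe.mp hx))
        (Finset.filter_subset _ _ (Finset.mem_coe.mp hy)) hxy
  have hcards : (Astar.filter (fun x => fstar x ∈ Nbs)).card + A2.card = Astar.card := by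
    rw [hA2]
    exact Finset.card_filter_add_card_filter_not _
  set B := A ∪ A2 with hB
  set h := fun x => if x ∈ A then g x else fstar x with hh
  have hBC : B ⊆ C := Finset.union_subset hAC (hA2Astar.trans hAstarC)
  have hvalid : ∀ a ∈ B, h a ∈ nb a := by
    intro a ha
    rw [hB, Finset.mem_union] at ha
    by_cases haA : a ∈ A
    · simp only [hh, if_pos haA]; exact hgm a haA
    · have ha2 : a ∈ A2 := ha.resolve_left haA
      simp only [hh, if_neg haA]
      exact hfmem a (hA2Astar ha2)
  have hinjB : Set.InjOn h B := by
    intro x hx y hy hxy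
    rw [Finset.mem_coe, hB, Finset.mem_union] at hx hy
    by_cases hxA : x ∈ A <;> by_cases hyA : y ∈ A
    · simp only [hh, if_pos hxA, if_pos hyA] at hxy
      exact hg hxA hyA hxy
    · exfalso
      have hy2 : y ∈ A2 := hy.resolve_left hyA
      simp only [hh, if_pos hxA, if_neg hyA] at hxy
      have h1 : g x ∈ Nbs := Finset.mem_biUnion.mpr ⟨x, hxA, hgm x hxA⟩
      rw [hxy] at h1
      exact (Finset.mem_filter.mp hy2).2 h1
    · exfalso
      have hx2 : x ∈ A2 := hx.resolve_left hxA
      simp only [hh, if_neg hxA, if_pos hyA] at hxy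
      have h1 : g y ∈ Nbs := Finset.mem_biUnion.mpr ⟨y, hyA, hgm y hyA⟩
      rw [← hxy] at h1
      exact (Finset.mem_filter.mp hx2).2 h1
    · have hx2 : x ∈ A2 := hx.resolve_left hxA
      have hy2 : y ∈ A2 := hy.resolve_left hyA
      simp only [hh, if_neg hxA, if_neg hyA] at hxy
      exact hfinj (hA2Astar hx2) (hA2Astar hy2) hxy
  have hBcard : B.card = A.card + A2.card := by
    rw [hB]
    exact Finset.card_union_of_disjoint
      (Finset.disjoint_left.mpr (fun x hx hx2 => hA2A x hx2 hx))
  have hBmax : B.card ≤ Astar.card := hmax B h hBC hinjB hvalid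
  omega

/-- If `Q` is a maximum clique in `U` and `A ⊆ U` is a clique disjoint from `Q`,
then `A` has at least `A.card` non-neighbours inside `Q`. -/
private lemma claim1 (G : SimpleGraph V) (U Q : Finset V)
    (hQcl : G.IsClique (Q : Set V))
    (hmaxQ : ∀ P : Finset V, P ⊆ U → G.IsClique (P : Set V) → P.card ≤ Q.card)
    (nb : V → Finset V) (hnb : ∀ a q, q ∈ nb a ↔ q ∈ Q ∧ ¬ G.Adj a q)
    (A : Finset V) (hAU : A ⊆ U) (hQU : Q ⊆ U) (hAQ : Disjoint A Q)
    (hAcl : G.IsClique (A : Set V)) :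
    A.card ≤ (A.biUnion nb).card := by
  classical
  set Nbs := A.biUnion nb with hNbs
  have hNQ : Nbs ⊆ Q := by
    intro q hq
    obtain ⟨a, _, hqa⟩ := Finset.mem_biUnion.mp hq
    exact ((hnb a q).mp hqa).1
  have hclique : G.IsClique (((Q \ Nbs) ∪ A : Finset V) : Set V) := by
    intro x hx y hy hxy
    rw [Finset.mem_coe, Finset.mem_union, Finset.mem_sdiff] at hx hy
    rcases hx with ⟨hxQ, hxN⟩ | hxA <;> rcases hy with ⟨hyQ, hyN⟩ | hyA
    · exact hQcl hxQ hyQ hxy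
    · by_contra hadj
      exact hxN (Finset.mem_biUnion.mpr ⟨y, hyA,
        (hnb y x).mpr ⟨hxQ, fun hyx => hadj ((G.adj_comm y x).mp hyx)⟩⟩)
    · by_contra hadj
      exact hyN (Finset.mem_biUnion.mpr ⟨x, hxA,
        (hnb x y).mpr ⟨hyQ, hadj⟩⟩)
    · exact hAcl hxA hyA hxy
  have hsub : (Q \ Nbs) ∪ A ⊆ U :=
    Finset.union_subset ((Finset.sdiff_subset).trans hQU) hAU
  have hle := hmaxQ _ hsub hclique
  have hdisj : Disjoint (Q \ Nbs) A :=
    (Finset.disjoint_of_subset_left Finset.sdiff_subset hAQ.symm)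
  rw [Finset.card_union_of_disjoint hdisj, Finset.card_sdiff_of_subset hNQ] at hle
  have hNle : Nbs.card ≤ Q.card := Finset.card_le_card hNQ
  omega

/-- Main lemma: induction on the size of the vertex set `U`. -/
private lemma mainLemma (G : SimpleGraph V) (k t : ℕ) (hkt : t + 2 ≤ k) :
    ∀ N : ℕ, ∀ U : Finset V, U.card = N → k + t ≤ N →
    (∀ S ⊆ U, S.card = k + t → ∃ T ⊆ S, T.card = k ∧ G.IsClique (T : Set V)) →
    ∃ Q ⊆ U, N - t ≤ Q.card ∧ G.IsClique (Q : Set V) := by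
  intro N
  induction N using Nat.strong_induction_on with
  | _ N IH =>
    intro U hU hN hyp
    by_contra hcon
    push_neg at hcon
    have hmaxQ' : ∀ P : Finset V, P ⊆ U → G.IsClique (P : Set V) → P.card + t < N := by
      intro P hPU hP
      by_contra hge
      push_neg at hge
      exact hcon P hPU (by omega) hP
    rcases Nat.eq_or_lt_of_le hN with hbase | hstep
    · obtain ⟨T, hTU, hTcard, hTcl⟩ := hyp U Finset.Subset.rfl (by omega)
      have := hmaxQ' T (hTU.trans Finset.Subset.rfl) hTcl
      omega
    · -- N > k + t : inductive step
      have hUne : U.Nonempty := Finset.card_pos.mp (by omega)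
      obtain ⟨v₀, hv₀⟩ := hUne
      have hU'card : (U.erase v₀).card = N - 1 := by
        rw [Finset.card_erase_of_mem hv₀, hU]
      obtain ⟨Q, hQU', hQcard, hQcl⟩ := IH (N - 1) (by omega) (U.erase v₀) hU'card
        (by omega)
        (fun S hS hSc => hyp S (hS.trans (Finset.erase_subset _ _)) hSc)
      have hQU : Q ⊆ U := hQU'.trans (Finset.erase_subset _ _)
      have hQbig := hmaxQ' Q hQU hQcl
      have hQc : Q.card + t + 1 = N := by omega
      have hmaxQ : ∀ P : Finset V, P ⊆ U → G.IsClique (P : Set V) → P.card ≤ Q.card := by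
        intro P hPU hP
        have := hmaxQ' P hPU hP
        omega
      set C := U \ Q with hC
      have hCU : C ⊆ U := Finset.sdiff_subset
      have hCQdisj : Disjoint C Q := Finset.sdiff_disjoint
      have hCcard : C.card = t + 1 := by
        rw [hC, Finset.card_sdiff_of_subset hQU, hU]
        omega
      set nb := fun a => Q.filter (fun q => ¬ G.Adj a q) with hnbdef
      have hnb : ∀ a q, q ∈ nb a ↔ q ∈ Q ∧ ¬ G.Adj a q := by
        intro a q
        simp [hnbdef]
      have hnbQ : ∀ a, nb a ⊆ Q := fun a => Finset.filter_subset _ _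
      -- a maximum matching
      set cand := C.powerset.filter
        (fun A : Finset V => ∃ g : V → V, Set.InjOn g (A : Set V) ∧ ∀ a ∈ A, g a ∈ nb a) with hcand
      have hcne : cand.Nonempty := by
        refine ⟨∅, ?_⟩
        rw [hcand, Finset.mem_filter, Finset.mem_powerset]
        exact ⟨Finset.empty_subset _, id, by simp, by simp⟩
      obtain ⟨Astar, hAstarmem, hAmax⟩ := Finset.exists_max_image cand Finset.card hcne
      rw [hcand, Finset.mem_filter, Finset.mem_powerset] at hAstarmem
      obtain ⟨hAstarC, fstar, hfinj, hfmem⟩ := hAstarmem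
      have hmaxmatch : ∀ (B : Finset V) (g : V → V), B ⊆ C → Set.InjOn g (B : Set V) →
          (∀ a ∈ B, g a ∈ nb a) → B.card ≤ Astar.card := by
        intro B g hBC hBinj hBmem
        apply hAmax
        rw [hcand, Finset.mem_filter, Finset.mem_powerset]
        exact ⟨hBC, g, hBinj, hBmem⟩
      set R := Astar.image fstar with hR
      have hRQ : R ⊆ Q := by
        intro r hr
        obtain ⟨a, ha, rfl⟩ := Finset.mem_image.mp hr
        exact hnbQ a (hfmem a ha)
      have hRcard : R.card ≤ t + 1 := by
        calc R.card ≤ Astar.card := Finset.card_image_le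
          _ ≤ C.card := Finset.card_le_card hAstarC
          _ = t + 1 := hCcard
      -- choose the test set S
      have hCRU : C ∪ R ⊆ U := Finset.union_subset hCU (hRQ.trans hQU)
      have hCRcard : (C ∪ R).card ≤ k + t := by
        have := Finset.card_union_le C R
        omega
      obtain ⟨S, hCRS, hSU, hScard⟩ :=
        Finset.exists_subsuperset_card_eq hCRU hCRcard (by omega)
      obtain ⟨K, hKS, hKcard, hKcl⟩ := hyp S hSU hScard
      have hCS : C ⊆ S := (Finset.subset_union_left).trans hCRS
      have hRS : R ⊆ S := (Finset.subset_union_right).trans hCRS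
      set A' := C ∩ K with hA'
      have hA'C : A' ⊆ C := Finset.inter_subset_left
      have hA'K : A' ⊆ K := Finset.inter_subset_right
      have hA'cl : G.IsClique (A' : Set V) := hKcl.subset (by exact_mod_cast hA'K)
      have hA'pos : 1 ≤ A'.card := by
        have h1 : (C ∪ K).card + A'.card = C.card + K.card := by
          rw [hA']; exact Finset.card_union_add_card_inter C K
        have h2 : (C ∪ K).card ≤ S.card :=
          Finset.card_le_card (Finset.union_subset hCS hKS)
        rw [hScard] at h2
        omega
      -- Hall's condition for subsets of A'
      have hall : ∀ s : Finset V, s ⊆ A' → s.card ≤ (s.biUnion nb).card := by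
        intro s hs
        exact claim1 G U Q hQcl hmaxQ nb hnb s ((hs.trans hA'C).trans hCU) hQU
          (Finset.disjoint_of_subset_left (hs.trans hA'C) hCQdisj)
          (hA'cl.subset (by exact_mod_cast hs))
      -- get a matching saturating A' via Hall's theorem
      have hallsub : ∀ s : Finset {x // x ∈ A'},
          s.card ≤ (s.biUnion (fun a => nb a.1)).card := by
        intro s
        have hcardeq : (s.image Subtype.val).card = s.card :=
          Finset.card_image_of_injective s Subtype.val_injective
        have hbeq : s.biUnion (fun a => nb a.1) = (s.image Subtype.val).biUnion nb := by
          ext q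
          simp only [Finset.mem_biUnion, Finset.mem_image]
          constructor
          · rintro ⟨a, ha, hq⟩; exact ⟨a.1, ⟨a, ha, rfl⟩, hq⟩
          · rintro ⟨x, ⟨a, ha, rfl⟩, hq⟩; exact ⟨a, ha, hq⟩
        rw [hbeq, ← hcardeq]
        apply hall
        intro x hx
        obtain ⟨a, _, rfl⟩ := Finset.mem_image.mp hx
        exact a.2
      obtain ⟨f, hfinj', hfm⟩ :=
        (Finset.all_card_le_biUnion_card_iff_exists_injective
          (fun a : {x // x ∈ A'} => nb a.1)).mp hallsub
      set g : V → V := fun x => if h : x ∈ A' then f ⟨x, h⟩ else x with hg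
      have hginj : Set.InjOn g (A' : Set V) := by
        intro x hx y hy hxy
        rw [Finset.mem_coe] at hx hy
        simp only [hg, dif_pos hx, dif_pos hy] at hxy
        have := hfinj' hxy
        exact congrArg Subtype.val this
      have hgmem : ∀ a ∈ A', g a ∈ nb a := by
        intro a ha
        simp only [hg, dif_pos ha]
        exact hfm ⟨a, ha⟩
      -- apply the exchange lemma
      have hkey : A'.card ≤ (R ∩ A'.biUnion nb).card :=
        lemA C nb Astar fstar hAstarC hfinj hfmem hmaxmatch A' g hA'C hginj hgmem
      -- final counting
      set Y := R ∩ A'.biUnion nb with hY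
      have hYS : Y ⊆ S := (Finset.inter_subset_left).trans hRS
      have hYQ : Y ⊆ Q := (Finset.inter_subset_left).trans hRQ
      have hYK : Disjoint Y K := by
        rw [Finset.disjoint_left]
        intro y hy hyK
        have hy2 := Finset.mem_inter.mp hy
        obtain ⟨a, haA', hynb⟩ := Finset.mem_biUnion.mp hy2.2
        have hyQ' : y ∈ Q := ((hnb a y).mp hynb).1
        have hnadj : ¬ G.Adj a y := ((hnb a y).mp hynb).2
        have haK : a ∈ K := hA'K haA'
        have haC : a ∈ C := hA'C haA'
        have hane : a ≠ y := by
          intro h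
          exact (Finset.disjoint_left.mp hCQdisj) haC (h ▸ hyQ')
        exact hnadj (hKcl haK hyK hane)
      set X := C \ K with hX
      have hXS : X ⊆ S := (Finset.sdiff_subset).trans hCS
      have hXK : Disjoint X K := Finset.sdiff_disjoint
      have hXY : Disjoint X Y :=
        Finset.disjoint_of_subset_left Finset.sdiff_subset
          (Finset.disjoint_of_subset_right hYQ hCQdisj)
      have hXcard : X.card + A'.card = C.card := by
        rw [hX, hA']
        exact Finset.card_sdiff_add_card_inter C K
      have hsubS : X ∪ Y ∪ K ⊆ S :=
        Finset.union_subset (Finset.union_subset hXS hYS) hKS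
      have htot : (X ∪ Y ∪ K).card = X.card + Y.card + K.card := by
        rw [Finset.card_union_of_disjoint
          (Finset.disjoint_union_left.mpr ⟨hXK, hYK⟩),
          Finset.card_union_of_disjoint hXY]
      have hle : (X ∪ Y ∪ K).card ≤ S.card := Finset.card_le_card hsubS
      rw [htot, hScard] at hle
      omega

end Aux

/-- Berg et al., Theorem 11: if `k ≤ m ≤ 2k-2` and every `m` vertices of a graph on
`n ≥ m` vertices contain a `k`-clique, then the graph has a clique of size `n - m + k`. -/
theorem clique_theorem {V : Type*} [Fintype V] (G : SimpleGraph V) (k m n : ℕ)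
    (hk : 2 ≤ k) (hm : 2 ≤ m) (hkm : k ≤ m) (hm2k : m ≤ 2 * k - 2)
    (hcard : Fintype.card V = n) (hnm : m ≤ n)
    (h : ∀ S : Finset V, S.card = m → ∃ T ⊆ S, T.card = k ∧ G.IsClique (T : Set V)) :
    ∃ T : Finset V, n - m + k ≤ T.card ∧ G.IsClique (T : Set V) := by
  classical
  set t := m - k with ht
  have hm' : m = k + t := by omega
  have hkt : t + 2 ≤ k := by omega
  obtain ⟨Q, hQU, hQcard, hQcl⟩ := mainLemma G k t hkt n Finset.univ
    (by rw [Finset.card_univ, hcard]) (by omega)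
    (fun S _ hS => h S (by omega))
  exact ⟨Q, by omega, hQcl⟩
end

section
/- Let m, k ≥ 2 with k ≤ m ≤ 2k-2, and let C_1, ..., C_n (n ≥ m) be axis-parallel closed rectangles in ℝ² such that among any m of them, some k share a common point. Then there is a point of ℝ² contained in at least n - m + k of the rectangles. -/
open Classical

/-- A finset is "good" for a relation `r` if all (ordered, possibly equal) pairs from it
are related. For the box application: all pairs of boxes indexed in `U` intersect. -/
def AgreeGood {α : Type*} (r : α → α → Prop) (U : Finset α) : Prop :=
  ∀ i ∈ U, ∀ j ∈ U, r i j

/-- Criticality lemma: if `I` is a maximum good subset of `V` and every vertex of `V` is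
avoided by some maximum good subset, then `2 * |I| ≤ |V|`. -/
lemma agree_star {α : Type*} [DecidableEq α] (r : α → α → Prop)
    (hsym : ∀ x y, r x y → r y x) (V I : Finset α) (hIV : I ⊆ V)
    (hIgood : AgreeGood r I)
    (hmax : ∀ J, J ⊆ V → AgreeGood r J → J.card ≤ I.card)
    (havd : ∀ v ∈ V, ∃ J, J ⊆ V ∧ AgreeGood r J ∧ J.card = I.card ∧ v ∉ J) :
    2 * I.card ≤ V.card := by
  classical
  by_contra hlt
  push_neg at hlt
  -- "non-neighborhood" of K : vertices outside I with a non-relation to some element of K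
  set NN : Finset α → Finset α :=
    fun K => V.filter (fun u => u ∉ I ∧ ∃ x ∈ K, ¬ r u x) with hNNdef
  have hNNmem : ∀ K u, u ∈ NN K ↔ u ∈ V ∧ u ∉ I ∧ ∃ x ∈ K, ¬ r u x := by
    intro K u
    simp [hNNdef]
  -- violators
  set 𝒱 : Finset (Finset α) :=
    I.powerset.filter (fun K => (NN K).card < K.card) with h𝒱def
  have h𝒱mem : ∀ K, K ∈ 𝒱 ↔ K ⊆ I ∧ (NN K).card < K.card := by
    intro K
    simp [h𝒱def]
  have hIcardV : I.card ≤ V.card := Finset.card_le_card hIV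
  have hI𝒱 : I ∈ 𝒱 := by
    rw [h𝒱mem]
    refine ⟨Finset.Subset.rfl, ?_⟩
    have h1 : NN I ⊆ V \ I := by
      intro u hu
      rw [hNNmem] at hu
      exact Finset.mem_sdiff.mpr ⟨hu.1, hu.2.1⟩
    have h2 : (NN I).card ≤ (V \ I).card := Finset.card_le_card h1
    have h3 : (V \ I).card = V.card - I.card := Finset.card_sdiff_of_subset hIV
    omega
  obtain ⟨K, hK𝒱, hKmin⟩ := Finset.exists_min_image 𝒱 Finset.card ⟨I, hI𝒱⟩
  rw [h𝒱mem] at hK𝒱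
  obtain ⟨hKI, hKviol⟩ := hK𝒱
  have hKne : K.Nonempty := Finset.card_pos.mp (by omega)
  obtain ⟨v, hvK⟩ := hKne
  obtain ⟨J, hJV, hJgood, hJcard, hvJ⟩ := havd v (hIV (hKI hvK))
  set Z := NN K with hZdef
  -- the exchanged set
  set Istar := (J \ Z) ∪ K with hIstardef
  have hcross : ∀ u ∈ J \ Z, ∀ x ∈ K, r u x := by
    intro u hu x hx
    rcases Finset.mem_sdiff.mp hu with ⟨huJ, huZ⟩
    by_cases huI : u ∈ I
    · exact hIgood u huI x (hKI hx)
    · by_contra hr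
      exact huZ ((hNNmem K u).mpr ⟨hJV huJ, huI, x, hx, hr⟩)
  have hIstarGood : AgreeGood r Istar := by
    intro p hp q hq
    rcases Finset.mem_union.mp hp with hp' | hp' <;>
      rcases Finset.mem_union.mp hq with hq' | hq'
    · exact hJgood p (Finset.mem_sdiff.mp hp').1 q (Finset.mem_sdiff.mp hq').1
    · exact hcross p hp' q hq'
    · exact hsym _ _ (hcross q hq' p hp')
    · exact hIgood p (hKI hp') q (hKI hq')
  have hIstarV : Istar ⊆ V :=
    Finset.union_subset ((Finset.sdiff_subset).trans hJV) (hKI.trans hIV)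
  have h1 : Istar.card ≤ I.card := hmax _ hIstarV hIstarGood
  have hZnotI : ∀ z ∈ Z, z ∉ I := by
    intro z hz
    exact ((hNNmem K z).mp hz).2.1
  have hinter : (J \ Z) ∩ K = J ∩ K := by
    ext x
    simp only [Finset.mem_inter, Finset.mem_sdiff]
    constructor
    · rintro ⟨⟨h1, _⟩, h2⟩; exact ⟨h1, h2⟩
    · rintro ⟨h1, h2⟩
      exact ⟨⟨h1, fun hxZ => hZnotI x hxZ (hKI h2)⟩, h2⟩
  have hcard1 : Istar.card + (J ∩ K).card = (J \ Z).card + K.card := by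
    rw [hIstardef, ← hinter]
    exact Finset.card_union_add_card_inter _ _
  have hJZeq : J \ Z = J \ (J ∩ Z) := by
    ext x
    simp only [Finset.mem_sdiff, Finset.mem_inter]
    tauto
  have hJZ : (J \ Z).card = J.card - (J ∩ Z).card := by
    rw [hJZeq]
    exact Finset.card_sdiff_of_subset Finset.inter_subset_left
  have hJZle : (J ∩ Z).card ≤ J.card := Finset.card_le_card Finset.inter_subset_left
  -- key inequality: |K| ≤ |J∩Z| + |J∩K|
  have key1 : K.card ≤ (J ∩ Z).card + (J ∩ K).card := by omega
  -- K ∩ J is a proper subset of K, hence not a violator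
  have hKJcard : (K ∩ J).card < K.card := by
    apply Finset.card_lt_card
    rw [Finset.ssubset_iff_of_subset Finset.inter_subset_left]
    exact ⟨v, hvK, fun hv' => hvJ (Finset.mem_inter.mp hv').2⟩
  have hKJnotviol : (K ∩ J).card ≤ (NN (K ∩ J)).card := by
    by_contra hbad
    push_neg at hbad
    have hmem : (K ∩ J) ∈ 𝒱 :=
      (h𝒱mem _).mpr ⟨Finset.inter_subset_left.trans hKI, hbad⟩
    have := hKmin _ hmem
    omega
  have hsubZ : NN (K ∩ J) ⊆ Z \ J := by
    intro u hu
    rw [hNNmem] at hu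
    obtain ⟨huV, huI, x, hx, hr⟩ := hu
    rcases Finset.mem_inter.mp hx with ⟨hxK, hxJ⟩
    refine Finset.mem_sdiff.mpr ⟨(hNNmem K u).mpr ⟨huV, huI, x, hxK, hr⟩, ?_⟩
    intro huJ
    exact hr (hJgood u huJ x hxJ)
  have key2 : (K ∩ J).card ≤ (Z \ J).card :=
    le_trans hKJnotviol (Finset.card_le_card hsubZ)
  have hZJeq : Z \ J = Z \ (Z ∩ J) := by
    ext x
    simp only [Finset.mem_sdiff, Finset.mem_inter]
    tauto
  have hZJ : (Z \ J).card = Z.card - (Z ∩ J).card := by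
    rw [hZJeq]
    exact Finset.card_sdiff_of_subset Finset.inter_subset_left
  have hZJle : (Z ∩ J).card ≤ Z.card := Finset.card_le_card Finset.inter_subset_left
  have hcomm1 : (J ∩ K).card = (K ∩ J).card := by rw [Finset.inter_comm]
  have hcomm2 : (J ∩ Z).card = (Z ∩ J).card := by rw [Finset.inter_comm]
  omega

/-- Main combinatorial lemma: if every `m`-subset of `V` contains a good `k`-subset,
`k ≤ m ≤ 2k-2`, `2 ≤ k`, and `m ≤ |V|`, then `V` contains a good subset of size
at least `|V| - m + k`. -/
lemma agree_main {α : Type*} [DecidableEq α] (r : α → α → Prop)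
    (hsym : ∀ x y, r x y → r y x) (k m : ℕ) (hk : 2 ≤ k) (hkm : k ≤ m)
    (hm2k : m ≤ 2 * k - 2) :
    ∀ N : ℕ, ∀ V : Finset α, V.card = N → m ≤ N →
      (∀ T ⊆ V, T.card = m → ∃ T' ⊆ T, T'.card = k ∧ AgreeGood r T') →
      ∃ U ⊆ V, AgreeGood r U ∧ N - m + k ≤ U.card := by
  intro N
  induction N using Nat.strong_induction_on with
  | _ N ih =>
    intro V hVN hmN hyp
    rcases eq_or_lt_of_le hmN with heq | hlt
    · obtain ⟨T', hT'V, hT'card, hT'good⟩ := hyp V Finset.Subset.rfl (by omega)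
      exact ⟨T', hT'V, hT'good, by omega⟩
    · classical
      set 𝒢 : Finset (Finset α) := V.powerset.filter (AgreeGood r) with h𝒢def
      have h𝒢mem : ∀ J, J ∈ 𝒢 ↔ J ⊆ V ∧ AgreeGood r J := by
        intro J; simp [h𝒢def]
      have hemp : ∅ ∈ 𝒢 := by
        rw [h𝒢mem]
        exact ⟨Finset.empty_subset _, fun i hi => absurd hi (Finset.notMem_empty i)⟩
      obtain ⟨I, hI𝒢, hImax⟩ := Finset.exists_max_image 𝒢 Finset.card ⟨∅, hemp⟩
      rw [h𝒢mem] at hI𝒢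
      obtain ⟨hIV, hIgood⟩ := hI𝒢
      by_cases hdone : N - m + k ≤ I.card
      · exact ⟨I, hIV, hIgood, hdone⟩
      · push_neg at hdone
        exfalso
        -- for each v ∈ V, a maximum good set avoiding v
        have havd : ∀ v ∈ V, ∃ J, J ⊆ V ∧ AgreeGood r J ∧ J.card = I.card ∧ v ∉ J := by
          intro v hv
          have hcard' : (V.erase v).card = N - 1 := by
            rw [Finset.card_erase_of_mem hv, hVN]
          obtain ⟨U, hUV, hUgood, hUcard⟩ :=
            ih (N - 1) (by omega) (V.erase v) hcard' (by omega)
              (fun T hT hTc => hyp T (hT.trans (Finset.erase_subset _ _)) hTc)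
          have hUV' : U ⊆ V := hUV.trans (Finset.erase_subset _ _)
          have hUI : U.card ≤ I.card := hImax U ((h𝒢mem U).mpr ⟨hUV', hUgood⟩)
          refine ⟨U, hUV', hUgood, by omega, fun hvU => ?_⟩
          exact (Finset.mem_erase.mp (hUV hvU)).1 rfl
        have hVne : V.Nonempty := Finset.card_pos.mp (by omega)
        obtain ⟨v, hv⟩ := hVne
        obtain ⟨J, hJV, hJgood, hJcard, _⟩ := havd v hv
        -- lower bound on I.card
        have hcard' : (V.erase v).card = N - 1 := by
          rw [Finset.card_erase_of_mem hv, hVN]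
        obtain ⟨U, hUV, hUgood, hUcard⟩ :=
          ih (N - 1) (by omega) (V.erase v) hcard' (by omega)
            (fun T hT hTc => hyp T (hT.trans (Finset.erase_subset _ _)) hTc)
        have hUI : U.card ≤ I.card :=
          hImax U ((h𝒢mem U).mpr ⟨hUV.trans (Finset.erase_subset _ _), hUgood⟩)
        have hstar := agree_star r hsym V I hIV hIgood
          (fun J' hJ' hg => hImax J' ((h𝒢mem J').mpr ⟨hJ', hg⟩)) havd
        omega

/-- Agreeable 2-Box Society Theorem (Berg et al.): if `k ≤ m ≤ 2k-2` and among any `m` of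
`n ≥ m` axis-parallel closed rectangles in ℝ² some `k` share a point, then some point of
ℝ² lies in at least `n - m + k` of the rectangles. -/
theorem agreeable_two_box (k m n : ℕ) (hk : 2 ≤ k) (hm : 2 ≤ m) (hkm : k ≤ m)
    (hm2k : m ≤ 2 * k - 2) (hmn : m ≤ n) (a b c d : Fin n → ℝ)
    (h : ∀ T : Finset (Fin n), T.card = m → ∃ T' ⊆ T, T'.card = k ∧
      (⋂ i ∈ T', Set.Icc (a i) (b i) ×ˢ Set.Icc (c i) (d i)).Nonempty) :
    ∃ z : ℝ × ℝ, n - m + k ≤ (Finset.univ.filter fun i : Fin n =>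
      z ∈ Set.Icc (a i) (b i) ×ˢ Set.Icc (c i) (d i)).card := by
  classical
  set box : Fin n → Set (ℝ × ℝ) :=
    fun i => Set.Icc (a i) (b i) ×ˢ Set.Icc (c i) (d i) with hboxdef
  set r : Fin n → Fin n → Prop := fun i j => (box i ∩ box j).Nonempty with hrdef
  have hsym : ∀ i j, r i j → r j i := by
    rintro i j ⟨p, h1, h2⟩
    exact ⟨p, h2, h1⟩
  have hyp : ∀ T ⊆ (Finset.univ : Finset (Fin n)), T.card = m →
      ∃ T' ⊆ T, T'.card = k ∧ AgreeGood r T' := by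
    intro T _ hTc
    obtain ⟨T', hT'T, hT'c, p, hp⟩ := h T hTc
    rw [Set.mem_iInter₂] at hp
    exact ⟨T', hT'T, hT'c, fun i hi j hj => ⟨p, hp i hi, hp j hj⟩⟩
  obtain ⟨U, _, hUgood, hUcard⟩ :=
    agree_main r hsym k m hk hkm hm2k n Finset.univ (Finset.card_fin n) hmn hyp
  have hUne : U.Nonempty := Finset.card_pos.mp (by omega)
  refine ⟨(U.sup' hUne a, U.sup' hUne c), ?_⟩
  have hz : ∀ i ∈ U, (U.sup' hUne a, U.sup' hUne c) ∈ box i := by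
    intro i hi
    refine ⟨⟨Finset.le_sup' a hi, ?_⟩, ⟨Finset.le_sup' c hi, ?_⟩⟩
    · refine Finset.sup'_le hUne a fun j hj => ?_
      obtain ⟨p, hpj, hpi⟩ := hUgood j hj i hi
      exact le_trans hpj.1.1 hpi.1.2
    · refine Finset.sup'_le hUne c fun j hj => ?_
      obtain ⟨p, hpj, hpi⟩ := hUgood j hj i hi
      exact le_trans hpj.2.1 hpi.2.2
  have hsub : U ⊆ Finset.univ.filter fun i : Fin n =>
      (U.sup' hUne a, U.sup' hUne c) ∈ Set.Icc (a i) (b i) ×ˢ Set.Icc (c i) (d i) := by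
    intro i hi
    exact Finset.mem_filter.mpr ⟨Finset.mem_univ i, hz i hi⟩
  exact le_trans hUcard (Finset.card_le_card hsub)
end

section
/- Let m, k ≥ 2 with k ≤ m ≤ 2k-2, and let C_1, ..., C_n (n ≥ m) be sets of the form I_i × J_i in ℝ × (ℝ/ℤ), with I_i a closed bounded interval and J_i a closed arc, such that among any m of them, some k share a common point. Then some point of the cylinder lies in at least (n - m + k + 1)/2 of the sets C_i. -/
open Classical

namespace AgreeCyl

open Finset

variable {n : ℕ}

def memI (a b : Fin n → ℝ) (i : Fin n) (x : ℝ) : Prop :=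
  a i ≤ x ∧ x ≤ b i

def memC (c d : Fin n → ℝ) (i : Fin n) (y : ℝ) : Prop :=
  ∃ g : ℤ, c i ≤ y + (g : ℝ) ∧ y + (g : ℝ) ≤ d i

lemma memC_add_int (c d : Fin n → ℝ) (i : Fin n) (y : ℝ) (g : ℤ) :
    memC c d i (y + (g : ℝ)) ↔ memC c d i y := by
  constructor
  · rintro ⟨g', h1, h2⟩
    refine ⟨g + g', ?_, ?_⟩ <;> push_cast at * <;> linarith
  · rintro ⟨g', h1, h2⟩
    refine ⟨g' - g, ?_, ?_⟩ <;> push_cast at * <;> linarith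

lemma coe_eq_coe (t y : ℝ) :
    ((t : AddCircle (1 : ℝ)) = (y : AddCircle (1 : ℝ))) ↔ ∃ g : ℤ, t = y + (g : ℝ) := by
  rw [QuotientAddGroup.eq, AddSubgroup.mem_zmultiples_iff]
  constructor
  · rintro ⟨g, hg⟩
    rw [zsmul_eq_mul, mul_one] at hg
    exact ⟨-g, by push_cast; linarith⟩
  · rintro ⟨g, hg⟩
    exact ⟨-g, by rw [zsmul_eq_mul, mul_one]; push_cast; linarith⟩

lemma mem_arc (cc dd y : ℝ) :
    ((y : ℝ) : AddCircle (1 : ℝ)) ∈ Arc cc dd ↔ ∃ g : ℤ, cc ≤ y + (g : ℝ) ∧ y + (g : ℝ) ≤ dd := by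
  simp only [Arc, Set.mem_image, Set.mem_Icc]
  constructor
  · rintro ⟨t, ⟨h1, h2⟩, ht⟩
    obtain ⟨g, hg⟩ := (coe_eq_coe t y).mp ht
    exact ⟨g, by linarith, by linarith⟩
  · rintro ⟨g, h1, h2⟩
    exact ⟨y + (g : ℝ), ⟨h1, h2⟩, ((coe_eq_coe _ y).mpr ⟨g, rfl⟩)⟩

/-- canonical representative of `y` in `[t, t+1)` -/
noncomputable def rep (t y : ℝ) : ℝ := y - (⌊y - t⌋ : ℝ)

lemma rep_ge (t y : ℝ) : t ≤ rep t y := by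
  have := Int.floor_le (y - t); unfold rep; linarith

lemma rep_lt (t y : ℝ) : rep t y < t + 1 := by
  have := Int.lt_floor_add_one (y - t); unfold rep; linarith

lemma rep_shift (t y : ℝ) : ∃ g : ℤ, rep t y = y + (g : ℝ) :=
  ⟨-⌊y - t⌋, by unfold rep; push_cast; ring⟩

lemma rep_eq_of_mem (t : ℝ) {w z : ℝ} (h1 : t ≤ w) (h2 : w < t + 1) (g : ℤ)
    (hw : w = z + (g : ℝ)) : rep t z = w := by
  have hz : z - t = (w - t) - (g : ℝ) := by rw [hw]; ring
  have hfl : ⌊z - t⌋ = ⌊w - t⌋ - g := by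
    rw [hz]
    exact_mod_cast Int.floor_sub_intCast (w - t) g
  have h0 : ⌊w - t⌋ = 0 := by
    rw [Int.floor_eq_zero_iff]
    exact ⟨by linarith, by linarith⟩
  unfold rep
  rw [hfl, h0, hw]
  push_cast
  ring

lemma memC_rep (c d : Fin n → ℝ) (i : Fin n) (t y : ℝ) :
    memC c d i (rep t y) ↔ memC c d i y := by
  obtain ⟨g, hg⟩ := rep_shift t y
  rw [hg]; exact memC_add_int c d i y g

noncomputable def covC (c d : Fin n → ℝ) (F : Finset (Fin n)) (y : ℝ) : ℕ :=
  (F.filter (fun i => memC c d i y)).card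

lemma covC_rep (c d : Fin n → ℝ) (F : Finset (Fin n)) (t y : ℝ) :
    covC c d F (rep t y) = covC c d F y := by
  unfold covC
  congr 1
  apply Finset.filter_congr
  intro i _
  simp [memC_rep]

lemma covC_mono (c d : Fin n → ℝ) {F1 F2 : Finset (Fin n)} (h : F1 ⊆ F2) (y : ℝ) :
    covC c d F1 y ≤ covC c d F2 y :=
  Finset.card_le_card (Finset.filter_subset_filter _ h)

end AgreeCyl

namespace AgreeCyl

open Finset

variable {n : ℕ}

section Line

variable (a b : Fin n → ℝ)

def prec (i j : Fin n) : Prop := a i < a j ∨ (a i = a j ∧ i < j)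

lemma prec_trans {i j l : Fin n} (h1 : prec a i j) (h2 : prec a j l) : prec a i l := by
  rcases h1 with h1 | ⟨e1, l1⟩ <;> rcases h2 with h2 | ⟨e2, l2⟩
  · exact Or.inl (lt_trans h1 h2)
  · exact Or.inl (by rw [← e2]; exact h1)
  · exact Or.inl (by rw [e1]; exact h2)
  · exact Or.inr ⟨e1.trans e2, lt_trans l1 l2⟩

lemma prec_irrefl (i : Fin n) : ¬ prec a i i := by
  rintro (h | ⟨-, h⟩) <;> exact absurd h (lt_irrefl _)

lemma prec_total {i j : Fin n} (h : i ≠ j) : prec a i j ∨ prec a j i := by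
  rcases lt_trichotomy (a i) (a j) with h' | h' | h'
  · exact Or.inl (Or.inl h')
  · rcases h.lt_or_gt with hij | hij
    · exact Or.inl (Or.inr ⟨h', hij⟩)
    · exact Or.inr (Or.inr ⟨h'.symm, hij⟩)
  · exact Or.inr (Or.inl h')

def ovl (i j : Fin n) : Prop := ∃ x : ℝ, memI a b i x ∧ memI a b j x

lemma ovl_symm {i j : Fin n} (h : ovl a b i j) : ovl a b j i := by
  obtain ⟨x, h1, h2⟩ := h; exact ⟨x, h2, h1⟩

lemma prec_card_lt {i j : Fin n} (h : prec a j i) :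
    (Finset.univ.filter (fun x => prec a x j)).card <
      (Finset.univ.filter (fun x => prec a x i)).card := by
  apply Finset.card_lt_card
  rw [Finset.ssubset_def]
  constructor
  · intro x hx
    simp only [Finset.mem_filter, Finset.mem_univ, true_and] at *
    exact prec_trans a hx h
  · intro hsub
    have hj : j ∈ Finset.univ.filter (fun x => prec a x i) := by
      simp only [Finset.mem_filter, Finset.mem_univ, true_and]; exact h
    have := hsub hj
    simp only [Finset.mem_filter, Finset.mem_univ, true_and] at this
    exact prec_irrefl a j this

noncomputable def lvl (F : Finset (Fin n)) (i : Fin n) : ℕ :=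
  Nat.find (p := fun L => 0 < L ∧ L ∉
      (Finset.univ.filter (fun j => prec a j i ∧ j ∈ F ∧ ovl a b j i)).attach.image
        (fun j => lvl F j.1))
    ⟨((Finset.univ.filter (fun j => prec a j i ∧ j ∈ F ∧ ovl a b j i)).attach.image
        (fun j => lvl F j.1)).sup id + 1,
      Nat.succ_pos _, by
        intro hmem
        have h := Finset.le_sup (f := id) hmem
        simp only [id] at h
        omega⟩
termination_by (Finset.univ.filter (fun j => prec a j i)).card
decreasing_by
  all_goals
    exact prec_card_lt a (Finset.mem_filter.mp j.2).2.1

lemma lvl_spec (F : Finset (Fin n)) (i : Fin n) :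
    0 < lvl a b F i ∧ lvl a b F i ∉
      (Finset.univ.filter (fun j => prec a j i ∧ j ∈ F ∧ ovl a b j i)).attach.image
        (fun j => lvl a b F j.1) := by
  rw [lvl.eq_def]
  exact Nat.find_spec (p := fun L => 0 < L ∧ L ∉
      (Finset.univ.filter (fun j => prec a j i ∧ j ∈ F ∧ ovl a b j i)).attach.image
        (fun j => lvl a b F j.1)) _

lemma lvl_pos (F : Finset (Fin n)) (i : Fin n) : 0 < lvl a b F i := (lvl_spec a b F i).1

lemma lvl_ne (F : Finset (Fin n)) {i j : Fin n} (hp : prec a j i) (hj : j ∈ F)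
    (ho : ovl a b j i) : lvl a b F j ≠ lvl a b F i := by
  intro heq
  apply (lvl_spec a b F i).2
  exact Finset.mem_image.mpr
    ⟨⟨j, Finset.mem_filter.mpr ⟨Finset.mem_univ _, hp, hj, ho⟩⟩, Finset.mem_attach _ _, heq⟩

lemma lvl_min (F : Finset (Fin n)) (i : Fin n) {Lv : ℕ} (h1 : 0 < Lv)
    (h2 : Lv < lvl a b F i) :
    ∃ j, prec a j i ∧ j ∈ F ∧ ovl a b j i ∧ lvl a b F j = Lv := by
  by_contra hcon
  push_neg at hcon
  have hnot : Lv ∉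
      (Finset.univ.filter (fun j => prec a j i ∧ j ∈ F ∧ ovl a b j i)).attach.image
        (fun j => lvl a b F j.1) := by
    intro hmem
    obtain ⟨⟨j, hjmem⟩, -, hL⟩ := Finset.mem_image.mp hmem
    have hj := Finset.mem_filter.mp hjmem
    exact hcon j hj.2.1 hj.2.2.1 hj.2.2.2 hL
  have hle : lvl a b F i ≤ Lv := by
    rw [lvl.eq_def]
    exact Nat.find_le ⟨h1, hnot⟩
  omega

theorem lineThm (m k : ℕ) (hk : 2 ≤ k) (hkm : k ≤ m) (hmk : m + 2 ≤ 2 * k)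
    (F : Finset (Fin n)) (hF : m ≤ F.card)
    (hAg : ∀ T ⊆ F, T.card = m → ∃ K, K ⊆ T ∧ K.card = k ∧ ∃ x : ℝ, ∀ i ∈ K, memI a b i x) :
    ∃ x : ℝ, F.card + k ≤ (F.filter (fun i => memI a b i x)).card + m := by
  classical
  have hFne : F.Nonempty := Finset.card_pos.mp (by omega)
  obtain ⟨istar, histar, hsup⟩ := Finset.exists_mem_eq_sup F hFne (fun i => lvl a b F i)
  set t := F.sup (fun i => lvl a b F i) with ht
  have hlvl_pos : ∀ i ∈ F, 1 ≤ lvl a b F i := fun i _ => lvl_pos a b F i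
  have hlvl_le : ∀ i ∈ F, lvl a b F i ≤ t := fun i hi => Finset.le_sup hi
  have hdisj : ∀ i ∈ F, ∀ j ∈ F, i ≠ j → lvl a b F i = lvl a b F j → ¬ ovl a b i j := by
    intro i hi j hj hne heq hovl
    rcases prec_total a hne with hp | hp
    · exact lvl_ne a b F hp hi hovl heq
    · exact lvl_ne a b F hp hj (ovl_symm a b hovl) heq.symm
  have hinj : ∀ (K : Finset (Fin n)), K ⊆ F → (∃ x : ℝ, ∀ i ∈ K, memI a b i x) →
      Set.InjOn (fun i => lvl a b F i) ↑K := by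
    rintro K hKF ⟨x, hx⟩ i hi j hj heq
    by_contra hne
    exact hdisj i (hKF hi) j (hKF hj) hne heq ⟨x, hx i hi, hx j hj⟩
  have htk : k ≤ t := by
    obtain ⟨T, hTF, hTc⟩ := Finset.exists_subset_card_eq (s := F) (n := m) hF
    obtain ⟨K, hKT, hKc, x, hx⟩ := hAg T hTF hTc
    have hKF : K ⊆ F := hKT.trans hTF
    have hc : K.card ≤ (Finset.Icc 1 t).card := by
      apply Finset.card_le_card_of_injOn (fun i => lvl a b F i)
      · intro i hi
        rw [Finset.mem_coe, Finset.mem_Icc]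
        exact ⟨hlvl_pos i (hKF hi), hlvl_le i (hKF hi)⟩
      · exact hinj K hKF ⟨x, hx⟩
    rw [hKc, Nat.card_Icc] at hc
    omega
  have hlev_ne : ∀ Lv, 1 ≤ Lv → Lv ≤ t → ∃ j ∈ F, lvl a b F j = Lv := by
    intro Lv h1 h2
    rcases eq_or_lt_of_le h2 with heq | hlt
    · exact ⟨istar, histar, by omega⟩
    · have hlt' : Lv < lvl a b F istar := by omega
      obtain ⟨j, _, hjF, _, hlj⟩ := lvl_min a b F istar h1 hlt'
      exact ⟨j, hjF, hlj⟩
  have h2t : 2 ≤ t := le_trans hk htk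
  have hIstar : a istar ≤ b istar := by
    have h1 : (1:ℕ) < lvl a b F istar := by omega
    obtain ⟨j, _, _, hovl, _⟩ := lvl_min a b F istar one_pos h1
    obtain ⟨x, _, hxi⟩ := hovl
    exact le_trans hxi.1 hxi.2
  set x0 := a istar with hx0
  have hcov : t ≤ (F.filter (fun i => memI a b i x0)).card := by
    have hmap : ∀ Lv ∈ Finset.Icc 1 t, ∃ j, (j ∈ F ∧ memI a b j x0) ∧ lvl a b F j = Lv := by
      intro Lv hLv
      rw [Finset.mem_Icc] at hLv
      rcases eq_or_lt_of_le hLv.2 with heq | hlt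
      · exact ⟨istar, ⟨histar, le_refl _, hIstar⟩, by omega⟩
      · have hlt' : Lv < lvl a b F istar := by omega
        obtain ⟨j, hp, hjF, hovl, hlj⟩ := lvl_min a b F istar hLv.1 hlt'
        have hpa : a j ≤ a istar := by
          rcases hp with h | ⟨h, -⟩
          · exact le_of_lt h
          · exact le_of_eq h
        obtain ⟨xx, hxj, hxi⟩ := hovl
        exact ⟨j, ⟨hjF, hpa, le_trans hxi.1 hxj.2⟩, hlj⟩
    choose jf hjf1 hjf2 using hmap
    calc t = (Finset.Icc 1 t).card := by rw [Nat.card_Icc]; omega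
    _ = ((Finset.Icc 1 t).attach.image (fun Lv => jf Lv.1 Lv.2)).card := by
        rw [Finset.card_image_of_injOn, Finset.card_attach]
        intro L1 h1 L2 h2 heq
        have e1 := hjf2 L1.1 L1.2
        have e2 := hjf2 L2.1 L2.2
        simp only at heq
        rw [heq] at e1
        exact Subtype.ext (by omega)
    _ ≤ _ := by
        apply Finset.card_le_card
        intro j hj
        obtain ⟨Lv, -, rfl⟩ := Finset.mem_image.mp hj
        have hh := hjf1 Lv.1 Lv.2
        exact Finset.mem_filter.mpr ⟨hh.1, hh.2⟩
  set Lev : ℕ → Finset (Fin n) := fun Lv => F.filter (fun i => lvl a b F i = Lv) with hLev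
  set multi := (Finset.Icc 1 t).filter (fun Lv => 2 ≤ (Lev Lv).card) with hmulti
  have hmub : multi.card + k ≤ m := by
    by_contra hcon
    push_neg at hcon
    set w := m + 1 - k with hw
    obtain ⟨M2, hM2sub, hM2c⟩ := Finset.exists_subset_card_eq (s := multi) (n := w) (by omega)
    have hpairs : ∀ Lv ∈ M2, ∃ p : Fin n × Fin n,
        p.1 ∈ Lev Lv ∧ p.2 ∈ Lev Lv ∧ p.1 ≠ p.2 := by
      intro Lv hLv
      have h2 : 1 < (Lev Lv).card := by
        have := (Finset.mem_filter.mp (hM2sub hLv)).2; omega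
      obtain ⟨x1, hx1, x2, hx2, hne⟩ := Finset.one_lt_card.mp h2
      exact ⟨(x1, x2), hx1, hx2, hne⟩
    choose pr hpr1 hpr2 hpr3 using hpairs
    set W0 := M2.attach.biUnion
      (fun Lv => {(pr Lv.1 Lv.2).1, (pr Lv.1 Lv.2).2}) with hW0
    have hmemLev : ∀ (x : Fin n) (Lv : ℕ), x ∈ Lev Lv → x ∈ F ∧ lvl a b F x = Lv := by
      intro x Lv hx
      exact Finset.mem_filter.mp hx
    have hlvlW0 : ∀ x ∈ W0, ∃ Lv ∈ M2, lvl a b F x = Lv := by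
      intro x hx
      obtain ⟨Lv, -, hxin⟩ := Finset.mem_biUnion.mp hx
      refine ⟨Lv.1, Lv.2, ?_⟩
      rcases Finset.mem_insert.mp hxin with rfl | hxin
      · exact (hmemLev _ _ (hpr1 Lv.1 Lv.2)).2
      · rw [Finset.mem_singleton.mp hxin]
        exact (hmemLev _ _ (hpr2 Lv.1 Lv.2)).2
    have hW0F : W0 ⊆ F := by
      intro x hx
      obtain ⟨Lv, -, hxin⟩ := Finset.mem_biUnion.mp hx
      rcases Finset.mem_insert.mp hxin with rfl | hxin
      · exact (hmemLev _ _ (hpr1 Lv.1 Lv.2)).1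
      · rw [Finset.mem_singleton.mp hxin]
        exact (hmemLev _ _ (hpr2 Lv.1 Lv.2)).1
    have hW0card : W0.card = 2 * w := by
      rw [hW0, Finset.card_biUnion]
      · have hsum : ∀ Lv ∈ M2.attach,
            ({(pr Lv.1 Lv.2).1, (pr Lv.1 Lv.2).2} : Finset (Fin n)).card = 2 :=
          fun Lv _ => Finset.card_pair (hpr3 Lv.1 Lv.2)
        rw [Finset.sum_congr rfl hsum, Finset.sum_const, Finset.card_attach, hM2c,
          smul_eq_mul]
        ring
      · intro L1 _ L2 _ hne
        rw [Function.onFun, Finset.disjoint_left]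
        intro x hx1 hx2
        have e1 : lvl a b F x = L1.1 := by
          rcases Finset.mem_insert.mp hx1 with rfl | hx1
          · exact (hmemLev _ _ (hpr1 L1.1 L1.2)).2
          · rw [Finset.mem_singleton.mp hx1]; exact (hmemLev _ _ (hpr2 L1.1 L1.2)).2
        have e2 : lvl a b F x = L2.1 := by
          rcases Finset.mem_insert.mp hx2 with rfl | hx2
          · exact (hmemLev _ _ (hpr1 L2.1 L2.2)).2
          · rw [Finset.mem_singleton.mp hx2]; exact (hmemLev _ _ (hpr2 L2.1 L2.2)).2
        exact hne (Subtype.ext (by omega))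
    have h2wm : 2 * w ≤ m := by omega
    obtain ⟨W, hW0W, hWF, hWc⟩ := Finset.exists_subsuperset_card_eq (n := m - 2*w + W0.card)
      hW0F (by omega) (by omega)
    have hWcard : W.card = m := by omega
    obtain ⟨K, hKW, hKc, x, hx⟩ := hAg W hWF hWcard
    have hKF : K ⊆ F := hKW.trans hWF
    have h1 : (K ∩ W0).card ≤ w := by
      have hc : (K ∩ W0).card ≤ M2.card := by
        apply Finset.card_le_card_of_injOn (fun i => lvl a b F i)
        · intro i hi
          obtain ⟨Lv, hLvM, hLveq⟩ := hlvlW0 i (Finset.mem_inter.mp hi).2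
          simp only [Finset.mem_coe]; rw [hLveq]; exact hLvM
        · exact Set.InjOn.mono (by intro i hi; simpa using
            (Finset.mem_inter.mp (by simpa using hi)).1) (hinj K hKF ⟨x, hx⟩)
      omega
    have h2 : (K \ W0).card ≤ m - 2*w := by
      have hsub : K \ W0 ⊆ W \ W0 := Finset.sdiff_subset_sdiff hKW (Finset.Subset.refl _)
      have hcc := Finset.card_le_card hsub
      rw [Finset.card_sdiff_of_subset hW0W] at hcc
      omega
    have h3 := Finset.card_inter_add_card_sdiff K W0
    omega
  have hmsub : multi ⊆ Finset.Icc 1 t := Finset.filter_subset _ _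
  obtain ⟨chosen, hmc, hcI, hccard⟩ := Finset.exists_subsuperset_card_eq (n := (k-1) - multi.card + multi.card)
      hmsub (by omega) (by rw [Nat.card_Icc]; omega)
  have hchosencard : chosen.card = k - 1 := by omega
  set S := F.filter (fun i => lvl a b F i ∈ chosen) with hS
  have hSb : S.card + 1 ≤ m := by
    by_contra hcon
    push_neg at hcon
    obtain ⟨T, hTS, hTc⟩ := Finset.exists_subset_card_eq (s := S) (n := m) (by omega)
    have hTF : T ⊆ F := hTS.trans (Finset.filter_subset _ _)
    obtain ⟨K, hKT, hKc, x, hx⟩ := hAg T hTF hTc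
    have hKF : K ⊆ F := hKT.trans hTF
    have hcc : K.card ≤ chosen.card := by
      apply Finset.card_le_card_of_injOn (fun i => lvl a b F i)
      · intro i hi
        have hiS := hTS (hKT hi)
        exact (Finset.mem_filter.mp hiS).2
      · exact hinj K hKF ⟨x, hx⟩
    omega
  have hcount : F.card + (k-1) = S.card + t := by
    have hsplit := Finset.card_filter_add_card_filter_not
      (s := F) (p := fun i => lvl a b F i ∈ chosen)
    rw [← hS] at hsplit
    have hcomp : (F.filter (fun i => ¬ lvl a b F i ∈ chosen)).card
        = ((Finset.Icc 1 t) \ chosen).card := by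
      apply Finset.card_bij (fun i _ => lvl a b F i)
      · intro i hi
        obtain ⟨hiF, hni⟩ := Finset.mem_filter.mp hi
        exact Finset.mem_sdiff.mpr ⟨Finset.mem_Icc.mpr ⟨hlvl_pos i hiF, hlvl_le i hiF⟩, hni⟩
      · intro i hi j hj heq
        by_contra hne
        obtain ⟨hiF, hni⟩ := Finset.mem_filter.mp hi
        obtain ⟨hjF, hnj⟩ := Finset.mem_filter.mp hj
        have hLvI : lvl a b F i ∈ Finset.Icc 1 t :=
          Finset.mem_Icc.mpr ⟨hlvl_pos i hiF, hlvl_le i hiF⟩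
        have h2c : 2 ≤ (Lev (lvl a b F i)).card := by
          apply Finset.one_lt_card.mpr
          exact ⟨i, Finset.mem_filter.mpr ⟨hiF, rfl⟩, j,
            Finset.mem_filter.mpr ⟨hjF, heq.symm⟩, hne⟩
        have hmul : lvl a b F i ∈ multi := Finset.mem_filter.mpr ⟨hLvI, h2c⟩
        exact hni (hmc hmul)
      · intro Lv hLv
        obtain ⟨hLvI, hLvn⟩ := Finset.mem_sdiff.mp hLv
        rw [Finset.mem_Icc] at hLvI
        obtain ⟨j, hjF, hj⟩ := hlev_ne Lv hLvI.1 hLvI.2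
        exact ⟨j, Finset.mem_filter.mpr ⟨hjF, by rw [hj]; exact hLvn⟩, hj⟩
    have hsd : ((Finset.Icc 1 t) \ chosen).card = t - (k-1) := by
      rw [Finset.card_sdiff_of_subset hcI, Nat.card_Icc]
      omega
    omega
  exact ⟨x0, by omega⟩

end Line

end AgreeCyl

namespace AgreeCyl

open Finset

variable {n : ℕ}

section Circle

variable (c d : Fin n → ℝ)

theorem circleThm (m k : ℕ) (hk : 2 ≤ k) (hkm : k ≤ m) (hmk : m + 2 ≤ 2 * k) :
    ∀ q : ℕ, ∀ F : Finset (Fin n), F.card = q → m ≤ q →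
      (∀ T ⊆ F, T.card = m → ∃ K, K ⊆ T ∧ K.card = k ∧ ∃ y : ℝ, ∀ i ∈ K, memC c d i y) →
      ∃ y : ℝ, q + 1 ≤ 2 * covC c d F y := by
  intro q
  induction q using Nat.strong_induction_on with
  | _ q IH =>
  intro F hFq hmq hAg
  have hbase : ∃ y : ℝ, k ≤ covC c d F y := by
    obtain ⟨T, hTF, hTc⟩ := Finset.exists_subset_card_eq (s := F) (n := m) (by omega)
    obtain ⟨K, hKT, hKc, y, hy⟩ := hAg T hTF hTc
    refine ⟨y, ?_⟩
    have : K ⊆ F.filter (fun i => memC c d i y) :=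
      fun i hi => Finset.mem_filter.mpr ⟨hTF (hKT hi), hy i hi⟩
    have := Finset.card_le_card this
    unfold covC
    omega
  by_cases hq2k : q + 1 ≤ 2 * k
  · obtain ⟨y, hy⟩ := hbase
    exact ⟨y, by omega⟩
  push_neg at hq2k
  by_contra hfail
  push_neg at hfail
  have hcovle : ∀ y : ℝ, 2 * covC c d F y ≤ q := by
    intro y; have := hfail y; omega
  have hFne : F.Nonempty := Finset.card_pos.mp (by omega)
  obtain ⟨i0, hi0⟩ := hFne
  -- q is even
  obtain ⟨c0, hc0⟩ : ∃ c0, q = 2 * c0 := by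
    have hcard : (F.erase i0).card = q - 1 := by
      rw [Finset.card_erase_of_mem hi0, hFq]
    obtain ⟨y, hy⟩ := IH (q-1) (by omega) (F.erase i0) hcard (by omega)
      (fun T hT hTc => hAg T (hT.trans (Finset.erase_subset _ _)) hTc)
    have hm1 := covC_mono c d (Finset.erase_subset i0 F) y
    have hle := hcovle y
    exact ⟨covC c d F y, by omega⟩
  -- pair property
  have hpair : ∀ u v : Fin n, ∃ y : ℝ, u ∈ F → v ∈ F → u ≠ v →
      (¬ memC c d u y ∧ ¬ memC c d v y ∧ 2 * covC c d F y = q) := by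
    intro u v
    by_cases hc : u ∈ F ∧ v ∈ F ∧ u ≠ v
    · obtain ⟨hu, hv, huv⟩ := hc
      set F2 := (F.erase u).erase v with hF2
      have hvF : v ∈ F.erase u := Finset.mem_erase.mpr ⟨Ne.symm huv, hv⟩
      have hF2c : F2.card = q - 2 := by
        rw [hF2, Finset.card_erase_of_mem hvF, Finset.card_erase_of_mem hu, hFq]
        omega
      have hsub2 : F2 ⊆ F := (Finset.erase_subset _ _).trans (Finset.erase_subset _ _)
      obtain ⟨y, hy⟩ := IH (q-2) (by omega) F2 hF2c (by omega)
        (fun T hT hTc => hAg T (hT.trans hsub2) hTc)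
      have hm1 : covC c d F2 y ≤ covC c d F y := covC_mono c d hsub2 y
      have hle : 2 * covC c d F y ≤ q := hcovle y
      have heq2 : 2 * covC c d F2 y = q := by omega
      have heqF : 2 * covC c d F y = q := by omega
      have hnmem : ∀ w : Fin n, w ∈ F → w ∉ F2 → ¬ memC c d w y := by
        intro w hwF hwF2 hmem
        have hins : insert w (F2.filter (fun i => memC c d i y)) ⊆
            F.filter (fun i => memC c d i y) := by
          intro z hz
          rcases Finset.mem_insert.mp hz with rfl | hz
          · exact Finset.mem_filter.mpr ⟨hwF, hmem⟩
          · exact Finset.filter_subset_filter _ hsub2 hz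
        have hcard := Finset.card_le_card hins
        rw [Finset.card_insert_of_notMem (fun hcc => hwF2 (Finset.mem_filter.mp hcc).1)]
          at hcard
        unfold covC at heq2 heqF
        omega
      refine ⟨y, fun _ _ _ => ⟨?_, ?_, heqF⟩⟩
      · exact hnmem u hu (by simp [hF2])
      · exact hnmem v hv (by simp [hF2])
    · exact ⟨0, fun h1 h2 h3 => absurd ⟨h1, h2, h3⟩ hc⟩
  choose pk hpk using hpair
  set Y : Finset ℝ := ((F ×ˢ F).filter (fun p => p.1 ≠ p.2)).image
    (fun p => pk p.1 p.2) with hY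
  have hYprop : ∀ y ∈ Y, 2 * covC c d F y = q := by
    intro y hy
    obtain ⟨p, hp, rfl⟩ := Finset.mem_image.mp hy
    obtain ⟨hpF, hne⟩ := Finset.mem_filter.mp hp
    obtain ⟨h1, h2⟩ := Finset.mem_product.mp hpF
    exact (hpk p.1 p.2 h1 h2 hne).2.2
  set comp : Fin n → Finset ℝ := fun u => Y.filter (fun y => ¬ memC c d u y) with hcomp
  have hcompsub : ∀ u, comp u ⊆ Y := fun u => Finset.filter_subset _ _
  have hcompne : ∀ u ∈ F, (comp u).Nonempty := by
    intro u hu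
    obtain ⟨x1, hx1, x2, hx2, hne⟩ := Finset.one_lt_card.mp (show 1 < F.card by omega)
    obtain ⟨v, hvF, hvu⟩ : ∃ v ∈ F, u ≠ v := by
      rcases eq_or_ne u x1 with rfl | h
      · exact ⟨x2, hx2, hne⟩
      · exact ⟨x1, hx1, h⟩
    refine ⟨pk u v, Finset.mem_filter.mpr ⟨?_, (hpk u v hu hvF hvu).1⟩⟩
    exact Finset.mem_image.mpr
      ⟨(u, v), Finset.mem_filter.mpr ⟨Finset.mem_product.mpr ⟨hu, hvF⟩, hvu⟩, rfl⟩
  obtain ⟨us, husF, hmin⟩ := F.exists_min_image (fun u => (comp u).card) ⟨i0, hi0⟩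
  set B := comp us with hB
  have hBne : B.Nonempty := hcompne us husF
  have hBY : B ⊆ Y := hcompsub us
  by_cases hBeq : Y.card ≤ B.card
  · obtain ⟨yb, hyb⟩ := hBne
    have hy0Y : yb ∈ Y := hBY hyb
    have hally : ∀ u ∈ F, ¬ memC c d u yb := by
      intro u hu
      have h1 : comp u = Y :=
        Finset.eq_of_subset_of_card_le (hcompsub u) (le_trans hBeq (hmin u hu))
      have : yb ∈ comp u := h1.symm ▸ hy0Y
      exact (Finset.mem_filter.mp this).2
    have hzero : covC c d F yb = 0 := by
      unfold covC
      rw [Finset.card_eq_zero, Finset.filter_eq_empty_iff]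
      exact fun i hi => hally i hi
    have := hYprop yb hy0Y
    omega
  push_neg at hBeq
  obtain ⟨y0, hy0Y, hy0B⟩ : ∃ y0 ∈ Y, y0 ∉ B := by
    by_contra hcc
    push_neg at hcc
    have := Finset.card_le_card hcc
    omega
  have hy0mem : memC c d us y0 := by
    by_contra hcc
    exact hy0B (Finset.mem_filter.mpr ⟨hy0Y, hcc⟩)
  have hcsds : c us ≤ d us := by
    obtain ⟨g, h1, h2⟩ := hy0mem; linarith
  have hnotfull : d us < c us + 1 := by
    by_contra hcc
    push_neg at hcc
    obtain ⟨yb, hyb⟩ := hBne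
    have : memC c d us yb := by
      refine ⟨⌈c us - yb⌉, ?_, ?_⟩
      · have := Int.le_ceil (c us - yb); linarith
      · have := Int.ceil_lt_add_one (c us - yb); linarith
    exact (Finset.mem_filter.mp hyb).2 this
  have hrepmem : ∀ z : ℝ, memC c d us z ↔ rep (c us) z ≤ d us := by
    intro z
    constructor
    · rintro ⟨g, h1, h2⟩
      have heq : rep (c us) z = z + (g:ℝ) := rep_eq_of_mem (c us) h1 (by linarith) g rfl
      rw [heq]; exact h2
    · intro hle
      obtain ⟨g, hg⟩ := rep_shift (c us) z
      refine ⟨g, ?_, ?_⟩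
      · rw [← hg]; exact rep_ge (c us) z
      · rw [← hg]; exact hle
  set Bs := B.image (rep (c us)) with hBs
  have hBsne : Bs.Nonempty := hBne.image _
  have hBsfact : ∀ s ∈ Bs, d us < s ∧ s < c us + 1 ∧ 2 * covC c d F s = q := by
    intro s hs
    obtain ⟨z, hzB, rfl⟩ := Finset.mem_image.mp hs
    have h1 : ¬ memC c d us z := (Finset.mem_filter.mp hzB).2
    have h2 : d us < rep (c us) z := by
      by_contra hcc; push_neg at hcc
      exact h1 ((hrepmem z).mpr hcc)
    refine ⟨h2, rep_lt (c us) z, ?_⟩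
    rw [covC_rep]
    exact hYprop z (hBY hzB)
  set b1 := Bs.min' hBsne with hb1
  set b2 := Bs.max' hBsne with hb2
  have hb1Bs : b1 ∈ Bs := Bs.min'_mem hBsne
  have hb2Bs : b2 ∈ Bs := Bs.max'_mem hBsne
  have husb : ∀ s ∈ Bs, ¬ memC c d us s := by
    intro s hs hmem
    have h := (hrepmem s).mp hmem
    obtain ⟨hds, hsc, -⟩ := hBsfact s hs
    have hreps : rep (c us) s = s := rep_eq_of_mem (c us) (by linarith) hsc 0 (by push_cast; ring)
    rw [hreps] at h
    linarith
  have hmain : ∀ v ∈ F, ¬ memC c d v b1 ∨ ¬ memC c d v b2 := by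
    intro v hv
    by_contra hcon
    push_neg at hcon
    obtain ⟨hvb1, hvb2⟩ := hcon
    have hvus : v ≠ us := by
      rintro rfl
      exact husb b1 hb1Bs hvb1
    have hpk' := hpk v us hv husF hvus
    set y' := pk v us with hy'
    have hy'Y : y' ∈ Y := Finset.mem_image.mpr
      ⟨(v, us), Finset.mem_filter.mpr ⟨Finset.mem_product.mpr ⟨hv, husF⟩, hvus⟩, rfl⟩
    have hy'B : y' ∈ B := Finset.mem_filter.mpr ⟨hy'Y, hpk'.2.1⟩
    set r := rep (c us) y' with hr
    have hrBs : r ∈ Bs := Finset.mem_image.mpr ⟨y', hy'B, rfl⟩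
    have hvr : ¬ memC c d v r := by
      rw [hr, memC_rep]
      exact hpk'.1
    have hb1r : b1 ≤ r := Bs.min'_le r hrBs
    have hrb2 : r ≤ b2 := Bs.le_max' r hrBs
    have hb1r' : b1 < r := lt_of_le_of_ne hb1r (fun e => hvr (e ▸ hvb1))
    have hrb2' : r < b2 := lt_of_le_of_ne hrb2 (fun e => hvr (e.symm ▸ hvb2))
    obtain ⟨g1, hg1a, hg1b⟩ := hvb1
    obtain ⟨g2, hg2a, hg2b⟩ := hvb2
    have hrg2 : r + (g2:ℝ) < c v := by
      by_contra hcc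
      push_neg at hcc
      exact hvr ⟨g2, hcc, by linarith⟩
    have hg12 : (g2:ℝ) + 1 ≤ (g1:ℝ) := by
      have hlt : (g2:ℝ) < (g1:ℝ) := by linarith
      have : g2 < g1 := by exact_mod_cast hlt
      exact_mod_cast this
    obtain ⟨zb, hzbB, hzb⟩ := Finset.mem_image.mp hb1Bs
    have hsub : comp v ⊆ B.erase zb := by
      intro z hz
      obtain ⟨hzY, hzv⟩ := Finset.mem_filter.mp hz
      obtain ⟨G, hG⟩ := rep_shift (c us) z
      have hζlo : c us ≤ rep (c us) z := rep_ge (c us) z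
      have hζhi : rep (c us) z < c us + 1 := rep_lt (c us) z
      obtain ⟨hdb1, hb1w, -⟩ := hBsfact b1 hb1Bs
      obtain ⟨hdb2, hb2w, -⟩ := hBsfact b2 hb2Bs
      have hζb1 : b1 < rep (c us) z := by
        by_contra hcc
        push_neg at hcc
        apply hzv
        refine ⟨G + 1 + g2, ?_, ?_⟩
        · push_cast
          have h1 : b2 ≤ rep (c us) z + 1 := by linarith
          have h2 : z + ((G:ℝ) + 1 + (g2:ℝ)) = (rep (c us) z + 1) + (g2:ℝ) := by
            rw [hG]; ring
          linarith [h2]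
        · push_cast
          have h2 : z + ((G:ℝ) + 1 + (g2:ℝ)) = (rep (c us) z + 1) + (g2:ℝ) := by
            rw [hG]; ring
          have h3 : rep (c us) z + 1 + (g2:ℝ) ≤ b1 + (g1:ℝ) := by linarith
          linarith
      have hζb2 : rep (c us) z < b2 := by
        by_contra hcc
        push_neg at hcc
        apply hzv
        refine ⟨G + g2, ?_, ?_⟩
        · push_cast
          have h2 : z + ((G:ℝ) + (g2:ℝ)) = rep (c us) z + (g2:ℝ) := by rw [hG]; ring
          linarith
        · push_cast
          have h2 : z + ((G:ℝ) + (g2:ℝ)) = rep (c us) z + (g2:ℝ) := by rw [hG]; ring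
          have h3 : rep (c us) z + (g2:ℝ) < (c us + 1) + (g2:ℝ) := by linarith
          have h4 : (c us + 1) + (g2:ℝ) ≤ b1 + 1 + (g2:ℝ) := by linarith
          have h5 : b1 + 1 + (g2:ℝ) ≤ b1 + (g1:ℝ) := by linarith
          linarith
      have hzus : ¬ memC c d us z := by
        rw [hrepmem]
        push_neg
        linarith
      have hzB : z ∈ B := Finset.mem_filter.mpr ⟨hzY, hzus⟩
      have hzzb : z ≠ zb := by
        intro e
        rw [e, hzb] at hζb1
        exact lt_irrefl _ hζb1
      exact Finset.mem_erase.mpr ⟨hzzb, hzB⟩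
    have hlt : (comp v).card < B.card := by
      have h1 := Finset.card_le_card hsub
      have h2 : (B.erase zb).card < B.card := Finset.card_erase_lt_of_mem hzbB
      omega
    have := hmin v hv
    omega
  set A1 := F.filter (fun v => ¬ memC c d v b1) with hA1
  set A2 := F.filter (fun v => ¬ memC c d v b2) with hA2
  have hcover : F ⊆ A1 ∪ A2 := by
    intro v hv
    rcases hmain v hv with hcc | hcc
    · exact Finset.mem_union_left _ (Finset.mem_filter.mpr ⟨hv, hcc⟩)
    · exact Finset.mem_union_right _ (Finset.mem_filter.mpr ⟨hv, hcc⟩)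
  have hstar : us ∈ A1 ∩ A2 := Finset.mem_inter.mpr
    ⟨Finset.mem_filter.mpr ⟨husF, husb b1 hb1Bs⟩,
     Finset.mem_filter.mpr ⟨husF, husb b2 hb2Bs⟩⟩
  have hsum : q + 1 ≤ A1.card + A2.card := by
    have h1 : q ≤ (A1 ∪ A2).card := by
      rw [← hFq]; exact Finset.card_le_card hcover
    have h2 : 1 ≤ (A1 ∩ A2).card := Finset.card_pos.mpr ⟨us, hstar⟩
    have h3 := Finset.card_union_add_card_inter A1 A2
    omega
  have hsplit1 : covC c d F b1 + A1.card = q := by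
    rw [← hFq, hA1]
    unfold covC
    exact Finset.card_filter_add_card_filter_not (p := fun v => memC c d v b1)
  have hsplit2 : covC c d F b2 + A2.card = q := by
    rw [← hFq, hA2]
    unfold covC
    exact Finset.card_filter_add_card_filter_not (p := fun v => memC c d v b2)
  have hcb1 : 2 * covC c d F b1 = q := (hBsfact b1 hb1Bs).2.2
  have hcb2 : 2 * covC c d F b2 = q := (hBsfact b2 hb2Bs).2.2
  omega

end Circle

end AgreeCyl

/-- Main cylindrical theorem: if `k ≤ m ≤ 2k-2` and among any `m` of `n ≥ m` approval sets
on the cylinder (interval × arc) some `k` share a point, then some point of the cylinder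
lies in at least `(n - m + k + 1)/2` of the sets. -/
theorem agreeable_cylindrical (k m n : ℕ) (hk : 2 ≤ k) (hm : 2 ≤ m) (hkm : k ≤ m)
    (hm2k : m ≤ 2 * k - 2) (hmn : m ≤ n) (a b c d : Fin n → ℝ)
    (h : ∀ T : Finset (Fin n), T.card = m → ∃ T' ⊆ T, T'.card = k ∧
      (⋂ i ∈ T', Set.Icc (a i) (b i) ×ˢ Arc (c i) (d i)).Nonempty) :
    ∃ z : ℝ × AddCircle (1 : ℝ), n - m + k + 1 ≤
      2 * (Finset.univ.filter fun i : Fin n =>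
        z ∈ Set.Icc (a i) (b i) ×ˢ Arc (c i) (d i)).card := by
    classical
  have hmk : m + 2 ≤ 2 * k := by omega
  have hAgr : ∀ T : Finset (Fin n), T.card = m → ∃ K, K ⊆ T ∧ K.card = k ∧
      ∃ x y : ℝ, ∀ i ∈ K, AgreeCyl.memI a b i x ∧ AgreeCyl.memC c d i y := by
    intro T hT
    obtain ⟨K, hKT, hKc, hne⟩ := h T hT
    obtain ⟨z, hz⟩ := hne
    obtain ⟨y, hy⟩ : ∃ y : ℝ, ((y : ℝ) : AddCircle (1:ℝ)) = z.2 :=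
      Quotient.exists_rep z.2
    refine ⟨K, hKT, hKc, z.1, y, fun i hi => ?_⟩
    have hzi : z ∈ Set.Icc (a i) (b i) ×ˢ Arc (c i) (d i) := by
      have hmem := Set.mem_iInter₂.mp hz i hi
      exact hmem
    obtain ⟨hz1, hz2⟩ := Set.mem_prod.mp hzi
    constructor
    · exact ⟨hz1.1, hz1.2⟩
    · rw [← hy] at hz2
      exact (AgreeCyl.mem_arc _ _ _).mp hz2
  by_cases hsmall : n + 1 ≤ m + k
  · obtain ⟨T, hTu, hTc⟩ := Finset.exists_subset_card_eq (s := (Finset.univ : Finset (Fin n))) (n := m)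
      (by simpa using hmn)
    obtain ⟨K, hKT, hKc, x, y, hxy⟩ := hAgr T hTc
    refine ⟨(x, ((y : ℝ) : AddCircle (1:ℝ))), ?_⟩
    have hKsub : K ⊆ Finset.univ.filter (fun i : Fin n =>
        (x, ((y : ℝ) : AddCircle (1:ℝ))) ∈ Set.Icc (a i) (b i) ×ˢ Arc (c i) (d i)) := by
      intro i hi
      refine Finset.mem_filter.mpr ⟨Finset.mem_univ _, ?_⟩
      obtain ⟨hI, hC⟩ := hxy i hi
      exact Set.mem_prod.mpr ⟨Set.mem_Icc.mpr ⟨hI.1, hI.2⟩, (AgreeCyl.mem_arc _ _ _).mpr hC⟩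
    have := Finset.card_le_card hKsub
    omega
  · push_neg at hsmall
    obtain ⟨x, hx⟩ := AgreeCyl.lineThm a b m k hk hkm hmk Finset.univ
      (by simpa using hmn)
      (fun T _ hTc => by
        obtain ⟨K, h1, h2, x, y, hxy⟩ := hAgr T hTc
        exact ⟨K, h1, h2, x, fun i hi => (hxy i hi).1⟩)
    set P := Finset.univ.filter (fun i => AgreeCyl.memI a b i x) with hP
    have huniv : (Finset.univ : Finset (Fin n)).card = n := by simp
    have hPcard : n + k ≤ P.card + m := by
      rw [hP]; rw [huniv] at hx; exact hx
    have hPm : m ≤ P.card := by omega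
    obtain ⟨y, hy⟩ := AgreeCyl.circleThm c d m k hk hkm hmk P.card P rfl hPm
      (fun T hTP hTc => by
        obtain ⟨K, h1, h2, x', y', hxy⟩ := hAgr T hTc
        exact ⟨K, h1, h2, y', fun i hi => (hxy i hi).2⟩)
    refine ⟨(x, ((y : ℝ) : AddCircle (1:ℝ))), ?_⟩
    have hsub : P.filter (fun i => AgreeCyl.memC c d i y) ⊆
        Finset.univ.filter (fun i : Fin n =>
          (x, ((y : ℝ) : AddCircle (1:ℝ))) ∈ Set.Icc (a i) (b i) ×ˢ Arc (c i) (d i)) := by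
      intro i hi
      obtain ⟨hiP, hiC⟩ := Finset.mem_filter.mp hi
      obtain ⟨-, hiI⟩ := Finset.mem_filter.mp hiP
      exact Finset.mem_filter.mpr ⟨Finset.mem_univ _, Set.mem_prod.mpr
        ⟨Set.mem_Icc.mpr ⟨hiI.1, hiI.2⟩, (AgreeCyl.mem_arc _ _ _).mpr hiC⟩⟩
    have hcard := Finset.card_le_card hsub
    have hyc : P.card + 1 ≤ 2 * (P.filter (fun i => AgreeCyl.memC c d i y)).card := hy
    omega
end

section
/- Let m, k ≥ 2 with k ≤ m ≤ 2k-2, and let C_1, ..., C_n (n ≥ m) be sets of the form J_i × K_i on the torus (ℝ/ℤ)², where J_i and K_i are closed arcs, such that among any m of them, some k share a common point. Then some point of the torus lies in at least (n - m + k + 2)/4 of the sets C_i. -/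
open Classical

attribute [local instance] Classical.propDecidable

namespace AgreeAux

lemma coe_eq_coe {s t : ℝ} :
    ((s : AddCircle (1:ℝ)) = (t : AddCircle (1:ℝ))) ↔ ∃ z : ℤ, t = s + z := by
  rw [QuotientAddGroup.eq]
  constructor
  · intro h
    rw [AddSubgroup.mem_zmultiples_iff] at h
    obtain ⟨z, hz⟩ := h
    rw [zsmul_eq_mul, mul_one] at hz
    exact ⟨z, by linarith⟩
  · rintro ⟨z, hz⟩
    rw [AddSubgroup.mem_zmultiples_iff]
    exact ⟨z, by rw [zsmul_eq_mul, mul_one]; linarith⟩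

lemma mem_arc_of_le {a b t : ℝ} (h1 : a ≤ t) (h2 : t ≤ b) :
    ((t : AddCircle (1:ℝ))) ∈ Arc a b := ⟨t, ⟨h1, h2⟩, rfl⟩

lemma arc_nonempty_le {a b : ℝ} (h : (Arc a b).Nonempty) : a ≤ b := by
  obtain ⟨x, t, ht, _⟩ := h
  exact Set.nonempty_Icc.mp ⟨t, ht⟩

lemma arc_univ {a b : ℝ} (h : a + 1 ≤ b) (y : AddCircle (1:ℝ)) : y ∈ Arc a b := by
  induction y using QuotientAddGroup.induction_on with
  | H r =>
    refine ⟨r - ⌊r - a⌋, ⟨?_, ?_⟩, ?_⟩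
    · have h1 : (⌊r - a⌋ : ℝ) ≤ r - a := Int.floor_le _
      linarith
    · have h1 : r - a < ⌊r - a⌋ + 1 := Int.lt_floor_add_one _
      linarith
    · exact coe_eq_coe.mpr ⟨⌊r - a⌋, by ring⟩

lemma arc_cases {a0 b0 aj bj : ℝ} (h0 : a0 ≤ b0) (hj : aj ≤ bj) (hlen : b0 - a0 ≤ bj - aj)
    (hint : (Arc a0 b0 ∩ Arc aj bj).Nonempty) :
    ((a0 : AddCircle (1:ℝ)) ∈ Arc aj bj) ∨ ((b0 : AddCircle (1:ℝ)) ∈ Arc aj bj) := by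
  by_cases hfull : aj + 1 ≤ bj
  · exact Or.inl (arc_univ hfull _)
  push_neg at hfull
  obtain ⟨zpt, ⟨s, hs, hs2⟩, ⟨t, ht, ht2⟩⟩ := hint
  have hst : (s : AddCircle (1:ℝ)) = (t : AddCircle (1:ℝ)) := hs2.trans ht2.symm
  obtain ⟨p, hp⟩ := coe_eq_coe.mp hst
  by_cases h1 : aj ≤ a0 + p ∧ a0 + p ≤ bj
  · left
    exact ⟨a0 + p, ⟨h1.1, h1.2⟩, coe_eq_coe.mpr ⟨-p, by push_cast; ring⟩⟩
  by_cases h2 : aj ≤ b0 + p ∧ b0 + p ≤ bj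
  · right
    exact ⟨b0 + p, ⟨h2.1, h2.2⟩, coe_eq_coe.mpr ⟨-p, by push_cast; ring⟩⟩
  exfalso
  have hta : a0 + p ≤ t := by rw [hp]; linarith [hs.1]
  have htb : t ≤ b0 + p := by rw [hp]; linarith [hs.2]
  have hA : a0 + p < aj := by
    rcases not_and_or.mp h1 with hx | hx
    · push_neg at hx; exact hx
    · push_neg at hx; exfalso; linarith [ht.2]
  have hB : bj < b0 + p := by
    rcases not_and_or.mp h2 with hx | hx
    · push_neg at hx; exfalso; linarith [ht.1]
    · push_neg at hx; exact hx
  linarith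


lemma circle_lemma {n : ℕ} (Q : Finset (Fin n)) (A B : Fin n → ℝ) (hne : Q.Nonempty)
    (hab : ∀ i ∈ Q, A i ≤ B i)
    (hint : ∀ i ∈ Q, ∀ j ∈ Q, i ≠ j → (Arc (A i) (B i) ∩ Arc (A j) (B j)).Nonempty) :
    ∃ x : AddCircle (1:ℝ),
      Q.card + 1 ≤ 2 * (Q.filter fun i => x ∈ Arc (A i) (B i)).card := by
  obtain ⟨i0, hi0, hmin⟩ := Finset.exists_min_image Q (fun i => B i - A i) hne
  set SA := Q.filter (fun i => ((A i0 : AddCircle (1:ℝ))) ∈ Arc (A i) (B i)) with hSA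
  set SB := Q.filter (fun i => ((B i0 : AddCircle (1:ℝ))) ∈ Arc (A i) (B i)) with hSB
  have hcover : Q ⊆ SA ∪ SB := by
    intro j hj
    rcases eq_or_ne j i0 with rfl | hne'
    · exact Finset.mem_union_left _ (Finset.mem_filter.mpr
        ⟨hj, mem_arc_of_le le_rfl (hab _ hj)⟩)
    · rcases arc_cases (hab i0 hi0) (hab j hj) (hmin j hj)
        (hint i0 hi0 j hj hne'.symm) with hc | hc
      · exact Finset.mem_union_left _ (Finset.mem_filter.mpr ⟨hj, hc⟩)
      · exact Finset.mem_union_right _ (Finset.mem_filter.mpr ⟨hj, hc⟩)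
  have hi0A : i0 ∈ SA := Finset.mem_filter.mpr ⟨hi0, mem_arc_of_le le_rfl (hab _ hi0)⟩
  have hi0B : i0 ∈ SB := Finset.mem_filter.mpr ⟨hi0, mem_arc_of_le (hab _ hi0) le_rfl⟩
  have hsum : Q.card + 1 ≤ SA.card + SB.card := by
    have h1 : Q.card ≤ (SA ∪ SB).card := Finset.card_le_card hcover
    have h2 : (SA ∪ SB).card + (SA ∩ SB).card = SA.card + SB.card :=
      Finset.card_union_add_card_inter _ _
    have h3 : 1 ≤ (SA ∩ SB).card :=
      Finset.card_pos.mpr ⟨i0, Finset.mem_inter.mpr ⟨hi0A, hi0B⟩⟩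
    omega
  rcases le_total SA.card SB.card with hle | hle
  · exact ⟨_, by rw [← hSB]; omega⟩
  · exact ⟨_, by rw [← hSA]; omega⟩

lemma torus_lemma {n : ℕ} (a b c d : Fin n → ℝ) (Q : Finset (Fin n)) (hq : 2 ≤ Q.card)
    (hPW : ∀ i ∈ Q, ∀ j ∈ Q, i ≠ j →
      ((Arc (a i) (b i) ×ˢ Arc (c i) (d i)) ∩ (Arc (a j) (b j) ×ˢ Arc (c j) (d j))).Nonempty) :
    ∃ z : AddCircle (1:ℝ) × AddCircle (1:ℝ),
      Q.card + 3 ≤ 4 * (Q.filter fun i => z ∈ Arc (a i) (b i) ×ˢ Arc (c i) (d i)).card := by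
  have hne : ∀ i ∈ Q, (Arc (a i) (b i)).Nonempty ∧ (Arc (c i) (d i)).Nonempty := by
    intro i hi
    obtain ⟨j, hj, hji⟩ := Finset.exists_mem_ne (show 1 < Q.card by omega) i
    obtain ⟨z, hz1, _⟩ := hPW i hi j hj (fun hh => hji (hh.symm))
    exact ⟨⟨z.1, hz1.1⟩, ⟨z.2, hz1.2⟩⟩
  have hab : ∀ i ∈ Q, a i ≤ b i := fun i hi => arc_nonempty_le (hne i hi).1
  have hcd : ∀ i ∈ Q, c i ≤ d i := fun i hi => arc_nonempty_le (hne i hi).2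
  obtain ⟨x, hx⟩ := circle_lemma Q a b (Finset.card_pos.mp (show 0 < Q.card by omega)) hab
    (by
      intro i hi j hj hij
      obtain ⟨z, hz1, hz2⟩ := hPW i hi j hj hij
      exact ⟨z.1, hz1.1, hz2.1⟩)
  set SA := Q.filter (fun i => x ∈ Arc (a i) (b i)) with hSAdef
  have hSAcard : Q.card + 1 ≤ 2 * SA.card := hx
  have hSAne : SA.Nonempty := Finset.card_pos.mp (by omega : 0 < SA.card)
  obtain ⟨y, hy⟩ := circle_lemma SA c d hSAne
    (fun i hi => hcd i (Finset.mem_filter.mp hi).1)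
    (by
      intro i hi j hj hij
      obtain ⟨z, hz1, hz2⟩ := hPW i (Finset.mem_filter.mp hi).1 j (Finset.mem_filter.mp hj).1 hij
      exact ⟨z.2, hz1.2, hz2.2⟩)
  refine ⟨(x, y), ?_⟩
  have hsub : SA.filter (fun i => y ∈ Arc (c i) (d i)) ⊆
      Q.filter (fun i => (x, y) ∈ Arc (a i) (b i) ×ˢ Arc (c i) (d i)) := by
    intro i hi
    obtain ⟨hi1, hi2⟩ := Finset.mem_filter.mp hi
    obtain ⟨hi3, hi4⟩ := Finset.mem_filter.mp hi1
    exact Finset.mem_filter.mpr ⟨hi3, ⟨hi4, hi2⟩⟩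
  have := Finset.card_le_card hsub
  omega


section Comb

variable {n : ℕ}

def PWp (good : Fin n → Fin n → Prop) (Q : Finset (Fin n)) : Prop :=
  ∀ i ∈ Q, ∀ j ∈ Q, i ≠ j → good i j

lemma PWp_empty (good : Fin n → Fin n → Prop) : PWp good ∅ :=
  fun i hi => absurd hi (Finset.notMem_empty i)

lemma PWsets_ne (good : Fin n → Fin n → Prop) (F : Finset (Fin n)) :
    ((F.powerset.filter (PWp good)).image Finset.card).Nonempty := by
  simp only [Finset.mem_image, Finset.Nonempty]
  exact ⟨0, ∅, Finset.mem_filter.mpr ⟨Finset.empty_mem_powerset _, PWp_empty good⟩, rfl⟩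

noncomputable def alph (good : Fin n → Fin n → Prop) (F : Finset (Fin n)) : ℕ :=
  ((F.powerset.filter (PWp good)).image Finset.card).max' (PWsets_ne good F)

lemma le_alph (good : Fin n → Fin n → Prop) {Q F : Finset (Fin n)} (hQF : Q ⊆ F)
    (hPW : PWp good Q) : Q.card ≤ alph good F :=
  Finset.le_max' _ _ (Finset.mem_image.mpr
    ⟨Q, Finset.mem_filter.mpr ⟨Finset.mem_powerset.mpr hQF, hPW⟩, rfl⟩)

lemma alph_spec (good : Fin n → Fin n → Prop) (F : Finset (Fin n)) :
    ∃ Q, Q ⊆ F ∧ PWp good Q ∧ Q.card = alph good F := by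
  have h := Finset.max'_mem _ (PWsets_ne good F)
  obtain ⟨Q, hQ, hQc⟩ := Finset.mem_image.mp h
  obtain ⟨hQp, hQpw⟩ := Finset.mem_filter.mp hQ
  exact ⟨Q, Finset.mem_powerset.mp hQp, hQpw, hQc⟩

lemma alph_mono (good : Fin n → Fin n → Prop) {F G : Finset (Fin n)} (h : F ⊆ G) :
    alph good F ≤ alph good G := by
  obtain ⟨Q, hQF, hQpw, hQc⟩ := alph_spec good F
  exact hQc ▸ le_alph good (hQF.trans h) hQpw

lemma hall_on (A : Finset (Fin n)) (t : Fin n → Finset (Fin n))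
    (h : ∀ A' ⊆ A, A'.card ≤ (A'.biUnion t).card) :
    ∃ f : Fin n → Fin n, Set.InjOn f ↑A ∧ ∀ x ∈ A, f x ∈ t x := by
  have hcond : ∀ s : Finset {x // x ∈ A}, s.card ≤ (s.biUnion (fun x => t x.1)).card := by
    intro s
    have himg : (s.image (fun x : {x // x ∈ A} => x.1)).card = s.card :=
      Finset.card_image_of_injective _ Subtype.val_injective
    have hsub : s.image (fun x : {x // x ∈ A} => x.1) ⊆ A := by
      intro y hy
      obtain ⟨x, _, rfl⟩ := Finset.mem_image.mp hy
      exact x.2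
    have hbi : (s.image (fun x : {x // x ∈ A} => x.1)).biUnion t
        = s.biUnion (fun x => t x.1) := by
      ext y
      simp [Finset.mem_biUnion, Finset.mem_image]
    calc s.card = (s.image (fun x : {x // x ∈ A} => x.1)).card := himg.symm
      _ ≤ ((s.image (fun x : {x // x ∈ A} => x.1)).biUnion t).card := h _ hsub
      _ = (s.biUnion (fun x => t x.1)).card := by rw [hbi]
  obtain ⟨f, hfinj, hfm⟩ := (Finset.all_card_le_biUnion_card_iff_exists_injective
      (fun x : {x // x ∈ A} => t x.1)).mp hcond
  refine ⟨fun x => if hx : x ∈ A then f ⟨x, hx⟩ else x, ?_, ?_⟩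
  · intro x hx y hy hxy
    rw [Finset.mem_coe] at hx hy
    simp only [dif_pos hx, dif_pos hy] at hxy
    exact congrArg Subtype.val (hfinj hxy)
  · intro x hx
    simp only [dif_pos hx]
    exact hfm ⟨x, hx⟩

lemma main_comb (good : Fin n → Fin n → Prop) (hsym : ∀ i j, good i j → good j i)
    (k m : ℕ) (hk : 2 ≤ k) (hkm : k ≤ m) (hm2k : m ≤ 2 * k - 2)
    (hP : ∀ T : Finset (Fin n), T.card = m → ∃ T' ⊆ T, T'.card = k ∧ PWp good T') :
    ∀ N (F : Finset (Fin n)), F.card = N → m ≤ F.card →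
      F.card + k ≤ alph good F + m + 1 := by
  intro N
  induction N using Nat.strong_induction_on with
  | _ N ih =>
    intro F hFN hmF
    haveI : Nonempty (Fin n) := by
      have h1 : F.card ≤ n := by
        have := Finset.card_le_univ F
        simpa using this
      exact ⟨⟨0, by omega⟩⟩
    obtain ⟨T, hTF, hTcard⟩ := Finset.exists_subset_card_eq hmF
    obtain ⟨T', hT'T, hT'card, hT'PW⟩ := hP T hTcard
    have hαk : k ≤ alph good F := hT'card ▸ le_alph good (hT'T.trans hTF) hT'PW
    rcases eq_or_lt_of_le hmF with heq | hlt
    · omega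
    by_cases hex : ∃ v ∈ F, alph good (F.erase v) + 1 ≤ alph good F
    · obtain ⟨v, hv, hle⟩ := hex
      have hcard : (F.erase v).card = F.card - 1 := Finset.card_erase_of_mem hv
      have hrec := ih (F.erase v).card (by omega) (F.erase v) rfl (by omega)
      omega
    · exfalso
      push_neg at hex
      have hstab : ∀ v ∈ F, alph good (F.erase v) = alph good F := by
        intro v hv
        have h1 := hex v hv
        have h2 := alph_mono good (Finset.erase_subset v F)
        omega
      obtain ⟨I, hIF, hIPW, hIcard⟩ := alph_spec good F
      set α := alph good F with hα
      set nb : Fin n → Finset (Fin n) :=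
        fun x => F.filter (fun v => v ∉ I ∧ v ≠ x ∧ ¬ good x v) with hnb
      have hnbspec : ∀ x : Fin n, ∀ y ∈ nb x, y ∈ F ∧ y ∉ I ∧ y ≠ x ∧ ¬ good x y := by
        intro x y hy
        have hmem := Finset.mem_filter.mp hy
        exact ⟨hmem.1, hmem.2⟩
      by_cases hHall : ∀ A ⊆ I, A.card ≤ (A.biUnion nb).card
      · -- Hall holds: many disjoint bad pairs, contradiction with hP
        obtain ⟨f, hfInj, hfmem⟩ := hall_on I nb (fun A' hA' => hHall A' hA')
        obtain ⟨I', hI'I, hI'card⟩ := Finset.exists_subset_card_eq (s := I) (n := m - k + 1) (by omega)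
        have hfnb : ∀ x ∈ I', f x ∈ nb x := fun x hx => hfmem x (hI'I hx)
        set S0 := I' ∪ I'.image f with hS0
        have hdisj : Disjoint I' (I'.image f) := by
          rw [Finset.disjoint_right]
          intro y hy hyI'
          obtain ⟨x, hx, rfl⟩ := Finset.mem_image.mp hy
          exact (hnbspec x _ (hfnb x hx)).2.1 (hI'I hyI')
        have hinjI' : Set.InjOn f ↑I' := hfInj.mono (by exact_mod_cast Finset.coe_subset.mpr hI'I)
        have hS0card : S0.card = 2 * (m - k + 1) := by
          rw [hS0, Finset.card_union_of_disjoint hdisj, Finset.card_image_of_injOn hinjI']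
          omega
        have hS0F : S0 ⊆ F := by
          intro y hy
          rcases Finset.mem_union.mp hy with hy | hy
          · exact hIF (hI'I hy)
          · obtain ⟨x, hx, rfl⟩ := Finset.mem_image.mp hy
            exact (hnbspec x _ (hfnb x hx)).1
        obtain ⟨S, hS0S, hSF, hScard⟩ :=
          Finset.exists_subsuperset_card_eq hS0F (n := m - S0.card + S0.card) (by omega) (by omega)
        have hSm : S.card = m := by rw [hScard]; omega
        obtain ⟨T2, hT2S, hT2card, hT2PW⟩ := hP S hSm
        have hsplit : T2.card ≤ (T2 ∩ S0).card + (S \ S0).card := by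
          have h1 : T2 \ S0 ⊆ S \ S0 := Finset.sdiff_subset_sdiff hT2S (le_refl _)
          have h2 := Finset.card_inter_add_card_sdiff T2 S0
          have h3 := Finset.card_le_card h1
          omega
        have hSd : (S \ S0).card = m - S0.card := by
          rw [Finset.card_sdiff_of_subset hS0S, hSm]
        have hcap : (T2 ∩ S0).card ≤ I'.card := by
          apply Finset.card_le_card_of_injOn
            (fun y => if y ∈ I' then y else Function.invFunOn f ↑I' y)
          · intro y hy
            obtain ⟨hyT, hyS0⟩ := Finset.mem_inter.mp hy
            by_cases hyI' : y ∈ I'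
            · simpa [hyI'] using hyI'
            · have hyim : y ∈ I'.image f := by
                rcases Finset.mem_union.mp hyS0 with h' | h'
                · exact absurd h' hyI'
                · exact h'
              obtain ⟨x, hx, rfl⟩ := Finset.mem_image.mp hyim
              have hmemim : f x ∈ f '' ↑I' := ⟨x, Finset.mem_coe.mpr hx, rfl⟩
              have hin := Function.invFunOn_mem hmemim
              simp only [if_neg hyI']
              exact Finset.mem_coe.mp hin
          · intro y1 hy1 y2 hy2 heq
            simp only [Finset.coe_inter, Set.mem_inter_iff, Finset.mem_coe] at hy1 hy2
            obtain ⟨hy1T, hy1S0⟩ := hy1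
            obtain ⟨hy2T, hy2S0⟩ := hy2
            have himcase : ∀ y, y ∈ S0 → y ∉ I' → y ∈ I'.image f := by
              intro y hyS hyI'
              rcases Finset.mem_union.mp hyS with h' | h'
              · exact absurd h' hyI'
              · exact h'
            by_cases h1 : y1 ∈ I' <;> by_cases h2 : y2 ∈ I'
            · simpa [h1, h2] using heq
            · exfalso
              obtain ⟨x2, hx2, rfl⟩ := Finset.mem_image.mp (himcase y2 hy2S0 h2)
              have hmemim : f x2 ∈ f '' ↑I' := ⟨x2, Finset.mem_coe.mpr hx2, rfl⟩
              have hfeq := Function.invFunOn_eq (f := f) (s := ↑I') ⟨x2, Finset.mem_coe.mpr hx2, rfl⟩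
              simp only [if_pos h1, if_neg h2] at heq
              -- heq : y1 = invFunOn f I' (f x2); so f y1 = f x2
              have : f y1 = f x2 := by rw [heq]; exact hfeq
              have hnbspec1 := hnbspec y1 _ (hfnb y1 h1)
              rw [this] at hnbspec1
              -- f x2 ∈ nb y1 : ¬ good y1 (f x2), f x2 ≠ y1
              exact hnbspec1.2.2.2 (hT2PW y1 hy1T _ hy2T (Ne.symm hnbspec1.2.2.1))
            · exfalso
              obtain ⟨x1, hx1, rfl⟩ := Finset.mem_image.mp (himcase y1 hy1S0 h1)
              have hfeq := Function.invFunOn_eq (f := f) (s := ↑I') ⟨x1, Finset.mem_coe.mpr hx1, rfl⟩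
              simp only [if_neg h1, if_pos h2] at heq
              have : f y2 = f x1 := by rw [← heq]; exact hfeq
              have hnbspec1 := hnbspec y2 _ (hfnb y2 h2)
              rw [this] at hnbspec1
              exact hnbspec1.2.2.2 (hT2PW y2 hy2T _ hy1T (Ne.symm hnbspec1.2.2.1))
            · obtain ⟨x1, hx1, rfl⟩ := Finset.mem_image.mp (himcase y1 hy1S0 h1)
              obtain ⟨x2, hx2, rfl⟩ := Finset.mem_image.mp (himcase y2 hy2S0 h2)
              have hfeq1 := Function.invFunOn_eq (f := f) (s := ↑I') ⟨x1, Finset.mem_coe.mpr hx1, rfl⟩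
              have hfeq2 := Function.invFunOn_eq (f := f) (s := ↑I') ⟨x2, Finset.mem_coe.mpr hx2, rfl⟩
              simp only [if_neg h1, if_neg h2] at heq
              rw [← hfeq1, ← hfeq2, heq]
        have hI'c : I'.card = m - k + 1 := hI'card
        omega
      · -- Hall fails: augment I, contradiction with maximality
        push_neg at hHall
        obtain ⟨A0, hA0I, hA0bad⟩ := hHall
        have hVne : (I.powerset.filter (fun A => (A.biUnion nb).card < A.card)).Nonempty :=
          ⟨A0, Finset.mem_filter.mpr ⟨Finset.mem_powerset.mpr hA0I, hA0bad⟩⟩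
        obtain ⟨A, hAmem, hAmin⟩ := Finset.exists_min_image _ Finset.card hVne
        obtain ⟨hAp, hAbad⟩ := Finset.mem_filter.mp hAmem
        have hAI : A ⊆ I := Finset.mem_powerset.mp hAp
        have hAne : A.Nonempty := Finset.card_pos.mp (by omega)
        obtain ⟨aa, haa⟩ := hAne
        have hAe : (A.erase aa).card = A.card - 1 := Finset.card_erase_of_mem haa
        have hallOK : ∀ A' ⊆ A.erase aa, A'.card ≤ (A'.biUnion nb).card := by
          intro A' hA'
          by_contra hcon
          push_neg at hcon
          have hmin := hAmin A' (Finset.mem_filter.mpr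
            ⟨Finset.mem_powerset.mpr ((hA'.trans (Finset.erase_subset _ _)).trans hAI), hcon⟩)
          have hcc := Finset.card_le_card hA'
          omega
        set B := A.biUnion nb with hBdef
        have hBcard : B.card = A.card - 1 := by
          have h1 := hallOK (A.erase aa) (le_refl _)
          have h2 : (A.erase aa).biUnion nb ⊆ B :=
            Finset.biUnion_subset_biUnion_of_subset_left _ (Finset.erase_subset _ _)
          have h3 := Finset.card_le_card h2
          omega
        obtain ⟨f, hfInj, hfmem⟩ := hall_on (A.erase aa) nb hallOK
        have himB : (A.erase aa).image f ⊆ B := by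
          intro y hy
          obtain ⟨x, hx, rfl⟩ := Finset.mem_image.mp hy
          exact Finset.mem_biUnion.mpr ⟨x, Finset.erase_subset _ _ hx, hfmem x hx⟩
        have himeq : (A.erase aa).image f = B := by
          apply Finset.eq_of_subset_of_card_le himB
          rw [Finset.card_image_of_injOn hfInj]
          omega
        have hsurj : ∀ y ∈ B, ∃ x, x ∈ A.erase aa ∧ f x = y := by
          intro y hy
          obtain ⟨x, hx, hfx⟩ := Finset.mem_image.mp (himeq ▸ hy)
          exact ⟨x, hx, hfx⟩
        have haaF : aa ∈ F := hIF (hAI haa)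
        obtain ⟨J, hJF, hJPW, hJcard⟩ := alph_spec good (F.erase aa)
        rw [hstab aa haaF] at hJcard
        set K := A ∪ (J \ (A ∪ B)) with hKdef
        have hBnotI : ∀ y ∈ B, y ∉ I := by
          intro y hy
          obtain ⟨x, hx, hynb⟩ := Finset.mem_biUnion.mp hy
          exact (hnbspec x y hynb).2.1
        have haaJ : aa ∉ J := fun hh => (Finset.mem_erase.mp (hJF hh)).1 rfl
        have hKPW : PWp good K := by
          have key : ∀ i ∈ A, ∀ j ∈ J \ (A ∪ B), i ≠ j → good i j := by
            intro i hi j hj hij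
            by_contra hng
            obtain ⟨hjJ', hjnot⟩ := Finset.mem_sdiff.mp hj
            by_cases hjI : j ∈ I
            · exact hng (hIPW i (hAI hi) j hjI hij)
            · have hjnb : j ∈ nb i := Finset.mem_filter.mpr
                ⟨Finset.erase_subset _ _ (hJF hjJ'), hjI, Ne.symm hij, hng⟩
              exact hjnot (Finset.mem_union_right _ (Finset.mem_biUnion.mpr ⟨i, hi, hjnb⟩))
          intro i hi j hj hij
          rcases Finset.mem_union.mp hi with hiA | hiJ
          · rcases Finset.mem_union.mp hj with hjA | hjJ
            · exact hIPW i (hAI hiA) j (hAI hjA) hij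
            · exact key i hiA j hjJ hij
          · rcases Finset.mem_union.mp hj with hjA | hjJ
            · exact hsym j i (key j hjA i hiJ (Ne.symm hij))
            · exact hJPW i (Finset.mem_sdiff.mp hiJ).1 j (Finset.mem_sdiff.mp hjJ).1 hij
        have hKF : K ⊆ F := by
          intro y hy
          rcases Finset.mem_union.mp hy with hy | hy
          · exact hIF (hAI hy)
          · exact Finset.erase_subset _ _ (hJF (Finset.mem_sdiff.mp hy).1)
        have hKle : K.card ≤ α := le_alph good hKF hKPW
        have hdisjK : Disjoint A (J \ (A ∪ B)) := by
          rw [Finset.disjoint_right]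
          intro y hy hyA
          exact (Finset.mem_sdiff.mp hy).2 (Finset.mem_union_left _ hyA)
        have hKcard : K.card = A.card + (J \ (A ∪ B)).card :=
          Finset.card_union_of_disjoint hdisjK
        have hJsplit : (J ∩ (A ∪ B)).card + (J \ (A ∪ B)).card = J.card :=
          Finset.card_inter_add_card_sdiff _ _
        have hchoose : ∀ y (hy : y ∈ B), (hsurj y hy).choose ∈ A.erase aa ∧
            f (hsurj y hy).choose = y := fun y hy => (hsurj y hy).choose_spec
        have hcapJ : (J ∩ (A ∪ B)).card ≤ (A.erase aa).card := by
          apply Finset.card_le_card_of_injOn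
            (fun y => if hy : y ∈ B then (hsurj y hy).choose else y)
          · intro y hy
            obtain ⟨hyJ, hyAB⟩ := Finset.mem_inter.mp hy
            by_cases hyB : y ∈ B
            · simp only [dif_pos hyB]
              exact (hchoose y hyB).1
            · simp only [dif_neg hyB]
              rcases Finset.mem_union.mp hyAB with h' | h'
              · exact Finset.mem_erase.mpr ⟨fun hh => haaJ (hh ▸ hyJ), h'⟩
              · exact absurd h' hyB
          · intro y1 hy1 y2 hy2 heq
            simp only [Finset.coe_inter, Set.mem_inter_iff, Finset.mem_coe] at hy1 hy2
            obtain ⟨hy1J, hy1AB⟩ := hy1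
            obtain ⟨hy2J, hy2AB⟩ := hy2
            by_cases h1 : y1 ∈ B <;> by_cases h2 : y2 ∈ B
            · simp only [dif_pos h1, dif_pos h2] at heq
              rw [← (hchoose y1 h1).2, ← (hchoose y2 h2).2, heq]
            · exfalso
              simp only [dif_pos h1, dif_neg h2] at heq
              -- y2 = choose y1, f (choose y1) = y1, so f y2 = y1
              have hfy2 : f y2 = y1 := by rw [← heq]; exact (hchoose y1 h1).2
              have hy2er : y2 ∈ A.erase aa := heq ▸ (hchoose y1 h1).1
              have hnb1 := hnbspec y2 y1 (hfy2 ▸ hfmem y2 hy2er)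
              exact hnb1.2.2.2 (hJPW y2 hy2J y1 hy1J (Ne.symm hnb1.2.2.1))
            · exfalso
              simp only [dif_neg h1, dif_pos h2] at heq
              have hfy1 : f y1 = y2 := by rw [heq]; exact (hchoose y2 h2).2
              have hy1er : y1 ∈ A.erase aa := heq ▸ (hchoose y2 h2).1
              have hnb1 := hnbspec y1 y2 (hfy1 ▸ hfmem y1 hy1er)
              exact hnb1.2.2.2 (hJPW y1 hy1J y2 hy2J (Ne.symm hnb1.2.2.1))
            · simpa [dif_neg h1, dif_neg h2] using heq
        omega

end Comb

end AgreeAux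

/-- Main toroidal theorem: if `k ≤ m ≤ 2k-2` and among any `m` of `n ≥ m` approval sets
on the torus (arc × arc) some `k` share a point, then some point of the torus lies in at
least `(n - m + k + 2)/4` of the sets. -/
theorem agreeable_toroidal (k m n : ℕ) (hk : 2 ≤ k) (hm : 2 ≤ m) (hkm : k ≤ m)
    (hm2k : m ≤ 2 * k - 2) (hmn : m ≤ n) (a b c d : Fin n → ℝ)
    (h : ∀ T : Finset (Fin n), T.card = m → ∃ T' ⊆ T, T'.card = k ∧
      (⋂ i ∈ T', Arc (a i) (b i) ×ˢ Arc (c i) (d i)).Nonempty) :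
    ∃ z : AddCircle (1 : ℝ) × AddCircle (1 : ℝ), n - m + k + 2 ≤
      4 * (Finset.univ.filter fun i : Fin n =>
        z ∈ Arc (a i) (b i) ×ˢ Arc (c i) (d i)).card := by
  classical
  set good : Fin n → Fin n → Prop := fun i j =>
    ((Arc (a i) (b i) ×ˢ Arc (c i) (d i)) ∩ (Arc (a j) (b j) ×ˢ Arc (c j) (d j))).Nonempty
    with hgood
  have hsym : ∀ i j, good i j → good j i := by
    rintro i j ⟨z, hz1, hz2⟩
    exact ⟨z, hz2, hz1⟩
  have hP : ∀ T : Finset (Fin n), T.card = m →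
      ∃ T' ⊆ T, T'.card = k ∧ AgreeAux.PWp good T' := by
    intro T hT
    obtain ⟨T', hT'T, hT'c, hne⟩ := h T hT
    obtain ⟨z, hz⟩ := hne
    have hz' : ∀ i ∈ T', z ∈ Arc (a i) (b i) ×ˢ Arc (c i) (d i) := by
      intro i hi
      exact Set.mem_iInter₂.mp hz i hi
    exact ⟨T', hT'T, hT'c, fun i hi j hj hij => ⟨z, hz' i hi, hz' j hj⟩⟩
  have hcu : (Finset.univ : Finset (Fin n)).card = n := by simp
  have hmain := AgreeAux.main_comb good hsym k m hk hkm hm2k hP n Finset.univ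
    (by simp) (by simp [hmn])
  obtain ⟨Q, hQu, hQPW, hQc⟩ := AgreeAux.alph_spec good Finset.univ
  by_cases hq : 2 ≤ Q.card
  · obtain ⟨z, hz⟩ := AgreeAux.torus_lemma a b c d Q hq
      (fun i hi j hj hij => hQPW i hi j hj hij)
    refine ⟨z, ?_⟩
    have hsub : (Q.filter fun i => z ∈ Arc (a i) (b i) ×ˢ Arc (c i) (d i)) ⊆
        (Finset.univ.filter fun i : Fin n => z ∈ Arc (a i) (b i) ×ˢ Arc (c i) (d i)) :=
      Finset.filter_subset_filter _ hQu
    have hcc := Finset.card_le_card hsub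
    omega
  · obtain ⟨T, hTu, hTc⟩ := Finset.exists_subset_card_eq (s := (Finset.univ : Finset (Fin n))) (n := m)
      (by simp [hmn])
    obtain ⟨T', hT'T, hT'c, hne⟩ := h T hTc
    obtain ⟨z, hz⟩ := hne
    refine ⟨z, ?_⟩
    have hz' : ∀ i ∈ T', z ∈ Arc (a i) (b i) ×ˢ Arc (c i) (d i) := by
      intro i hi
      exact Set.mem_iInter₂.mp hz i hi
    have hsub : T' ⊆ (Finset.univ.filter fun i : Fin n =>
        z ∈ Arc (a i) (b i) ×ˢ Arc (c i) (d i)) := by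
      intro i hi
      exact Finset.mem_filter.mpr ⟨Finset.mem_univ i, hz' i hi⟩
    have hcc := Finset.card_le_card hsub
    omega
end

section
/- Let n = 4ℓ+1 for a positive integer ℓ, and on the torus (ℝ/(2nℤ))² define n squares A_0, ..., A_{n-1}, where A_i = [2i, 2i+n] × [4i, 4i+n] (coordinates mod 2n). Then every two of these squares intersect, and the maximum number of squares containing a single common point is exactly ℓ + 1. -/
open Classical

lemma addCircle_coe_eq_coe (p s t : ℝ) :
    ((s : AddCircle p) = (t : AddCircle p)) ↔ ∃ k : ℤ, s - t = k * p := by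
  rw [QuotientAddGroup.eq_iff_sub_mem, AddSubgroup.mem_zmultiples_iff]
  constructor
  · rintro ⟨k, hk⟩; exact ⟨k, by rw [← hk, zsmul_eq_mul]⟩
  · rintro ⟨k, hk⟩; exact ⟨k, by rw [zsmul_eq_mul, ← hk]⟩

lemma k_range {n k c : ℤ} (hn : 0 < n) (h1 : c ≤ 2 * n * k) (h2 : 2 * n * k ≤ c + n)
    (hc0 : 0 ≤ c) (hc1 : c < 4 * n) : 0 ≤ k ∧ k ≤ 2 := by
  constructor
  · by_contra h; push_neg at h; nlinarith
  · by_contra h; push_neg at h; nlinarith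

lemma arcs_meet (nr : ℝ) (hn : 0 < nr) (a b : ℝ) :
    ∃ t t' : ℝ, t ∈ Set.Icc a (a + nr) ∧ t' ∈ Set.Icc b (b + nr) ∧
      ∃ k : ℤ, t - t' = k * (2 * nr) := by
  set k : ℤ := ⌊(a - b + nr) / (2 * nr)⌋ with hk
  have h2n : (0 : ℝ) < 2 * nr := by linarith
  have h1 : (k : ℝ) * (2 * nr) ≤ a - b + nr := by
    have := Int.floor_le ((a - b + nr) / (2 * nr))
    calc (k : ℝ) * (2 * nr) ≤ ((a - b + nr) / (2 * nr)) * (2 * nr) := by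
          apply mul_le_mul_of_nonneg_right this (le_of_lt h2n)
      _ = a - b + nr := div_mul_cancel₀ _ (ne_of_gt h2n)
  have h2 : a - b + nr < ((k : ℝ) + 1) * (2 * nr) := by
    have := Int.lt_floor_add_one ((a - b + nr) / (2 * nr))
    calc a - b + nr = ((a - b + nr) / (2 * nr)) * (2 * nr) :=
          (div_mul_cancel₀ _ (ne_of_gt h2n)).symm
      _ < ((k : ℝ) + 1) * (2 * nr) := by
          apply mul_lt_mul_of_pos_right this h2n
  set c : ℝ := b + k * (2 * nr) with hc
  have hca : c ≤ a + nr := by rw [hc]; linarith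
  have hca2 : a - nr < c := by rw [hc]; nlinarith
  rcases le_or_gt a c with h | h
  · exact ⟨c, b, ⟨h, hca⟩, ⟨le_refl b, by linarith⟩, k, by rw [hc]; ring⟩
  · refine ⟨a, a - k * (2 * nr), ⟨le_refl a, by linarith⟩, ⟨?_, ?_⟩, k, by ring⟩
    · rw [hc] at h; linarith
    · rw [hc] at hca2; linarith

lemma card_le_of_four_dvd (H : Finset ℤ) (M : ℕ)
    (hd : ∀ a ∈ H, ∀ b ∈ H, 4 ∣ a - b) (hM : ∀ a ∈ H, ∀ b ∈ H, a - b ≤ 4 * M) :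
    H.card ≤ M + 1 := by
  rcases H.eq_empty_or_nonempty with h | h
  · simp [h]
  · set a0 := H.min' h with ha0
    have hmem : a0 ∈ H := H.min'_mem h
    have key : ∀ a ∈ H, ((a - a0) / 4).toNat ∈ Finset.range (M + 1) := by
      intro a ha
      obtain ⟨c, hc⟩ := hd a ha a0 hmem
      have h1 : 0 ≤ a - a0 := by
        have := H.min'_le a ha; omega
      have h2 : a - a0 ≤ 4 * M := hM a ha a0 hmem
      rw [Finset.mem_range]
      omega
    have hinj : ∀ a ∈ H, ∀ b ∈ H, ((a - a0) / 4).toNat = ((b - a0) / 4).toNat → a = b := by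
      intro a ha b hb hab
      obtain ⟨c, hc⟩ := hd a ha a0 hmem
      obtain ⟨c', hc'⟩ := hd b hb a0 hmem
      have h1 : 0 ≤ a - a0 := by have := H.min'_le a ha; omega
      have h2 : 0 ≤ b - a0 := by have := H.min'_le b hb; omega
      omega
    calc H.card ≤ (Finset.range (M + 1)).card :=
          Finset.card_le_card_of_injOn _ key (fun a ha b hb => hinj a ha b hb)
      _ = M + 1 := Finset.card_range _

lemma key_count {ι : Type*} [DecidableEq ι] (S : Finset ι) (ℓ : ℕ) (φ : ι → ℤ) (r : ℤ)
    (lo B : ℝ)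
    (hinj : ∀ i ∈ S, ∀ j ∈ S, φ i = φ j → i = j)
    (hlo : ∀ i ∈ S, lo ≤ (φ i : ℝ) ∧ (φ i : ℝ) ≤ lo + (4 * ℓ + 1))
    (hpar : ∀ i ∈ S, (4 ∣ φ i - r ∧ (φ i : ℝ) ≤ B) ∨ (4 ∣ φ i - r - 2 ∧ B ≤ (φ i : ℝ))) :
    S.card ≤ ℓ + 1 := by
  classical
  set G := S.image φ with hG
  have hcard : S.card = G.card := (Finset.card_image_of_injOn
    (fun a ha b hb h => hinj a ha b hb h)).symm
  -- every element of G is in the interval and satisfies one of the disjuncts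
  have hGlo : ∀ g ∈ G, lo ≤ (g : ℝ) ∧ (g : ℝ) ≤ lo + (4 * ℓ + 1) := by
    intro g hg; obtain ⟨i, hi, rfl⟩ := Finset.mem_image.mp hg; exact hlo i hi
  have hGpar : ∀ g ∈ G, (4 ∣ g - r ∧ (g : ℝ) ≤ B) ∨ (4 ∣ g - r - 2 ∧ B ≤ (g : ℝ)) := by
    intro g hg; obtain ⟨i, hi, rfl⟩ := Finset.mem_image.mp hg; exact hpar i hi
  have hdiff : ∀ a ∈ G, ∀ b ∈ G, a - b ≤ 4 * ℓ + 1 := by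
    intro a ha b hb
    have h1 := hGlo a ha
    have h2 := hGlo b hb
    have : (a : ℝ) - b ≤ 4 * ℓ + 1 := by linarith
    exact_mod_cast this
  set G0 := G.filter (fun g => (4 : ℤ) ∣ g - r) with hG0
  set G1 := G.filter (fun g => ¬ (4 : ℤ) ∣ g - r) with hG1
  have hsplit : G0.card + G1.card = G.card := Finset.card_filter_add_card_filter_not _
  -- properties
  have hG0p : ∀ g ∈ G0, 4 ∣ g - r ∧ (g : ℝ) ≤ B := by
    intro g hg
    rw [hG0, Finset.mem_filter] at hg
    refine ⟨hg.2, ?_⟩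
    rcases hGpar g hg.1 with ⟨_, h⟩ | ⟨h4, _⟩
    · exact h
    · exfalso; obtain ⟨c, hc⟩ := hg.2; obtain ⟨d, hd⟩ := h4; omega
  have hG1p : ∀ g ∈ G1, 4 ∣ g - r - 2 ∧ B ≤ (g : ℝ) := by
    intro g hg
    rw [hG1, Finset.mem_filter] at hg
    rcases hGpar g hg.1 with ⟨h4, _⟩ | h
    · exact absurd h4 hg.2
    · exact h
  have hd0 : ∀ a ∈ G0, ∀ b ∈ G0, 4 ∣ a - b := by
    intro a ha b hb
    obtain ⟨c, hc⟩ := (hG0p a ha).1; obtain ⟨d, hd⟩ := (hG0p b hb).1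
    exact ⟨c - d, by omega⟩
  have hd1 : ∀ a ∈ G1, ∀ b ∈ G1, 4 ∣ a - b := by
    intro a ha b hb
    obtain ⟨c, hc⟩ := (hG1p a ha).1; obtain ⟨d, hd⟩ := (hG1p b hb).1
    exact ⟨c - d, by omega⟩
  have hG0sub : G0 ⊆ G := Finset.filter_subset _ _
  have hG1sub : G1 ⊆ G := Finset.filter_subset _ _
  rcases G0.eq_empty_or_nonempty with h0 | h0
  · -- G = G1
    have : G1.card ≤ ℓ + 1 := by
      apply card_le_of_four_dvd _ ℓ hd1
      intro a ha b hb
      have := hdiff a (hG1sub ha) b (hG1sub hb)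
      obtain ⟨c, hc⟩ := hd1 a ha b hb
      omega
    rw [hcard]; rw [h0] at hsplit; simp at hsplit; omega
  rcases G1.eq_empty_or_nonempty with h1 | h1
  · have : G0.card ≤ ℓ + 1 := by
      apply card_le_of_four_dvd _ ℓ hd0
      intro a ha b hb
      have := hdiff a (hG0sub ha) b (hG0sub hb)
      obtain ⟨c, hc⟩ := hd0 a ha b hb
      omega
    rw [hcard]; rw [h1] at hsplit; simp at hsplit; omega
  -- both nonempty
  obtain ⟨b0, hb0G, hb0max⟩ := G0.exists_max_image id h0
  obtain ⟨a0, ha0G, ha0min⟩ := G0.exists_min_image id h0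
  obtain ⟨b1, hb1G, hb1max⟩ := G1.exists_max_image id h1
  obtain ⟨a1, ha1G, ha1min⟩ := G1.exists_min_image id h1
  -- gap: a1 - b0 ≥ 2
  have hgap : b0 + 2 ≤ a1 := by
    have h1' : (b0 : ℝ) ≤ B := (hG0p b0 hb0G).2
    have h2' : B ≤ (a1 : ℝ) := (hG1p a1 ha1G).2
    have hle : b0 ≤ a1 := by exact_mod_cast le_trans h1' h2'
    obtain ⟨c, hc⟩ := (hG0p b0 hb0G).1
    obtain ⟨d, hd⟩ := (hG1p a1 ha1G).1
    omega
  have hspan : b1 - a0 ≤ 4 * ℓ + 1 := hdiff b1 (hG1sub hb1G) a0 (hG0sub ha0G)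
  obtain ⟨c0, hc0⟩ := hd0 b0 hb0G a0 ha0G
  obtain ⟨c1, hc1⟩ := hd1 b1 hb1G a1 ha1G
  have hc0n : 0 ≤ c0 := by have := ha0min b0 hb0G; simp at this; omega
  have hc1n : 0 ≤ c1 := by have := ha1min b1 hb1G; simp at this; omega
  have hsum : c0 + c1 ≤ (ℓ : ℤ) - 1 := by omega
  have hcard0 : G0.card ≤ c0.toNat + 1 := by
    apply card_le_of_four_dvd _ _ hd0
    intro a ha b hb
    have h1' := hb0max a ha; have h2' := ha0min b hb
    simp at h1' h2'
    omega
  have hcard1 : G1.card ≤ c1.toNat + 1 := by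
    apply card_le_of_four_dvd _ _ hd1
    intro a ha b hb
    have h1' := hb1max a ha; have h2' := ha1min b hb
    simp at h1' h2'
    omega
  rw [hcard]
  omega

set_option maxHeartbeats 1000000 in
/-- The uniform toroidal society: for `n = 4ℓ+1`, the `n` squares
`A i = [2i, 2i+n] × [4i, 4i+n]` (mod `2n`) on the `2n × 2n` torus pairwise intersect, and
the maximum number of squares containing a single common point is exactly `ℓ + 1`. -/
theorem uniform_toroidal_society (ℓ : ℕ) (hℓ : 1 ≤ ℓ) (n : ℕ) (hn : n = 4 * ℓ + 1)
    (A : Fin n → Set (AddCircle ((2 * n : ℕ) : ℝ) × AddCircle ((2 * n : ℕ) : ℝ)))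
    (hA : ∀ i : Fin n, A i =
      ((fun t : ℝ => (t : AddCircle ((2 * n : ℕ) : ℝ))) ''
        Set.Icc (2 * (i : ℕ) : ℝ) ((2 * (i : ℕ) : ℝ) + n)) ×ˢ
      ((fun t : ℝ => (t : AddCircle ((2 * n : ℕ) : ℝ))) ''
        Set.Icc (4 * (i : ℕ) : ℝ) ((4 * (i : ℕ) : ℝ) + n))) :
    (∀ i j : Fin n, (A i ∩ A j).Nonempty) ∧
    (∃ z, (Finset.univ.filter fun i : Fin n => z ∈ A i).card = ℓ + 1) ∧
    (∀ z, (Finset.univ.filter fun i : Fin n => z ∈ A i).card ≤ ℓ + 1) := by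
  have hnpos : (0 : ℝ) < n := by
    rw [hn]; push_cast; linarith
  have hp : ((2 * n : ℕ) : ℝ) = 2 * (n : ℝ) := by push_cast; ring
  refine ⟨?_, ?_, ?_⟩
  · -- pairwise intersection
    intro i j
    obtain ⟨tx, tx', htx, htx', kx, hkx⟩ := arcs_meet n hnpos (2 * (i : ℕ) : ℝ) (2 * (j : ℕ) : ℝ)
    obtain ⟨ty, ty', hty, hty', ky, hky⟩ := arcs_meet n hnpos (4 * (i : ℕ) : ℝ) (4 * (j : ℕ) : ℝ)
    refine ⟨((tx : AddCircle ((2 * n : ℕ) : ℝ)), (ty : AddCircle ((2 * n : ℕ) : ℝ))), ?_, ?_⟩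
    · rw [hA i]
      exact ⟨⟨tx, htx, rfl⟩, ⟨ty, hty, rfl⟩⟩
    · rw [hA j]
      refine ⟨⟨tx', htx', ?_⟩, ⟨ty', hty', ?_⟩⟩
      · exact (addCircle_coe_eq_coe _ _ _).mpr ⟨-kx, by rw [hp]; push_cast; linarith [hkx]⟩
      · exact (addCircle_coe_eq_coe _ _ _).mpr ⟨-ky, by rw [hp]; push_cast; linarith [hky]⟩
  · -- existence of a point covered ℓ+1 times
    have hnZ : (n : ℤ) = 4 * ℓ + 1 := by exact_mod_cast hn
    refine ⟨(((0:ℝ) : AddCircle ((2 * n : ℕ) : ℝ)), ((0:ℝ) : AddCircle ((2 * n : ℕ) : ℝ))), ?_⟩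
    have hmem : ∀ i : Fin n,
        ((((0:ℝ) : AddCircle ((2 * n : ℕ) : ℝ)), ((0:ℝ) : AddCircle ((2 * n : ℕ) : ℝ))) ∈ A i)
          ↔ ((i : ℕ) = 0 ∨ 3 * ℓ + 1 ≤ (i : ℕ)) := by
      intro i
      have hiub : (i : ℕ) ≤ 4 * ℓ := by have := i.isLt; omega
      rw [hA i]
      constructor
      · rintro ⟨⟨tx, ⟨hx1, hx2⟩, hxe⟩, ⟨ty, ⟨hy1, hy2⟩, hye⟩⟩
        obtain ⟨k, hk⟩ := (addCircle_coe_eq_coe _ _ _).mp hxe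
        obtain ⟨m, hm⟩ := (addCircle_coe_eq_coe _ _ _).mp hye
        rw [hp] at hk hm
        have hx1' : (2 * (i:ℕ) : ℤ) ≤ 2 * n * k := by
          have : (2 * (i:ℕ) : ℝ) ≤ 2 * (n:ℝ) * k := by linarith
          exact_mod_cast this
        have hx2' : (2 * (n:ℤ) * k) ≤ 2 * (i:ℕ) + n := by
          have : 2 * (n:ℝ) * k ≤ 2 * (i:ℕ) + n := by linarith
          exact_mod_cast this
        have hy1' : (4 * (i:ℕ) : ℤ) ≤ 2 * n * m := by
          have : (4 * (i:ℕ) : ℝ) ≤ 2 * (n:ℝ) * m := by linarith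
          exact_mod_cast this
        have hy2' : (2 * (n:ℤ) * m) ≤ 4 * (i:ℕ) + n := by
          have : 2 * (n:ℝ) * m ≤ 4 * (i:ℕ) + n := by linarith
          exact_mod_cast this
        have hnZpos : (0:ℤ) < n := by omega
        obtain ⟨hk0, hk2⟩ := k_range hnZpos hx1' hx2' (by positivity) (by omega)
        obtain ⟨hm0, hm2⟩ := k_range hnZpos hy1' hy2' (by positivity) (by omega)
        interval_cases k <;> interval_cases m <;> omega
      · rintro (h0 | h31)
        · refine ⟨⟨0, ⟨?_, ?_⟩, rfl⟩, ⟨0, ⟨?_, ?_⟩, rfl⟩⟩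
          · simp [h0]
          · simp [h0]
          · simp [h0]
          · simp [h0]
        · have h1 : (n : ℝ) ≤ 2 * (i:ℕ) := by
            have : n ≤ 2 * (i:ℕ) := by omega
            exact_mod_cast this
          have h2 : (2 * (i:ℕ) : ℝ) ≤ 2 * n := by
            have : 2 * (i:ℕ) ≤ 2 * n := by omega
            exact_mod_cast this
          have h3 : (3 : ℝ) * n ≤ 4 * (i:ℕ) := by
            have : 3 * n ≤ 4 * (i:ℕ) := by omega
            exact_mod_cast this
          have h4 : (4 * (i:ℕ) : ℝ) ≤ 4 * n := by
            have : 4 * (i:ℕ) ≤ 4 * n := by omega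
            exact_mod_cast this
          refine ⟨⟨2 * (n:ℝ), ⟨by linarith, by linarith⟩, ?_⟩,
                  ⟨4 * (n:ℝ), ⟨by linarith, by linarith⟩, ?_⟩⟩
          · exact (addCircle_coe_eq_coe _ _ _).mpr ⟨1, by rw [hp]; ring⟩
          · exact (addCircle_coe_eq_coe _ _ _).mpr ⟨2, by rw [hp]; ring⟩
    have hfilter : (Finset.univ.filter fun i : Fin n =>
        ((((0:ℝ) : AddCircle ((2 * n : ℕ) : ℝ)), ((0:ℝ) : AddCircle ((2 * n : ℕ) : ℝ))) ∈ A i))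
        = Finset.univ.filter fun i : Fin n => ((i : ℕ) = 0 ∨ 3 * ℓ + 1 ≤ (i : ℕ)) := by
      apply Finset.filter_congr
      intro i _
      exact hmem i
    rw [hfilter]
    apply Finset.card_eq_of_bijective
      (fun m hm => if m = 0 then (⟨0, by omega⟩ : Fin n) else ⟨3 * ℓ + m, by omega⟩)
    · intro a ha
      rw [Finset.mem_filter] at ha
      rcases ha.2 with h0 | h31
      · exact ⟨0, by omega, by simp; exact Fin.ext h0.symm⟩
      · refine ⟨(a : ℕ) - 3 * ℓ, by have := a.isLt; omega, ?_⟩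
        have hne : (a : ℕ) - 3 * ℓ ≠ 0 := by omega
        simp only [hne, if_false]
        apply Fin.ext
        simp
        omega
    · intro m hm
      rw [Finset.mem_filter]
      refine ⟨Finset.mem_univ _, ?_⟩
      by_cases h : m = 0 <;> simp [h]
      omega
    · intro m m' hm hm' heq
      by_cases h : m = 0 <;> by_cases h' : m' = 0 <;>
        simp only [h, h', if_true, if_false, Fin.mk.injEq] at heq <;> omega
  · -- upper bound
    have hnZ : (n : ℤ) = 4 * ℓ + 1 := by exact_mod_cast hn
    have hnR : (n : ℝ) = 4 * ℓ + 1 := by rw [hn]; push_cast; ring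
    have h2n : (0:ℝ) < 2 * n := by linarith
    intro z
    obtain ⟨u, hu⟩ : ∃ u : ℝ, (u : AddCircle ((2 * n : ℕ) : ℝ)) = z.1 := by
      induction z.1 using QuotientAddGroup.induction_on with
      | H u => exact ⟨u, rfl⟩
    obtain ⟨v, hv⟩ : ∃ v : ℝ, (v : AddCircle ((2 * n : ℕ) : ℝ)) = z.2 := by
      induction z.2 using QuotientAddGroup.induction_on with
      | H v => exact ⟨v, rfl⟩
    set S := Finset.univ.filter (fun i : Fin n => z ∈ A i) with hS
    have hex : ∀ i : Fin n, ∃ km : ℤ × ℤ, i ∈ S →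
        ((2 * (i:ℕ) : ℝ) ≤ u + 2 * n * km.1 ∧ u + 2 * n * km.1 ≤ 2 * (i:ℕ) + n) ∧
        ((4 * (i:ℕ) : ℝ) ≤ v + 2 * n * km.2 ∧ v + 2 * n * km.2 ≤ 4 * (i:ℕ) + n) := by
      intro i
      by_cases hi : i ∈ S
      · rw [hS, Finset.mem_filter] at hi
        have hzi := hi.2
        rw [hA i] at hzi
        obtain ⟨⟨tx, ⟨hx1, hx2⟩, hxe⟩, ⟨ty, ⟨hy1, hy2⟩, hye⟩⟩ := hzi
        obtain ⟨k, hk⟩ := (addCircle_coe_eq_coe _ tx u).mp (by rw [hu]; exact hxe)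
        obtain ⟨m, hm⟩ := (addCircle_coe_eq_coe _ ty v).mp (by rw [hv]; exact hye)
        rw [hp] at hk hm
        have hk' : tx = u + 2 * (n:ℝ) * k := by linear_combination hk
        have hm' : ty = v + 2 * (n:ℝ) * m := by linear_combination hm
        have hres : ((2 * (i:ℕ) : ℝ) ≤ u + 2 * n * k ∧ u + 2 * n * k ≤ 2 * (i:ℕ) + n) ∧
            ((4 * (i:ℕ) : ℝ) ≤ v + 2 * n * m ∧ v + 2 * n * m ≤ 4 * (i:ℕ) + n) :=
          ⟨⟨by linarith, by linarith⟩, ⟨by linarith, by linarith⟩⟩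
        exact ⟨(k, m), fun _ => hres⟩
      · exact ⟨(0, 0), fun h' => absurd h' hi⟩
    choose km hkm using hex
    set E0 : ℤ := ⌈(v - n - 2 * u) / (2 * (n:ℝ))⌉ with hE0
    have hinj : ∀ i ∈ S, ∀ j ∈ S,
        (4 * ((i:ℕ):ℤ) - 2 * (n:ℤ) * (km i).2) = (4 * ((j:ℕ):ℤ) - 2 * (n:ℤ) * (km j).2) →
        i = j := by
      intro i hi j hj heq
      set d : ℤ := (km j).2 - (km i).2 with hdd
      have hd2 : 2 * ((n:ℤ) * d) = 4 * (((j:ℕ):ℤ) - ((i:ℕ):ℤ)) := by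
        rw [hdd]; linear_combination heq
      have hiub : ((i:ℕ):ℤ) ≤ (n:ℤ) - 1 := by have := i.isLt; omega
      have hjub : ((j:ℕ):ℤ) ≤ (n:ℤ) - 1 := by have := j.isLt; omega
      have hilb : (0:ℤ) ≤ ((i:ℕ):ℤ) := by positivity
      have hjlb : (0:ℤ) ≤ ((j:ℕ):ℤ) := by positivity
      have hnZpos : (0:ℤ) < n := by omega
      have hd1 : d ≤ 1 := by by_contra h; push_neg at h; nlinarith
      have hdm1 : -1 ≤ d := by by_contra h; push_neg at h; nlinarith
      have hIJ : (i:ℕ) = (j:ℕ) := by interval_cases d <;> omega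
      exact Fin.ext hIJ
    have hlo : ∀ i ∈ S, (v - (n:ℝ)) ≤ ((4 * ((i:ℕ):ℤ) - 2 * (n:ℤ) * (km i).2 : ℤ) : ℝ) ∧
        ((4 * ((i:ℕ):ℤ) - 2 * (n:ℤ) * (km i).2 : ℤ) : ℝ) ≤ (v - (n:ℝ)) + (4 * (ℓ:ℝ) + 1) := by
      intro i hi
      obtain ⟨⟨hx1, hx2⟩, ⟨hy1, hy2⟩⟩ := hkm i hi
      constructor <;> push_cast <;> [linarith; (rw [show (v - (n:ℝ)) + (4 * (ℓ:ℝ) + 1) = v - n + n by rw [hnR]]; linarith)]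
    have hpar : ∀ i ∈ S,
        ((4:ℤ) ∣ (4 * ((i:ℕ):ℤ) - 2 * (n:ℤ) * (km i).2) - 2 * E0 ∧
          ((4 * ((i:ℕ):ℤ) - 2 * (n:ℤ) * (km i).2 : ℤ) : ℝ) ≤ 2 * u + 2 * (n:ℝ) * (E0:ℤ)) ∨
        ((4:ℤ) ∣ (4 * ((i:ℕ):ℤ) - 2 * (n:ℤ) * (km i).2) - 2 * E0 - 2 ∧
          2 * u + 2 * (n:ℝ) * (E0:ℤ) ≤ ((4 * ((i:ℕ):ℤ) - 2 * (n:ℤ) * (km i).2 : ℤ) : ℝ)) := by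
      intro i hi
      obtain ⟨⟨hx1, hx2⟩, ⟨hy1, hy2⟩⟩ := hkm i hi
      set k : ℤ := (km i).1 with hkk
      set m : ℤ := (km i).2 with hmm
      have helow : v - n - 2 * u ≤ 2 * (n:ℝ) * (2 * (k:ℤ) - m) := by linarith
      have hehigh : (2 * (n:ℝ) * ((2 * (k:ℤ) - m : ℤ):ℝ)) ≤ v - 2 * u + 2 * n := by
        push_cast; linarith
      have hElo : E0 ≤ 2 * k - m := by
        rw [hE0]
        apply Int.ceil_le.mpr
        rw [div_le_iff₀ h2n]
        push_cast at helow ⊢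
        linarith
      have hEhi : 2 * k - m ≤ E0 + 1 := by
        have h1 : (v - n - 2 * u) / (2 * (n:ℝ)) ≤ (E0:ℝ) := Int.le_ceil _
        rw [div_le_iff₀ h2n] at h1
        have h4 : ((2 * k - m : ℤ):ℝ) < (E0:ℝ) + 2 := by
          by_contra hcon
          push_neg at hcon
          nlinarith
        have h5 : (2 * k - m : ℤ) < E0 + 2 := by exact_mod_cast h4
        omega
      rcases (by omega : 2 * k - m = E0 ∨ 2 * k - m = E0 + 1) with he | he
      · left
        constructor
        · exact ⟨((i:ℕ):ℤ) - 2 * ℓ * m - k, by linear_combination (-2*(m:ℤ)) * hnZ + 2 * he⟩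
        · have heR : ((E0:ℤ):ℝ) = 2 * (k:ℝ) - (m:ℝ) := by exact_mod_cast he.symm
          push_cast
          rw [heR]
          linarith
      · right
        constructor
        · exact ⟨((i:ℕ):ℤ) - 2 * ℓ * m - k, by linear_combination (-2*(m:ℤ)) * hnZ + 2 * he⟩
        · have heR : ((E0:ℤ):ℝ) = 2 * (k:ℝ) - (m:ℝ) - 1 := by
            have : ((E0 + 1 : ℤ):ℝ) = ((2 * k - m : ℤ):ℝ) := by exact_mod_cast he.symm
            push_cast at this
            linarith
          push_cast
          rw [heR]
          linarith
    exact key_count S ℓ (fun i => 4 * ((i:ℕ):ℤ) - 2 * (n:ℤ) * (km i).2) (2 * E0)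
      (v - (n:ℝ)) (2 * u + 2 * (n:ℝ) * (E0:ℤ)) hinj hlo hpar
end

section
/- For every n ≡ 1 (mod 4) there exists a family of n subsets of the torus (ℝ/ℤ)², each a product of two closed arcs, such that every two sets intersect but no point of the torus is contained in more than (n-1)/4 + 1 of the sets. -/
open Classical

set_option linter.unusedTactic false
set_option linter.unreachableTactic false
set_option linter.unnecessarySeqFocus false

lemma lemB (m W' s0 : ℕ) (hW'lt : W' < 4*m+1)
    (hs0 : (s0 = (2*m - W')/2 + 1 ∧ W' ≤ 2*m) ∨ (s0 = 0 ∧ 2*m < W')) :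
    (Finset.filter (fun t => (W' + 2*t) % (4*m+1) ≤ 2*m) (Finset.range (2*m+1))).card
      ≤ m + 1 := by
  have key : ∀ t, t ≤ 2*m → (W' + 2*t) % (4*m+1) = W' + 2*t ∨
      (W' + 2*t) % (4*m+1) + (4*m+1) = W' + 2*t := by
    intro t ht
    rcases Nat.lt_or_ge (W' + 2*t) (4*m+1) with h | h
    · left; rw [Nat.mod_eq_of_lt h]
    · right
      have h2 : W' + 2*t - (4*m+1) < 4*m+1 := by omega
      rw [Nat.mod_eq_sub_mod h, Nat.mod_eq_of_lt h2]
      omega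
  have H := Finset.card_le_card_of_injOn
    (s := Finset.filter (fun t => (W' + 2*t) % (4*m+1) ≤ 2*m) (Finset.range (2*m+1)))
    (t := Finset.range (m+1))
    (fun t => if W' + 2*t ≤ 2*m then t else t + s0 - (4*m + 2 - W') / 2) ?_ ?_
  · simpa using H
  · intro t ht
    simp only [Finset.mem_coe, Finset.mem_filter, Finset.mem_range] at ht ⊢
    obtain ⟨ht1, ht2⟩ := ht
    rcases hs0 with ⟨hs0, hc0⟩ | ⟨hs0, hc0⟩ <;>
      rcases key t (by omega) with h | h <;> split_ifs with hc <;> omega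
  · intro t1 h1 t2 h2 heq
    simp only [Finset.mem_coe, Finset.mem_filter, Finset.mem_range] at h1 h2
    rcases hs0 with ⟨hs0, hc0⟩ | ⟨hs0, hc0⟩ <;>
      rcases key t1 (by omega) with k1 | k1 <;>
      rcases key t2 (by omega) with k2 | k2 <;>
      simp only at heq <;> split_ifs at heq <;> omega

lemma lemA_s17 (m W : ℕ) :
    (Finset.filter (fun t => (W + 2*t) % (4*m+1) ≤ 2*m) (Finset.range (2*m+1))).card
      ≤ m + 1 := by
  have hmod : ∀ t : ℕ, (W + 2*t) % (4*m+1) = (W % (4*m+1) + 2*t) % (4*m+1) := by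
    intro t; conv_lhs => rw [← Nat.mod_add_mod]
  simp only [hmod]
  rcases le_or_gt (W % (4*m+1)) (2*m) with h | h
  · exact lemB m _ _ (Nat.mod_lt _ (by omega)) (Or.inl ⟨rfl, h⟩)
  · exact lemB m _ 0 (Nat.mod_lt _ (by omega)) (Or.inr ⟨rfl, h⟩)

lemma circ_eq_iff (t x : ℝ) : ((t : AddCircle (1:ℝ)) = (x : AddCircle (1:ℝ))) ↔ ∃ k : ℤ, t = x + k := by
  rw [← sub_eq_zero, ← QuotientAddGroup.mk_sub, AddCircle.coe_eq_zero_iff]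
  constructor
  · rintro ⟨k, hk⟩
    exact ⟨k, by simp [zsmul_eq_mul] at hk; linarith⟩
  · rintro ⟨k, hk⟩
    exact ⟨k, by simp [zsmul_eq_mul]; linarith⟩

lemma circ_surj (z : AddCircle (1:ℝ)) : ∃ x : ℝ, (x : AddCircle (1:ℝ)) = z :=
  Quotient.exists_rep z

lemma mem_arc_of (n m : ℕ) (hn : 0 < n) (a c r : ℤ) (hr0 : 0 ≤ r) (hr1 : r ≤ 2*m)
    (hd : (n:ℤ) ∣ (a + r - c)) :
    (((c:ℝ)/n : ℝ) : AddCircle (1:ℝ)) ∈ Arc ((a:ℝ)/n) (((a:ℝ)+2*m)/n) := by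
  have hnR : (0:ℝ) < n := by exact_mod_cast hn
  refine ⟨((a:ℝ)+r)/n, ⟨?_, ?_⟩, ?_⟩
  · have hr : (0:ℝ) ≤ r := by exact_mod_cast hr0
    gcongr <;> linarith
  · have hr : (r:ℝ) ≤ 2*m := by exact_mod_cast hr1
    gcongr <;> linarith
  · rw [circ_eq_iff]
    obtain ⟨k, hk⟩ := hd
    refine ⟨k, ?_⟩
    have : (a:ℝ) + r - c = (n:ℝ) * k := by exact_mod_cast congrArg (fun z : ℤ => (z:ℝ)) hk
    field_simp
    linarith

lemma arcs_inter (n m : ℕ) (hnm : n = 4*m+1) (a b : ℤ) :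
    (Arc ((a:ℝ)/n) (((a:ℝ)+2*m)/n) ∩ Arc ((b:ℝ)/n) (((b:ℝ)+2*m)/n)).Nonempty := by
  have hn : 0 < n := by omega
  have hnZ : (0:ℤ) < n := by exact_mod_cast hn
  set d : ℤ := (b - a) % n with hd
  have hd0 : 0 ≤ d := Int.emod_nonneg _ (by omega)
  have hdlt : d < n := Int.emod_lt_of_pos _ hnZ
  have hdvd : (n:ℤ) ∣ (b - a - d) := Int.dvd_self_sub_of_emod_eq rfl
  rcases le_or_gt d (2*m) with h | h
  · refine ⟨((b:ℝ)/n : ℝ), ?_, ?_⟩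
    · exact mem_arc_of n m hn a b d hd0 h (by
        have : a + d - b = -(b - a - d) := by ring
        rw [this]; exact dvd_neg.mpr hdvd)
    · exact mem_arc_of n m hn b b 0 le_rfl (by positivity) (by simp)
  · refine ⟨((a:ℝ)/n : ℝ), ?_, ?_⟩
    · exact mem_arc_of n m hn a a 0 le_rfl (by positivity) (by simp)
    · refine mem_arc_of n m hn b a (n - d) (by omega) (by omega) ?_
      have : b + (n - d) - a = (b - a - d) + n := by ring
      rw [this]
      exact dvd_add hdvd dvd_rfl

lemma mem_arc_imp (n m : ℕ) (hnm : n = 4*m+1) (a : ℤ) (x : ℝ)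
    (h : ((x : ℝ) : AddCircle (1:ℝ)) ∈ Arc ((a:ℝ)/n) (((a:ℝ)+2*m)/n)) :
    (⌊(n:ℝ)*x⌋ - a) % (n:ℤ) ≤ 2*m := by
  have hn : 0 < n := by omega
  have hnR : (0:ℝ) < n := by exact_mod_cast hn
  obtain ⟨t, ⟨ht1, ht2⟩, ht3⟩ := h
  rw [circ_eq_iff] at ht3
  obtain ⟨k, hk⟩ := ht3
  -- a ≤ n*t ≤ a + 2m, n*t = n*x + n*k
  have h1 : (a:ℝ) ≤ (n:ℝ)*x + (n:ℝ)*k := by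
    have h := (div_le_iff₀ hnR).mp ht1
    rw [hk] at h
    have e : (x + (k:ℝ))*n = (n:ℝ)*x + (n:ℝ)*k := by ring
    linarith [e ▸ h]
  have h2 : (n:ℝ)*x + (n:ℝ)*k ≤ (a:ℝ) + 2*m := by
    have h := (le_div_iff₀ hnR).mp ht2
    rw [hk] at h
    have e : (x + (k:ℝ))*n = (n:ℝ)*x + (n:ℝ)*k := by ring
    linarith [e ▸ h]
  have hfl : (a:ℤ) ≤ ⌊(n:ℝ)*x⌋ + n*k ∧ ⌊(n:ℝ)*x⌋ + (n:ℤ)*k ≤ a + 2*m := by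
    constructor
    · have : (a:ℤ) ≤ ⌊(n:ℝ)*x + (n:ℝ)*k⌋ := by
        rw [show ((a:ℤ):ℤ) = a from rfl]
        exact Int.le_floor.mpr (by push_cast; linarith)
      rwa [show (n:ℝ)*k = ((n*k : ℤ):ℝ) by push_cast; ring, Int.floor_add_intCast] at this
    · have : ((⌊(n:ℝ)*x⌋ + (n:ℤ)*k : ℤ):ℝ) ≤ (a:ℝ) + 2*m := by
        push_cast
        have := Int.floor_le ((n:ℝ)*x)
        linarith
      exact_mod_cast this
  obtain ⟨hf1, hf2⟩ := hfl
  have : (⌊(n:ℝ)*x⌋ - a) % (n:ℤ) = (⌊(n:ℝ)*x⌋ - a + n*k) % n := by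
    rw [Int.add_mul_emod_self_left]
  rw [this, Int.emod_eq_of_lt (by omega) (by push_cast; omega)]
  omega


/-- Sharpness for `(2,2)`-agreeable toroidal societies: for every `n ≡ 1 (mod 4)` there
are `n` products of arcs on the torus, pairwise intersecting, such that no point of the
torus lies in more than `(n-1)/4 + 1` of them. -/
theorem toroidal_sharpness (n : ℕ) (hn : n % 4 = 1) :
    ∃ C : Fin n → Set (AddCircle (1 : ℝ) × AddCircle (1 : ℝ)),
      (∀ i : Fin n, ∃ a b c d : ℝ, C i = Arc a b ×ˢ Arc c d) ∧
      (∀ i j : Fin n, (C i ∩ C j).Nonempty) ∧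
      (∀ z, (Finset.univ.filter fun i : Fin n => z ∈ C i).card ≤ (n - 1) / 4 + 1) := by
  set m := n / 4 with hm
  have hnm : n = 4*m+1 := by omega
  have hn0 : 0 < n := by omega
  have hnZ : (0:ℤ) < (n:ℤ) := by exact_mod_cast hn0
  refine ⟨fun i => Arc ((((i:ℤ)):ℝ)/n) (((((i:ℤ)):ℝ)+2*m)/n) ×ˢ
      Arc ((((2*(i:ℤ)):ℤ):ℝ)/n) ((((((2*(i:ℤ)):ℤ)):ℝ)+2*m)/n), ?_, ?_, ?_⟩
  · intro i
    exact ⟨_, _, _, _, rfl⟩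
  · intro i j
    obtain ⟨p, hp1, hp2⟩ := arcs_inter n m hnm (i:ℤ) (j:ℤ)
    obtain ⟨q, hq1, hq2⟩ := arcs_inter n m hnm (2*(i:ℤ)) (2*(j:ℤ))
    exact ⟨(p, q), Set.mem_prod.mpr ⟨hp1, hq1⟩, Set.mem_prod.mpr ⟨hp2, hq2⟩⟩
  · intro z
    obtain ⟨x, hx⟩ := circ_surj z.1
    obtain ⟨y, hy⟩ := circ_surj z.2
    set u : ℤ := ⌊(n:ℝ)*x⌋ with hu
    set v : ℤ := ⌊(n:ℝ)*y⌋ with hv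
    set W : ℕ := ((v - 2*u) % (n:ℤ)).toNat with hW
    have hfin : (n - 1)/4 + 1 = m + 1 := by omega
    rw [hfin]
    refine le_trans (Finset.card_le_card_of_injOn
        (t := Finset.filter (fun t => (W + 2*t) % (4*m+1) ≤ 2*m) (Finset.range (2*m+1)))
        (fun i : Fin n => ((u - (i:ℤ)) % (n:ℤ)).toNat) ?_ ?_) (lemA_s17 m W)
    · intro i hi
      simp only [Finset.mem_coe, Finset.mem_filter, Finset.mem_univ, true_and, Set.mem_prod] at hi
      obtain ⟨hi1, hi2⟩ := hi
      rw [← hx] at hi1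
      rw [← hy] at hi2
      have ha := mem_arc_imp n m hnm (i:ℤ) x hi1
      have hb := mem_arc_imp n m hnm (2*(i:ℤ)) y hi2
      rw [← hu] at ha
      rw [← hv] at hb
      have ha0 : 0 ≤ (u - (i:ℤ)) % (n:ℤ) := Int.emod_nonneg _ (by omega)
      have hb0 : 0 ≤ (v - 2*(i:ℤ)) % (n:ℤ) := Int.emod_nonneg _ (by omega)
      simp only [Finset.mem_coe, Finset.mem_filter, Finset.mem_range]
      constructor
      · omega
      · -- (W + 2*t) % (4m+1) ≤ 2m
        rw [← hnm]
        have e1 : ((W:ℤ)) = (v - 2*u) % (n:ℤ) :=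
          Int.toNat_of_nonneg (Int.emod_nonneg _ (by omega))
        have e2 : ((((u - (i:ℤ)) % (n:ℤ)).toNat : ℤ)) = (u - (i:ℤ)) % (n:ℤ) :=
          Int.toNat_of_nonneg ha0
        have e3 : (((W + 2*((u - (i:ℤ)) % (n:ℤ)).toNat) % n : ℕ) : ℤ)
            = (v - 2*(i:ℤ)) % (n:ℤ) := by
          push_cast [e1, e2]
          have step : ((v - 2*u) % (n:ℤ) + 2*((u - (i:ℤ)) % (n:ℤ))) % (n:ℤ)
              = ((v - 2*u) + 2*(u - (i:ℤ))) % (n:ℤ) := by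
            rw [Int.add_emod ((v-2*u) % (n:ℤ)), Int.emod_emod_of_dvd _ dvd_rfl,
              Int.mul_emod 2, Int.emod_emod_of_dvd _ dvd_rfl, ← Int.mul_emod,
              ← Int.add_emod]
          rw [step]
          congr 1
          ring
        omega
    · intro i hi j hj heq
      simp only at heq
      have ha0 : 0 ≤ (u - (i:ℤ)) % (n:ℤ) := Int.emod_nonneg _ (by omega)
      have hb0 : 0 ≤ (u - (j:ℤ)) % (n:ℤ) := Int.emod_nonneg _ (by omega)
      have heq' : (u - (i:ℤ)) % (n:ℤ) = (u - (j:ℤ)) % (n:ℤ) := by omega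
      have hdvd : (n:ℤ) ∣ ((u - (j:ℤ)) - (u - (i:ℤ))) := Int.ModEq.dvd heq'
      obtain ⟨k, hk⟩ := hdvd
      have hik : ((i:ℤ) - (j:ℤ)) = (n:ℤ)*k := by linarith [hk]
      have hi_lt : ((i:ℤ)) < (n:ℤ) := by exact_mod_cast i.isLt
      have hj_lt : ((j:ℤ)) < (n:ℤ) := by exact_mod_cast j.isLt
      have hi_nn : (0:ℤ) ≤ (i:ℤ) := by positivity
      have hj_nn : (0:ℤ) ≤ (j:ℤ) := by positivity
      have hk0 : k = 0 := by
        rcases lt_trichotomy k 0 with h | h | h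
        · have h2 : (n:ℤ)*k ≤ -(n:ℤ) := by
            have := mul_le_mul_of_nonneg_left (show k ≤ -1 by omega) (le_of_lt hnZ)
            linarith
          exfalso; linarith
        · exact h
        · have h2 : (n:ℤ) ≤ (n:ℤ)*k := by
            have := mul_le_mul_of_nonneg_left (show (1:ℤ) ≤ k by omega) (le_of_lt hnZ)
            linarith
          exfalso; linarith
      have : ((i:ℤ)) = ((j:ℤ)) := by rw [hk0, mul_zero] at hik; linarith
      exact Fin.ext (by exact_mod_cast this)
end

section
/- There exists a family of 20 subsets of the cylinder ℝ × (ℝ/ℤ), each a product of a closed interval with a closed arc, such that among any 5 of the sets some 2 intersect, but no point of the cylinder is contained in more than 3 of the sets. -/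
open Classical

lemma coe_eq_coe' (t x : ℝ) :
    (t : AddCircle (1:ℝ)) = (x : AddCircle (1:ℝ)) ↔ ∃ n : ℤ, t = x + n := by
  rw [show ((t : AddCircle (1:ℝ)) = (x : AddCircle (1:ℝ))) ↔ t - x ∈ AddSubgroup.zmultiples (1:ℝ)
      from QuotientAddGroup.eq_iff_sub_mem]
  constructor
  · rintro h
    obtain ⟨n, hn⟩ := AddSubgroup.mem_zmultiples_iff.mp h
    refine ⟨n, ?_⟩
    rw [zsmul_eq_mul, mul_one] at hn
    linarith
  · rintro ⟨n, rfl⟩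
    exact AddSubgroup.mem_zmultiples_iff.mpr ⟨n, by simp⟩

lemma mem_arc_iff (a b x : ℝ) :
    (x : AddCircle (1:ℝ)) ∈ Arc a b ↔ ∃ n : ℤ, a ≤ x + n ∧ x + n ≤ b := by
  constructor
  · rintro ⟨t, ⟨h1, h2⟩, ht⟩
    obtain ⟨n, rfl⟩ := (coe_eq_coe' t x).mp ht
    exact ⟨n, h1, h2⟩
  · rintro ⟨n, h1, h2⟩
    exact ⟨x + n, ⟨h1, h2⟩, (coe_eq_coe' (x + n) x).mpr ⟨n, rfl⟩⟩

lemma no_int (n m : ℤ) (h1 : (m:ℝ) < n) (h2 : (n:ℝ) < m + 1) : False := by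
  have a : m < n := by exact_mod_cast h1
  have b : n < m + 1 := by exact_mod_cast h2
  omega

lemma arcs_meet_s19 (k k' : ℕ) (hk : k < k') (hk' : k' < 5) :
    (Arc ((k:ℝ)/5) ((k:ℝ)/5+2/5) ∩ Arc ((k':ℝ)/5) ((k':ℝ)/5+2/5)).Nonempty := by
  have hkk : (k:ℝ) < k' := by exact_mod_cast hk
  by_cases h : k' ≤ k + 2
  · have h' : (k':ℝ) ≤ k + 2 := by exact_mod_cast h
    refine ⟨((k':ℝ)/5 : ℝ), ?_, ?_⟩
    · exact (mem_arc_iff _ _ _).mpr ⟨0, by push_cast; constructor <;> linarith⟩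
    · exact (mem_arc_iff _ _ _).mpr ⟨0, by push_cast; constructor <;> linarith⟩
  · push_neg at h
    have h' : (k:ℝ) + 3 ≤ k' := by exact_mod_cast h
    have h'' : (k':ℝ) < 5 := by exact_mod_cast hk'
    refine ⟨((k:ℝ)/5 : ℝ), ?_, ?_⟩
    · exact (mem_arc_iff _ _ _).mpr ⟨0, by push_cast; constructor <;> linarith⟩
    · exact (mem_arc_iff _ _ _).mpr ⟨1, by push_cast; constructor <;> linarith⟩

lemma depth_cases (x : ℝ) (hx0 : 0 ≤ x) (hx1 : x < 1) :
    ∃ a b : ℕ, a < 5 ∧ b < 5 ∧ a ≠ b ∧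
      (x : AddCircle (1:ℝ)) ∉ Arc ((a:ℝ)/5) ((a:ℝ)/5+2/5) ∧
      (x : AddCircle (1:ℝ)) ∉ Arc ((b:ℝ)/5) ((b:ℝ)/5+2/5) := by
  have key : ∀ k : ℕ, (∀ n : ℤ, ¬((k:ℝ)/5 ≤ x + n ∧ x + n ≤ (k:ℝ)/5 + 2/5)) →
      (x : AddCircle (1:ℝ)) ∉ Arc ((k:ℝ)/5) ((k:ℝ)/5+2/5) := by
    intro k h hmem
    obtain ⟨n, h1, h2⟩ := (mem_arc_iff _ _ _).mp hmem
    exact h n ⟨h1, h2⟩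
  rcases eq_or_lt_of_le hx0 with h0 | h0
  · refine ⟨1, 2, by norm_num, by norm_num, by norm_num, key 1 ?_, key 2 ?_⟩ <;>
    · rintro n ⟨h1, h2⟩
      push_cast at h1 h2
      exact no_int n 0 (by push_cast; linarith) (by push_cast; linarith)
  · rcases le_or_gt x (1/5) with h | h
    · refine ⟨2, 3, by norm_num, by norm_num, by norm_num, key 2 ?_, key 3 ?_⟩ <;>
      · rintro n ⟨h1, h2⟩
        push_cast at h1 h2
        exact no_int n 0 (by push_cast; linarith) (by push_cast; linarith)
    · rcases lt_or_ge x (3/5) with h' | h'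
      · refine ⟨3, 4, by norm_num, by norm_num, by norm_num, key 3 ?_, key 4 ?_⟩ <;>
        · rintro n ⟨h1, h2⟩
          push_cast at h1 h2
          exact no_int n 0 (by push_cast; linarith) (by push_cast; linarith)
      · rcases lt_or_ge x (4/5) with h'' | h''
        · refine ⟨0, 4, by norm_num, by norm_num, by norm_num, key 0 ?_, key 4 ?_⟩
          · rintro n ⟨h1, h2⟩
            push_cast at h1 h2
            exact no_int n (-1) (by push_cast; linarith) (by push_cast; linarith)
          · rintro n ⟨h1, h2⟩
            push_cast at h1 h2
            exact no_int n 0 (by push_cast; linarith) (by push_cast; linarith)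
        · refine ⟨0, 1, by norm_num, by norm_num, by norm_num, key 0 ?_, key 1 ?_⟩ <;>
          · rintro n ⟨h1, h2⟩
            push_cast at h1 h2
            exact no_int n (-1) (by push_cast; linarith) (by push_cast; linarith)

def Csets (i : Fin 20) : Set (ℝ × AddCircle (1:ℝ)) :=
  Set.Icc ((i.val / 5 : ℕ) : ℝ) ((i.val / 5 : ℕ) : ℝ) ×ˢ
    Arc (((i.val % 5 : ℕ) : ℝ)/5) (((i.val % 5 : ℕ) : ℝ)/5 + 2/5)

lemma mem_Csets (i : Fin 20) (z : ℝ × AddCircle (1:ℝ)) :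
    z ∈ Csets i ↔ z.1 = ((i.val / 5 : ℕ) : ℝ) ∧
      z.2 ∈ Arc (((i.val % 5 : ℕ) : ℝ)/5) (((i.val % 5 : ℕ) : ℝ)/5 + 2/5) := by
  rw [Csets, Set.mem_prod, Set.mem_Icc]
  constructor
  · rintro ⟨⟨u1, u2⟩, h2⟩
    exact ⟨le_antisymm u2 u1, h2⟩
  · rintro ⟨h1, h2⟩
    exact ⟨⟨h1.ge, h1.le⟩, h2⟩

/-- A stratified cylindrical society: 20 approval sets on the cylinder (each a product of
a closed interval with a closed arc) forming a (2,5)-agreeable society with agreement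
number at most 3. -/
theorem stratified_cylindrical_example :
    ∃ C : Fin 20 → Set (ℝ × AddCircle (1 : ℝ)),
      (∀ i : Fin 20, ∃ a b c d : ℝ, C i = Set.Icc a b ×ˢ Arc c d) ∧
      (∀ T : Finset (Fin 20), T.card = 5 →
        ∃ i ∈ T, ∃ j ∈ T, i ≠ j ∧ (C i ∩ C j).Nonempty) ∧
      (∀ z : ℝ × AddCircle (1 : ℝ),
        (Finset.univ.filter fun i : Fin 20 => z ∈ C i).card ≤ 3) := by
  refine ⟨Csets, fun i => ⟨_, _, _, _, rfl⟩, ?_, ?_⟩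
  · -- (2,5)-agreeable
    intro T hT
    obtain ⟨i, hi, j, hj, hij, hf⟩ :=
      Finset.exists_ne_map_eq_of_card_lt_of_maps_to
        (t := Finset.range 4) (f := fun i : Fin 20 => i.val / 5)
        (by rw [hT]; simp) (fun a _ => Finset.mem_range.mpr (show a.val / 5 < 4 by have := a.isLt; omega))
    refine ⟨i, hi, j, hj, hij, ?_⟩
    have hne : i.val % 5 ≠ j.val % 5 := by
      intro h; exact hij (Fin.ext (by omega))
    have meet : ∀ k k' : ℕ, k < 5 → k' < 5 → k ≠ k' →
        (Arc ((k:ℝ)/5) ((k:ℝ)/5+2/5) ∩ Arc ((k':ℝ)/5) ((k':ℝ)/5+2/5)).Nonempty := by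
      intro k k' hk hk' hkk
      rcases lt_or_gt_of_ne hkk with hlt | hgt
      · exact arcs_meet_s19 k k' hlt hk'
      · obtain ⟨w, w1, w2⟩ := arcs_meet_s19 k' k hgt hk
        exact ⟨w, w2, w1⟩
    obtain ⟨w, w1, w2⟩ := meet (i.val % 5) (j.val % 5) (by omega) (by omega) hne
    refine ⟨(((i.val / 5 : ℕ) : ℝ), w), ?_, ?_⟩
    · exact (mem_Csets i _).mpr ⟨rfl, w1⟩
    · refine (mem_Csets j _).mpr ⟨?_, w2⟩
      have h5 : i.val / 5 = j.val / 5 := hf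
      show ((i.val / 5 : ℕ) : ℝ) = ((j.val / 5 : ℕ) : ℝ)
      exact_mod_cast h5
  · -- agreement number ≤ 3
    rintro ⟨p, q⟩
    set S := Finset.univ.filter fun i : Fin 20 => (p, q) ∈ Csets i with hS
    rcases Finset.eq_empty_or_nonempty S with hE | ⟨i0, hi0⟩
    · rw [hE]; simp
    · have hi0' := (Finset.mem_filter.mp hi0).2
      have hp : p = ((i0.val / 5 : ℕ) : ℝ) := ((mem_Csets i0 _).mp hi0').1
      obtain ⟨y, hy⟩ : ∃ y : ℝ, (y : AddCircle (1:ℝ)) = q := Quot.exists_rep q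
      set x := Int.fract y with hxdef
      have hxy : (x : AddCircle (1:ℝ)) = (y : AddCircle (1:ℝ)) := by
        refine (coe_eq_coe' x y).mpr ⟨-⌊y⌋, ?_⟩
        rw [hxdef, Int.fract]
        push_cast
        ring
      obtain ⟨a, b, ha5, hb5, hab, hQa, hQb⟩ :=
        depth_cases x (Int.fract_nonneg y) (Int.fract_lt_one y)
      have hmem : ∀ i ∈ S, i.val / 5 = i0.val / 5 ∧ i.val % 5 ≠ a ∧ i.val % 5 ≠ b := by
        intro i hi
        have hi' := (Finset.mem_filter.mp hi).2
        obtain ⟨hp', harc⟩ := (mem_Csets i _).mp hi'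
        have hdiv : i.val / 5 = i0.val / 5 := by
          have : ((i.val / 5 : ℕ) : ℝ) = ((i0.val / 5 : ℕ) : ℝ) := by rw [← hp', ← hp]
          exact_mod_cast this
        refine ⟨hdiv, ?_, ?_⟩
        · intro hcon
          apply hQa
          rw [hxy, hy]
          rw [hcon] at harc
          exact harc
        · intro hcon
          apply hQb
          rw [hxy, hy]
          rw [hcon] at harc
          exact harc
      have hcard : S.card ≤ (((Finset.range 5).erase a).erase b).card := by
        apply Finset.card_le_card_of_injOn (fun i => i.val % 5)
        · intro i hi
          obtain ⟨_, h1, h2⟩ := hmem i hi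
          exact Finset.mem_erase.mpr ⟨h2, Finset.mem_erase.mpr ⟨h1, Finset.mem_range.mpr (by show i.val % 5 < 5; omega)⟩⟩
        · intro i hi j hj hij
          obtain ⟨d1, _, _⟩ := hmem i hi
          obtain ⟨d2, _, _⟩ := hmem j hj
          exact Fin.ext (by simp only at hij; omega)
      have : (((Finset.range 5).erase a).erase b).card = 3 := by
        rw [Finset.card_erase_of_mem, Finset.card_erase_of_mem]
        · simp
        · exact Finset.mem_range.mpr ha5
        · exact Finset.mem_erase.mpr ⟨Ne.symm hab, Finset.mem_range.mpr hb5⟩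
      omega
end
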